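/- arXiv:2601.06985 — 3 statements merged into one kernel-verified Lean document; each statement's English description precedes it below -/
import Mathlib

section
/- Let k ≥ 1 and let F be a smooth function on the k-jet space ℝ^{k+2} such that X^{(k)}F = 0 identically for each of the three generators X ∈ {∂_x, ∂_{y₀}, x∂_{y₀} − y₀∂_x} of se(2). Then the function G := ((1+y₁²)/y₂)·D_xF, defined on the open subset {y₂ ≠ 0} of the (k+1)-jet space ℝ^{k+3}, satisfies X^{(k+1)}G = 0 there for each of the three generators. In other words, the invariant derivation 𝔇 := ((1+y₁²)/y₂)·D_x maps SE(2)-invariant jet functions to SE(2)-invariant jet functions. -/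
noncomputable section

/-- The (infinite) jet space of plane curves `y = y(x)`:
coordinates `(x, y₀, y₁, y₂, …)`; a function of the `k`-jet space is regarded
as a function on this space depending only on `x, y₀, …, y_k`. -/
abbrev Jet : Type := ℝ × (ℕ → ℝ)

/-- Partial derivative `∂F/∂x`. -/
def pdX (F : Jet → ℝ) (p : Jet) : ℝ := deriv (fun t => F (t, p.2)) p.1

/-- Partial derivative `∂F/∂y_j`. -/
def pdY (j : ℕ) (F : Jet → ℝ) (p : Jet) : ℝ :=
  deriv (fun t => F (p.1, Function.update p.2 j t)) (p.2 j)

/-- The total derivative `D_x F = ∂F/∂x + Σ_j y_{j+1} ∂F/∂y_j`.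
For a function of a finite-order jet space all but finitely many summands
vanish, so the `tsum` is a finite sum. -/
def Dx (F : Jet → ℝ) : Jet → ℝ :=
  fun p => pdX F p + ∑' j : ℕ, p.2 (j + 1) * pdY j F p
/-- The coefficients `η_j` of the prolongation of the vector field
`ξ∂_x + η∂_{y₀}` on the plane: `η₀ = η`, `η_{j+1} = D_x η_j − y_{j+1}·D_x ξ`. -/
def etaCoef (ξ η : ℝ × ℝ → ℝ) : ℕ → Jet → ℝ
  | 0 => fun p => η (p.1, p.2 0)
  | j + 1 => fun p =>
      Dx (etaCoef ξ η j) p - p.2 (j + 1) * Dx (fun q => ξ (q.1, q.2 0)) p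

/-- The action of the prolongation `X^{(∞)} = ξ∂_x + Σ_j η_j ∂_{y_j}` of
`X = ξ∂_x + η∂_{y₀}` on a jet function (for a function of the `k`-jet space
this is exactly the action of `X^{(k)}`). -/
def prolong (ξ η : ℝ × ℝ → ℝ) (F : Jet → ℝ) (p : Jet) : ℝ :=
  ξ (p.1, p.2 0) * pdX F p + ∑' j : ℕ, etaCoef ξ η j p * pdY j F p

/-- Interpret a function `G` on the `k`-jet space `ℝ^{k+2}` (coordinates
`(x, y₀, …, y_k)`) as a function on the jet space. -/
def ofFin (k : ℕ) (G : (Fin (k + 2) → ℝ) → ℝ) : Jet → ℝ :=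
  fun p => G (fun i => if (i : ℕ) = 0 then p.1 else p.2 ((i : ℕ) - 1))

namespace SE2Aux

open Function

variable {n : ℕ}

/-- the `i`-th basis vector -/
def sgl (i : Fin n) : Fin n → ℝ := Pi.single i (1:ℝ)

/-- Partial derivative of a function of `n` real variables. -/
def pG (i : Fin n) (H : (Fin n → ℝ) → ℝ) (x : Fin n → ℝ) : ℝ :=
  deriv (fun t => H (Function.update x i t)) (x i)

lemma top1 : ((⊤:ℕ∞) : WithTop ℕ∞) ≠ 0 := by simp

lemma update_eq_affine (x : Fin n → ℝ) (i : Fin n) (t : ℝ) :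
    Function.update x i t = x + (t - x i) • sgl i := by
  funext j
  by_cases h : j = i
  · subst h; simp [sgl]
  · simp [Function.update_of_ne h, sgl, Pi.single_eq_of_ne h]

lemma contDiff_curve {H : (Fin n → ℝ) → ℝ} (hH : ContDiff ℝ (⊤:ℕ∞) H)
    (x : Fin n → ℝ) (i : Fin n) :
    ContDiff ℝ (⊤:ℕ∞) (fun t : ℝ => H (Function.update x i t)) := by
  have h : (fun t : ℝ => H (Function.update x i t))
      = H ∘ (fun t : ℝ => x + (t - x i) • sgl i) := by
    funext t; simp [update_eq_affine]
  rw [h]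
  exact hH.comp (by fun_prop)

lemma diffAt_curve {H : (Fin n → ℝ) → ℝ} (hH : ContDiff ℝ (⊤:ℕ∞) H)
    (x : Fin n → ℝ) (i : Fin n) (s : ℝ) :
    DifferentiableAt ℝ (fun t : ℝ => H (Function.update x i t)) s :=
  ((contDiff_curve hH x i).differentiable top1) s

lemma hasDerivAt_curve {H : (Fin n → ℝ) → ℝ} {x : Fin n → ℝ}
    (hH : DifferentiableAt ℝ H x) (i : Fin n) :
    HasDerivAt (fun t : ℝ => H (Function.update x i t))
      (fderiv ℝ H x (sgl i)) (x i) := by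
  have hc : HasDerivAt (fun t : ℝ => x + (t - x i) • sgl i) (sgl i) (x i) := by
    have := (((hasDerivAt_id (x i)).sub_const (x i)).smul_const (sgl i)).const_add x
    simpa using this
  have hH' : HasFDerivAt H (fderiv ℝ H x) (x + (x i - x i) • sgl i) := by
    have hx : x + (x i - x i) • sgl i = x := by simp
    rw [hx]; exact hH.hasFDerivAt
  have := hH'.comp_hasDerivAt (x i) hc
  have h : (fun t : ℝ => H (Function.update x i t))
      = H ∘ (fun t : ℝ => x + (t - x i) • sgl i) := by
    funext t; simp [update_eq_affine]
  rw [h]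
  exact this

lemma pG_eq_fderiv {H : (Fin n → ℝ) → ℝ} {x : Fin n → ℝ}
    (hH : DifferentiableAt ℝ H x) (i : Fin n) :
    pG i H x = fderiv ℝ H x (sgl i) :=
  (hasDerivAt_curve hH i).deriv

lemma pG_contDiff {H : (Fin n → ℝ) → ℝ} (hH : ContDiff ℝ (⊤:ℕ∞) H) (i : Fin n) :
    ContDiff ℝ (⊤:ℕ∞) (pG i H) := by
  have h : pG i H = ⇑(ContinuousLinearMap.apply ℝ ℝ (sgl i)) ∘ fderiv ℝ H := by
    funext x
    exact pG_eq_fderiv ((hH.differentiable top1) x) i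
  rw [h]
  exact (ContinuousLinearMap.apply ℝ ℝ (sgl i)).contDiff.comp
    (hH.fderiv_right (m := (⊤:ℕ∞)) (by exact_mod_cast le_top))

lemma pG_comm {H : (Fin n → ℝ) → ℝ} (hH : ContDiff ℝ (⊤:ℕ∞) H) (a b : Fin n)
    (x : Fin n → ℝ) :
    pG a (pG b H) x = pG b (pG a H) x := by
  have hdiff : Differentiable ℝ H := hH.differentiable top1
  have hf' : ∀ y, HasFDerivAt H (fderiv ℝ H y) y := fun y => (hdiff y).hasFDerivAt
  have hfd : ContDiff ℝ (⊤:ℕ∞) (fderiv ℝ H) := hH.fderiv_right (m := (⊤:ℕ∞)) (by exact_mod_cast le_top)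
  have hf'' : HasFDerivAt (fderiv ℝ H) (fderiv ℝ (fderiv ℝ H) x) x :=
    ((hfd.differentiable top1) x).hasFDerivAt
  have symm := second_derivative_symmetric hf' hf''
  have hrep : ∀ c d : Fin n,
      pG c (pG d H) x = fderiv ℝ (fderiv ℝ H) x (sgl c) (sgl d) := by
    intro c d
    have h1 : pG d H = ⇑(ContinuousLinearMap.apply ℝ ℝ (sgl d)) ∘ fderiv ℝ H := by
      funext y; exact pG_eq_fderiv (hdiff y) d
    have h2 : HasFDerivAt (⇑(ContinuousLinearMap.apply ℝ ℝ (sgl d)) ∘ fderiv ℝ H)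
        ((ContinuousLinearMap.apply ℝ ℝ (sgl d)).comp (fderiv ℝ (fderiv ℝ H) x)) x :=
      (ContinuousLinearMap.apply ℝ ℝ (sgl d)).hasFDerivAt.comp x hf''
    rw [h1, pG_eq_fderiv h2.differentiableAt c, h2.fderiv]
    rfl
  rw [hrep a b, hrep b a]
  exact symm _ _


lemma pG_zero (i : Fin n) (x : Fin n → ℝ) : pG i (fun _ => (0:ℝ)) x = 0 := by
  simp [pG]

lemma pG_of_indep {H : (Fin n → ℝ) → ℝ} {c : Fin n}
    (h : ∀ x t, H (Function.update x c t) = H x) (x : Fin n → ℝ) :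
    pG c H x = 0 := by
  have : (fun t => H (Function.update x c t)) = fun _ => H x := by
    funext t; exact h x t
  simp [pG, this]

lemma pG_indep_other {H : (Fin n → ℝ) → ℝ} {c : Fin n}
    (h : ∀ x t, H (Function.update x c t) = H x) {i : Fin n} (hic : i ≠ c)
    (x : Fin n → ℝ) (t : ℝ) :
    pG i H (Function.update x c t) = pG i H x := by
  unfold pG
  rw [Function.update_of_ne hic]
  congr 1
  funext s
  rw [Function.update_comm hic.symm, h]

lemma const_of_pG_zero {H : (Fin n → ℝ) → ℝ} (hH : ContDiff ℝ (⊤:ℕ∞) H)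
    (c : Fin n) (h : ∀ x, pG c H x = 0) :
    ∀ x t, H (Function.update x c t) = H x := by
  intro x t
  have hdiff : Differentiable ℝ (fun t => H (Function.update x c t)) :=
    (contDiff_curve hH x c).differentiable top1
  have hzero : ∀ s, deriv (fun t => H (Function.update x c t)) s = 0 := by
    intro s
    have h1 := h (Function.update x c s)
    unfold pG at h1
    rw [Function.update_self] at h1
    have h2 : (fun u => H (Function.update (Function.update x c s) c u))
        = fun u => H (Function.update x c u) := by
      funext u; rw [Function.update_idem]
    rwa [h2] at h1
  have := is_const_of_deriv_eq_zero hdiff hzero t (x c)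
  rwa [Function.update_eq_self] at this

lemma pG_coord (i c : Fin n) (x : Fin n → ℝ) :
    pG i (fun y => y c) x = if c = i then 1 else 0 := by
  by_cases h : c = i
  · subst h
    have : (fun t => Function.update x c t c) = fun t => t := by
      funext t; rw [Function.update_self]
    simp [pG, this]
  · have : (fun t => Function.update x i t c) = fun _ => x c := by
      funext t; rw [Function.update_of_ne h]
    simp [pG, this, h]

lemma pG_mul {A B : (Fin n → ℝ) → ℝ} {x : Fin n → ℝ} {i : Fin n}
    (hA : DifferentiableAt ℝ (fun t => A (Function.update x i t)) (x i))
    (hB : DifferentiableAt ℝ (fun t => B (Function.update x i t)) (x i)) :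
    pG i (fun y => A y * B y) x = pG i A x * B x + A x * pG i B x := by
  unfold pG
  rw [deriv_fun_mul hA hB, Function.update_eq_self]

lemma pG_sum {ι : Type*} (s : Finset ι) (A : ι → (Fin n → ℝ) → ℝ)
    {x : Fin n → ℝ} {i : Fin n}
    (h : ∀ j ∈ s, DifferentiableAt ℝ (fun t => A j (Function.update x i t)) (x i)) :
    pG i (fun y => ∑ j ∈ s, A j y) x = ∑ j ∈ s, pG i (A j) x := by
  have : ∀ j ∈ s, HasDerivAt (fun t => A j (Function.update x i t))
      (pG i (A j) x) (x i) := by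
    intro j hj
    exact (h j hj).hasDerivAt
  exact (HasDerivAt.fun_sum this).deriv

/-- the canonical projection of the jet space to the `m`-jet space -/
def emb (m : ℕ) (p : Jet) : Fin (m + 2) → ℝ :=
  fun i => if (i : ℕ) = 0 then p.1 else p.2 ((i : ℕ) - 1)

lemma ofFin_eq (m : ℕ) (G : (Fin (m + 2) → ℝ) → ℝ) :
    ofFin m G = fun p => G (emb m p) := rfl

lemma emb_zero (m : ℕ) (p : Jet) (h : 0 < m + 2) : emb m p ⟨0, h⟩ = p.1 := by
  simp [emb]

lemma emb_succ (m j : ℕ) (p : Jet) (h : j + 1 < m + 2) :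
    emb m p ⟨j + 1, h⟩ = p.2 j := by
  simp [emb]

lemma emb_surj (m : ℕ) (x : Fin (m + 2) → ℝ) : ∃ p : Jet, emb m p = x := by
  refine ⟨(x ⟨0, by omega⟩, fun j => if h : j + 1 < m + 2 then x ⟨j + 1, h⟩ else 0), ?_⟩
  funext i
  rcases i with ⟨iv, hi⟩
  unfold emb
  rcases Nat.eq_zero_or_pos iv with h0 | h0
  · subst h0; simp
  · obtain ⟨j, rfl⟩ : ∃ j, iv = j + 1 := ⟨iv - 1, by omega⟩
    have hj : j + 1 < m + 2 := hi
    simp [hj]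

lemma curve_x (m : ℕ) (G : (Fin (m + 2) → ℝ) → ℝ) (p : Jet) :
    (fun t => ofFin m G (t, p.2))
      = fun t => G (Function.update (emb m p) ⟨0, by omega⟩ t) := by
  funext t
  show G _ = G _
  congr 1
  funext i
  rcases i with ⟨iv, hi⟩
  by_cases h0 : iv = 0
  · subst h0
    simp [emb, Function.update]
  · have : (⟨iv, hi⟩ : Fin (m + 2)) ≠ ⟨0, by omega⟩ := by
      simp [Fin.ext_iff, h0]
    rw [Function.update_of_ne this]
    simp [emb, h0]

lemma pdX_ofFin (m : ℕ) (G : (Fin (m + 2) → ℝ) → ℝ) (p : Jet) :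
    pdX (ofFin m G) p = pG ⟨0, by omega⟩ G (emb m p) := by
  unfold pdX pG
  rw [curve_x]
  have h : emb m p ⟨0, by omega⟩ = p.1 := by simp [emb]
  rw [h]

lemma curve_y (m j : ℕ) (hj : j + 1 < m + 2) (G : (Fin (m + 2) → ℝ) → ℝ) (p : Jet) :
    (fun t => ofFin m G (p.1, Function.update p.2 j t))
      = fun t => G (Function.update (emb m p) ⟨j + 1, hj⟩ t) := by
  funext t
  show G _ = G _
  congr 1
  funext i
  rcases i with ⟨iv, hi⟩
  by_cases h0 : iv = 0
  · subst h0
    have : (⟨0, hi⟩ : Fin (m + 2)) ≠ ⟨j + 1, hj⟩ := by simp [Fin.ext_iff]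
    rw [Function.update_of_ne this]
    simp [emb]
  · by_cases hji : iv = j + 1
    · subst hji
      have he : (⟨j + 1, hi⟩ : Fin (m + 2)) = ⟨j + 1, hj⟩ := rfl
      rw [he, Function.update_self]
      simp [Function.update]
    · have : (⟨iv, hi⟩ : Fin (m + 2)) ≠ ⟨j + 1, hj⟩ := by simp [Fin.ext_iff, hji]
      rw [Function.update_of_ne this]
      have : iv - 1 ≠ j := by omega
      simp [emb, h0, Function.update_of_ne this]

lemma pdY_ofFin (m j : ℕ) (hj : j + 1 < m + 2) (G : (Fin (m + 2) → ℝ) → ℝ) (p : Jet) :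
    pdY j (ofFin m G) p = pG ⟨j + 1, hj⟩ G (emb m p) := by
  unfold pdY pG
  rw [curve_y m j hj]
  have h : emb m p ⟨j + 1, hj⟩ = p.2 j := by simp [emb]
  rw [h]

lemma pdY_ofFin_high (m j : ℕ) (hj : m + 1 ≤ j) (G : (Fin (m + 2) → ℝ) → ℝ) (p : Jet) :
    pdY j (ofFin m G) p = 0 := by
  unfold pdY
  have : (fun t => ofFin m G (p.1, Function.update p.2 j t)) = fun _ => ofFin m G p := by
    funext t
    show G _ = G _
    congr 1
    funext i
    rcases i with ⟨iv, hi⟩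
    by_cases h0 : iv = 0
    · simp [h0]
    · have : iv - 1 ≠ j := by omega
      simp [h0, Function.update_of_ne this]
  rw [this, deriv_const]

lemma Dx_ofFin (m : ℕ) (G : (Fin (m + 2) → ℝ) → ℝ) (p : Jet) :
    Dx (ofFin m G) p = pG ⟨0, by omega⟩ G (emb m p)
      + ∑ j : Fin (m + 1), p.2 ((j : ℕ) + 1)
          * pG ⟨(j : ℕ) + 1, by have := j.isLt; omega⟩ G (emb m p) := by
  unfold Dx
  rw [pdX_ofFin]
  congr 1
  rw [tsum_eq_sum (s := Finset.range (m + 1))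
    (by
      intro j hj
      rw [pdY_ofFin_high m j (by simp at hj; omega)]
      ring)]
  rw [← Fin.sum_univ_eq_sum_range]
  apply Finset.sum_congr rfl
  intro j _
  rw [pdY_ofFin m (j : ℕ) (by have := j.isLt; omega)]

lemma prolong_ofFin (ξ η : ℝ × ℝ → ℝ) (m : ℕ) (G : (Fin (m + 2) → ℝ) → ℝ) (p : Jet) :
    prolong ξ η (ofFin m G) p = ξ (p.1, p.2 0) * pG ⟨0, by omega⟩ G (emb m p)
      + ∑ j : Fin (m + 1), etaCoef ξ η (j : ℕ) p
          * pG ⟨(j : ℕ) + 1, by have := j.isLt; omega⟩ G (emb m p) := by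
  unfold prolong
  rw [pdX_ofFin]
  congr 1
  rw [tsum_eq_sum (s := Finset.range (m + 1))
    (by
      intro j hj
      rw [pdY_ofFin_high m j (by simp at hj; omega)]
      ring)]
  rw [← Fin.sum_univ_eq_sum_range]
  apply Finset.sum_congr rfl
  intro j _
  rw [pdY_ofFin m (j : ℕ) (by have := j.isLt; omega)]

lemma pdX_const (c : ℝ) (p : Jet) : pdX (fun _ => c) p = 0 := by simp [pdX]

lemma pdY_const (c : ℝ) (j : ℕ) (p : Jet) : pdY j (fun _ => c) p = 0 := by simp [pdY]

lemma Dx_const (c : ℝ) (p : Jet) : Dx (fun _ => c) p = 0 := by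
  simp [Dx, pdX, pdY]

lemma Dx_coordx (p : Jet) : Dx (fun q : Jet => q.1) p = 1 := by
  unfold Dx pdX pdY
  have h1 : (fun t : ℝ => (t, p.2).1) = fun t => t := rfl
  have h2 : ∀ j : ℕ, (fun t : ℝ => (p.1, Function.update p.2 j t).1) = fun _ => p.1 :=
    fun j => rfl
  simp [h1, h2]

lemma eta1_zero : ∀ j (p : Jet), etaCoef (fun _ => 1) (fun _ => 0) j p = 0 := by
  intro j
  induction j with
  | zero => intro p; rfl
  | succ j ih =>
    intro p
    show Dx (etaCoef _ _ j) p - p.2 (j + 1) * Dx (fun q => (1:ℝ)) p = 0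
    have h : etaCoef (fun _ => 1) (fun _ => 0) j = fun _ => (0:ℝ) := funext ih
    rw [h, Dx_const, Dx_const]
    ring

lemma prolong_gen1 (H : Jet → ℝ) (p : Jet) :
    prolong (fun _ => 1) (fun _ => 0) H p = pdX H p := by
  unfold prolong
  have h : (fun j : ℕ => etaCoef (fun _ => 1) (fun _ => 0) j p * pdY j H p)
      = fun _ => 0 := by
    funext j; rw [eta1_zero]; ring
  rw [h, tsum_zero]
  ring

lemma eta2_succ_zero : ∀ j (p : Jet), etaCoef (fun _ => 0) (fun _ => 1) (j + 1) p = 0 := by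
  intro j
  induction j with
  | zero =>
    intro p
    show Dx (etaCoef _ _ 0) p - p.2 1 * Dx (fun q => (0:ℝ)) p = 0
    have h : etaCoef (fun _ => (0:ℝ)) (fun _ => (1:ℝ)) 0 = fun _ => (1:ℝ) := rfl
    rw [h, Dx_const, Dx_const]; ring
  | succ j ih =>
    intro p
    show Dx (etaCoef _ _ (j + 1)) p - p.2 (j + 2) * Dx (fun q => (0:ℝ)) p = 0
    have h : etaCoef (fun _ => (0:ℝ)) (fun _ => (1:ℝ)) (j + 1) = fun _ => (0:ℝ) := funext ih
    rw [h, Dx_const]; ring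

lemma prolong_gen2 (H : Jet → ℝ) (p : Jet) :
    prolong (fun _ => 0) (fun _ => 1) H p = pdY 0 H p := by
  unfold prolong
  rw [tsum_eq_single 0 (by
    intro j hj
    obtain ⟨j', rfl⟩ : ∃ j', j = j' + 1 := ⟨j - 1, by omega⟩
    rw [eta2_succ_zero]; ring)]
  have h : etaCoef (fun _ => (0:ℝ)) (fun _ => (1:ℝ)) 0 p = 1 := rfl
  rw [h]
  ring

lemma Dx_xi3 (p : Jet) : Dx (fun q : Jet => -(q.2 0)) p = -(p.2 1) := by
  unfold Dx pdX pdY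
  have h1 : (fun t : ℝ => -((t, p.2).2 0)) = fun _ => -(p.2 0) := rfl
  rw [tsum_eq_single 0 (by
    intro j hj
    have : ∀ t : ℝ, (p.1, Function.update p.2 j t).2 0 = p.2 0 := by
      intro t
      show Function.update p.2 j t 0 = p.2 0
      rw [Function.update_of_ne (Ne.symm hj)]
    have h2 : (fun t : ℝ => -((p.1, Function.update p.2 j t).2 0)) = fun _ => -(p.2 0) := by
      funext t; rw [this]
    rw [h2, deriv_const]; ring)]
  have h3 : (fun t : ℝ => -((p.1, Function.update p.2 0 t).2 0)) = fun t => -t := by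
    funext t
    show -(Function.update p.2 0 t 0) = -t
    rw [Function.update_self]
  have h4 : deriv (fun t : ℝ => -t) (p.2 0) = -1 := ((hasDerivAt_id _).neg).deriv
  rw [h1, h3, deriv_const, h4]
  ring

lemma eta3_succ (j : ℕ) (p : Jet) :
    etaCoef (fun v => -v.2) (fun v => v.1) (j + 1) p
      = Dx (etaCoef (fun v => -v.2) (fun v => v.1) j) p + p.2 (j + 1) * p.2 1 := by
  show Dx _ p - p.2 (j + 1) * Dx (fun q : Jet => -(q.2 0)) p = _
  rw [Dx_xi3]
  ring

lemma eta3_one (p : Jet) :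
    etaCoef (fun v => -v.2) (fun v => v.1) 1 p = 1 + p.2 1 * p.2 1 := by
  rw [eta3_succ]
  have h : etaCoef (fun v : ℝ × ℝ => -v.2) (fun v => v.1) 0 = fun q : Jet => q.1 := rfl
  rw [h, Dx_coordx]

lemma eta3_two (p : Jet) :
    etaCoef (fun v => -v.2) (fun v => v.1) 2 p = 3 * (p.2 1 * p.2 2) := by
  rw [eta3_succ]
  have h : etaCoef (fun v : ℝ × ℝ => -v.2) (fun v => v.1) 1
      = fun q : Jet => 1 + q.2 1 * q.2 1 := funext eta3_one
  rw [h]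
  unfold Dx pdX pdY
  have h1 : (fun t : ℝ => 1 + (t, p.2).2 1 * (t, p.2).2 1)
      = fun _ => 1 + p.2 1 * p.2 1 := rfl
  rw [h1, deriv_const]
  rw [tsum_eq_single 1 (by
    intro j hj
    have h2 : (fun t : ℝ => 1 + (p.1, Function.update p.2 j t).2 1
        * (p.1, Function.update p.2 j t).2 1) = fun _ => 1 + p.2 1 * p.2 1 := by
      funext t
      show 1 + Function.update p.2 j t 1 * Function.update p.2 j t 1 = _
      rw [Function.update_of_ne (Ne.symm hj)]
    rw [h2, deriv_const]; ring)]
  have h3 : (fun t : ℝ => 1 + (p.1, Function.update p.2 1 t).2 1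
      * (p.1, Function.update p.2 1 t).2 1) = fun t => 1 + t * t := by
    funext t
    show 1 + Function.update p.2 1 t 1 * Function.update p.2 1 t 1 = _
    rw [Function.update_self]
  have h4 : deriv (fun t : ℝ => 1 + t * t) (p.2 1) = p.2 1 + p.2 1 := by
    have := (((hasDerivAt_id (p.2 1)).mul (hasDerivAt_id (p.2 1))).const_add 1).deriv
    simpa using this
  rw [h3, h4]
  show 0 + p.2 (1 + 1) * (p.2 1 + p.2 1) + p.2 (1 + 1) * p.2 1 = 3 * (p.2 1 * p.2 2)
  ring

/-- differentiability of a coordinate along an update-curve -/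
lemma diffAt_coord_curve (x : Fin n → ℝ) (i c : Fin n) (s : ℝ) :
    DifferentiableAt ℝ (fun t => Function.update x i t c) s := by
  by_cases h : c = i
  · subst h
    have : (fun t => Function.update x c t c) = fun t => t := by
      funext t; rw [Function.update_self]
    rw [this]; exact differentiableAt_fun_id
  · have : (fun t => Function.update x i t c) = fun _ => x c := by
      funext t; rw [Function.update_of_ne h]
    rw [this]; exact differentiableAt_const _

/-- finite-dimensional representatives of the prolongation coefficients of the
rotation field -/
def Ecoef (k : ℕ) : ℕ → (Fin (k + 3) → ℝ) → ℝ
  | 0 => fun x => x ⟨0, by omega⟩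
  | l + 1 => fun x =>
      pG ⟨0, by omega⟩ (Ecoef k l) x
      + (∑ j : Fin (k + 1), x ⟨(j : ℕ) + 2, by have := j.isLt; omega⟩
          * pG ⟨(j : ℕ) + 1, by have := j.isLt; omega⟩ (Ecoef k l) x)
      + (if h : l + 2 < k + 3 then x ⟨l + 2, h⟩ * x ⟨2, by omega⟩ else 0)

lemma Ecoef_contDiff (k : ℕ) : ∀ l, ContDiff ℝ (⊤:ℕ∞) (Ecoef k l) := by
  intro l
  induction l with
  | zero =>
    exact (contDiff_pi.mp contDiff_id) _
  | succ l ih =>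
    refine ContDiff.add (ContDiff.add (pG_contDiff ih _) ?_) ?_
    · exact ContDiff.sum fun j _ =>
        ((contDiff_pi.mp contDiff_id) _).mul (pG_contDiff ih _)
    · by_cases h : l + 2 < k + 3
      · simp only [dif_pos h]
        exact ((contDiff_pi.mp contDiff_id) _).mul ((contDiff_pi.mp contDiff_id) _)
      · simp only [dif_neg h]
        exact contDiff_const

lemma Ecoef_indep (k : ℕ) : ∀ l, l ≤ k + 1 →
    ∀ (i : Fin (k + 3)), l + 2 ≤ (i : ℕ) →
    ∀ x t, Ecoef k l (Function.update x i t) = Ecoef k l x := by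
  intro l
  induction l with
  | zero =>
    intro _ i hi x t
    show Function.update x i t ⟨0, by omega⟩ = x ⟨0, by omega⟩
    rw [Function.update_of_ne (by simp [Fin.ext_iff]; omega)]
  | succ l ih =>
    intro hl i hi x t
    have hl' : l ≤ k + 1 := by omega
    have ihi : ∀ (c : Fin (k + 3)), l + 2 ≤ (c : ℕ) →
        ∀ y s, Ecoef k l (Function.update y c s) = Ecoef k l y := fun c hc => ih hl' c hc
    show _ + _ + _ = _ + _ + _
    congr 1
    · congr 1
      · exact pG_indep_other (ihi i (by omega)) (by simp [Fin.ext_iff]; omega) x t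
      · apply Finset.sum_congr rfl
        intro j _
        by_cases hj1 : (j : ℕ) + 1 = (i : ℕ)
        · -- the pG factor vanishes identically
          have hz : ∀ y, pG ⟨(j : ℕ) + 1, by have := j.isLt; omega⟩ (Ecoef k l) y = 0 :=
            pG_of_indep (ihi ⟨(j : ℕ) + 1, by have := j.isLt; omega⟩ (by simp; omega))
          rw [hz, hz]
          ring
        · by_cases hj2 : (j : ℕ) + 2 = (i : ℕ)
          · have hz : ∀ y, pG ⟨(j : ℕ) + 1, by have := j.isLt; omega⟩ (Ecoef k l) y = 0 :=
              pG_of_indep (ihi ⟨(j : ℕ) + 1, by have := j.isLt; omega⟩ (by simp; omega))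
            rw [hz, hz]
            ring
          · rw [Function.update_of_ne (by simp [Fin.ext_iff]; omega)]
            rw [pG_indep_other (ihi i (by omega)) (by simp [Fin.ext_iff]; omega)]
    · have h2 : l + 2 < k + 3 := by omega
      simp only [dif_pos h2]
      rw [Function.update_of_ne (by simp [Fin.ext_iff]; omega),
        Function.update_of_ne (by simp [Fin.ext_iff]; omega)]

lemma Ecoef_eta (k : ℕ) : ∀ l, l ≤ k + 1 → ∀ p : Jet,
    etaCoef (fun v => -v.2) (fun v => v.1) l p = Ecoef k l (emb (k + 1) p) := by
  intro l
  induction l with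
  | zero =>
    intro _ p
    show p.1 = emb (k + 1) p ⟨0, by omega⟩
    simp [emb]
  | succ l ih =>
    intro hl p
    have hl' : l ≤ k + 1 := by omega
    rw [eta3_succ]
    have hfun : etaCoef (fun v => -v.2) (fun v => v.1) l = ofFin (k + 1) (Ecoef k l) :=
      funext fun q => ih hl' q
    rw [hfun, Dx_ofFin]
    show _ + _ + _ = _ + _ + _
    rw [Fin.sum_univ_castSucc]
    have hlast : pG ⟨(k + 1 : ℕ) + 1, by omega⟩ (Ecoef k l) (emb (k + 1) p) = 0 := by
      apply pG_of_indep (Ecoef_indep k l hl' ⟨k + 2, by omega⟩ (by simp; omega))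
    have hcast : ∀ j : Fin (k + 1),
        p.2 ((Fin.castSucc j : ℕ) + 1) * pG ⟨(Fin.castSucc j : ℕ) + 1,
            by have := j.isLt; simp; omega⟩ (Ecoef k l) (emb (k + 1) p)
          = emb (k + 1) p ⟨(j : ℕ) + 2, by have := j.isLt; omega⟩
            * pG ⟨(j : ℕ) + 1, by have := j.isLt; omega⟩ (Ecoef k l) (emb (k + 1) p) := by
      intro j
      rw [emb_succ]
      rfl
    calc pG ⟨0, by omega⟩ (Ecoef k l) (emb (k + 1) p)
          + ((∑ j : Fin (k + 1), p.2 ((Fin.castSucc j : ℕ) + 1)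
            * pG ⟨(Fin.castSucc j : ℕ) + 1, by have := j.isLt; simp; omega⟩ (Ecoef k l)
              (emb (k + 1) p))
            + p.2 ((Fin.last (k + 1) : ℕ) + 1) * pG ⟨(Fin.last (k + 1) : ℕ) + 1, by simp⟩
              (Ecoef k l) (emb (k + 1) p))
          + p.2 (l + 1) * p.2 1
        = pG ⟨0, by omega⟩ (Ecoef k l) (emb (k + 1) p)
          + (∑ j : Fin (k + 1), emb (k + 1) p ⟨(j : ℕ) + 2, by have := j.isLt; omega⟩
            * pG ⟨(j : ℕ) + 1, by have := j.isLt; omega⟩ (Ecoef k l) (emb (k + 1) p))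
          + (if h : l + 2 < k + 3 then emb (k + 1) p ⟨l + 2, h⟩
              * emb (k + 1) p ⟨2, by omega⟩ else 0) := by
          have h2 : l + 2 < k + 3 := by omega
          rw [dif_pos h2]
          have he2 : emb (k + 1) p ⟨l + 2, h2⟩ = p.2 (l + 1) := emb_succ (k + 1) (l + 1) p h2
          have he3 : emb (k + 1) p ⟨2, by omega⟩ = p.2 1 := emb_succ (k + 1) 1 p (by omega)
          rw [he2, he3]
          have hL : (Fin.last (k + 1) : ℕ) = k + 1 := rfl
          rw [Finset.sum_congr rfl (fun j _ => hcast j)]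
          rw [show pG ⟨(Fin.last (k + 1) : ℕ) + 1, by simp⟩ (Ecoef k l) (emb (k + 1) p)
            = 0 from hlast]
          ring
      _ = Ecoef k (l + 1) (emb (k + 1) p) := rfl

end SE2Aux

lemma field_aux (c d w dd : ℝ) (hd : d ≠ 0) :
    ((1 + c * c) * (2 * c / d) * dd + 3 * (c * d) * (-((1 + c ^ 2) / d ^ 2)) * dd)
      + ((1 + c ^ 2) / d * (c * dd - w) + (1 + c ^ 2) / d * w) = 0 := by
  field_simp
  ring


open SE2Aux in
/-- If a smooth function `F` of the `k`-jet space (`k ≥ 1`) is annihilated by the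
prolongations of the three generators of `se(2)`, then so is
`𝔇F = ((1+y₁²)/y₂)·D_xF` on the open set `{y₂ ≠ 0}`: the invariant derivation `𝔇`
maps SE(2)-invariant jet functions to SE(2)-invariant jet functions. -/
theorem stmt_1 (k : ℕ) (hk : 1 ≤ k) (G : (Fin (k + 2) → ℝ) → ℝ)
    (hG : ContDiff ℝ (⊤ : ℕ∞) G) (F : Jet → ℝ) (hF : F = ofFin k G)
    (h1 : ∀ p : Jet, prolong (fun _ => 1) (fun _ => 0) F p = 0)
    (h2 : ∀ p : Jet, prolong (fun _ => 0) (fun _ => 1) F p = 0)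
    (h3 : ∀ p : Jet, prolong (fun v => -v.2) (fun v => v.1) F p = 0) :
    ∀ p : Jet, p.2 2 ≠ 0 →
      prolong (fun _ => 1) (fun _ => 0)
          (fun q => (1 + (q.2 1) ^ 2) / q.2 2 * Dx F q) p = 0 ∧
      prolong (fun _ => 0) (fun _ => 1)
          (fun q => (1 + (q.2 1) ^ 2) / q.2 2 * Dx F q) p = 0 ∧
      prolong (fun v => -v.2) (fun v => v.1)
          (fun q => (1 + (q.2 1) ^ 2) / q.2 2 * Dx F q) p = 0 := by
  classical
  -- `F` as a function of the `(k+1)`-jet space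
  set GG : (Fin (k + 3) → ℝ) → ℝ := fun y => G (fun i : Fin (k + 2) => y i.castSucc)
    with hGGdef
  have hGG : ContDiff ℝ (⊤:ℕ∞) GG :=
    hG.comp (contDiff_pi.mpr fun i => (contDiff_pi.mp contDiff_id) _)
  have hFG : F = ofFin (k + 1) GG := by
    rw [hF]
    funext q
    show G _ = G _
    congr 1
  -- vanishing of the first two partials of `GG` (translation invariance)
  have hg0 : ∀ y, pG (⟨0, by omega⟩ : Fin (k + 3)) GG y = 0 := by
    intro y
    obtain ⟨q, rfl⟩ := emb_surj (k + 1) y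
    have h := h1 q
    rw [hFG, prolong_gen1, pdX_ofFin] at h
    exact h
  have hg1 : ∀ y, pG (⟨1, by omega⟩ : Fin (k + 3)) GG y = 0 := by
    intro y
    obtain ⟨q, rfl⟩ := emb_surj (k + 1) y
    have h := h2 q
    rw [hFG, prolong_gen2, pdY_ofFin (k + 1) 0 (by omega)] at h
    exact h
  have hind0 : ∀ y t, GG (Function.update y (⟨0, by omega⟩ : Fin (k + 3)) t) = GG y :=
    const_of_pG_zero hGG _ hg0
  have hind1 : ∀ y t, GG (Function.update y (⟨1, by omega⟩ : Fin (k + 3)) t) = GG y :=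
    const_of_pG_zero hGG _ hg1
  have hindL : ∀ y t, GG (Function.update y (⟨k + 2, by omega⟩ : Fin (k + 3)) t) = GG y := by
    intro y t
    show G _ = G _
    congr 1
    funext i
    rw [Function.update_of_ne (by simp [Fin.ext_iff]; have := i.isLt; omega)]
  have hgL : ∀ y, pG (⟨k + 2, by omega⟩ : Fin (k + 3)) GG y = 0 := pG_of_indep hindL
  -- second partials against an invariant direction vanish
  have hpgc : ∀ (c : Fin (k + 3)), (∀ y t, GG (Function.update y c t) = GG y) →
      ∀ (i : Fin (k + 3)) y, pG c (pG i GG) y = 0 := by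
    intro c hc i y
    by_cases hic : i = c
    · subst hic
      rw [show pG i GG = (fun _ => (0:ℝ)) from funext (pG_of_indep hc)]
      exact pG_zero _ _
    · exact pG_of_indep (fun z s => pG_indep_other hc hic z s) y
  -- the total derivative as a function of the `(k+2)`-jet space
  set DF : (Fin (k + 3) → ℝ) → ℝ := fun y => ∑ j : Fin (k + 1),
      y ⟨(j : ℕ) + 2, by have := j.isLt; omega⟩
        * pG ⟨(j : ℕ) + 1, by have := j.isLt; omega⟩ GG y with hDFdef
  have hDFsmooth : ContDiff ℝ (⊤:ℕ∞) DF :=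
    ContDiff.sum fun j _ => ((contDiff_pi.mp contDiff_id) _).mul (pG_contDiff hGG _)
  have hDx : ∀ q : Jet, Dx F q = DF (emb (k + 1) q) := by
    intro q
    rw [hFG, Dx_ofFin, hg0, Fin.sum_univ_castSucc]
    rw [show pG ⟨((Fin.last (k + 1) : Fin (k + 2)) : ℕ) + 1, by simp⟩ GG (emb (k + 1) q) = 0
      from hgL _]
    have hc : ∀ j : Fin (k + 1),
        q.2 (((Fin.castSucc j : Fin (k + 2)) : ℕ) + 1)
            * pG ⟨((Fin.castSucc j : Fin (k + 2)) : ℕ) + 1, by have := j.isLt; simp; omega⟩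
              GG (emb (k + 1) q)
          = emb (k + 1) q ⟨(j : ℕ) + 2, by have := j.isLt; omega⟩
            * pG ⟨(j : ℕ) + 1, by have := j.isLt; omega⟩ GG (emb (k + 1) q) := by
      intro j
      rw [emb_succ]
      rfl
    rw [Finset.sum_congr rfl fun j _ => hc j]
    ring
  -- the function 𝔇F of the `(k+2)`-jet space
  set Gf : (Fin (k + 3) → ℝ) → ℝ := fun y =>
      (1 + y ⟨2, by omega⟩ ^ 2) / y ⟨3, by omega⟩ * DF y with hGfdef
  have hGf : (fun q : Jet => (1 + (q.2 1) ^ 2) / q.2 2 * Dx F q) = ofFin (k + 1) Gf := by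
    funext q
    show _ = (1 + (emb (k + 1) q) ⟨2, by omega⟩ ^ 2) / (emb (k + 1) q) ⟨3, by omega⟩
        * DF (emb (k + 1) q)
    rw [show emb (k + 1) q ⟨2, by omega⟩ = q.2 1 from emb_succ (k + 1) 1 q (by omega),
      show emb (k + 1) q ⟨3, by omega⟩ = q.2 2 from emb_succ (k + 1) 2 q (by omega), hDx q]
  -- independence of DF and Gf of the first two coordinates
  have hDFind : ∀ (c : Fin (k + 3)), (c : ℕ) < 2 →
      (∀ y t, GG (Function.update y c t) = GG y) →
      ∀ y t, DF (Function.update y c t) = DF y := by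
    intro c hc hcind y t
    rw [hDFdef]
    apply Finset.sum_congr rfl
    intro j _
    rw [Function.update_of_ne (by simp [Fin.ext_iff]; omega)]
    by_cases hj : (⟨(j : ℕ) + 1, by have := j.isLt; omega⟩ : Fin (k + 3)) = c
    · rw [hj, pG_of_indep hcind, pG_of_indep hcind]
    · rw [pG_indep_other hcind hj]
  have hGfind : ∀ (c : Fin (k + 3)), (c : ℕ) < 2 →
      (∀ y t, GG (Function.update y c t) = GG y) →
      ∀ y t, Gf (Function.update y c t) = Gf y := by
    intro c hc hcind y t
    show (1 + Function.update y c t ⟨2, by omega⟩ ^ 2) / Function.update y c t ⟨3, by omega⟩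
        * DF (Function.update y c t)
      = (1 + y ⟨2, by omega⟩ ^ 2) / y ⟨3, by omega⟩ * DF y
    rw [Function.update_of_ne (by simp [Fin.ext_iff]; omega),
      Function.update_of_ne (by simp [Fin.ext_iff]; omega), hDFind c hc hcind]
  have hGf0 : ∀ y, pG (⟨0, by omega⟩ : Fin (k + 3)) Gf y = 0 :=
    pG_of_indep (hGfind _ (by simp) hind0)
  have hGf1 : ∀ y, pG (⟨1, by omega⟩ : Fin (k + 3)) Gf y = 0 :=
    pG_of_indep (hGfind _ (by simp) hind1)
  intro p hp2
  refine ⟨?_, ?_, ?_⟩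
  · rw [hGf, prolong_gen1, pdX_ofFin]
    exact hGf0 _
  · rw [hGf, prolong_gen2, pdY_ofFin (k + 1) 0 (by omega)]
    exact hGf1 _
  · -- the rotation generator
    rw [hGf, prolong_ofFin]
    set x : Fin (k + 3) → ℝ := emb (k + 1) p with hxdef
    have hc2 : x ⟨2, by omega⟩ = p.2 1 := emb_succ (k + 1) 1 p (by omega)
    have hc3 : x ⟨3, by omega⟩ = p.2 2 := emb_succ (k + 1) 2 p (by omega)
    have hx3 : x ⟨3, by omega⟩ ≠ 0 := by rw [hc3]; exact hp2
    set mu : (Fin (k + 3) → ℝ) → ℝ := fun y => (1 + y ⟨2, by omega⟩ ^ 2) / y ⟨3, by omega⟩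
      with hmudef
    -- curves of mu
    have he2 : (fun t => mu (Function.update x ⟨2, by omega⟩ t))
        = fun t => (1 + t ^ 2) / x ⟨3, by omega⟩ := by
      funext t
      show (1 + Function.update x ⟨2, by omega⟩ t ⟨2, by omega⟩ ^ 2)
          / Function.update x ⟨2, by omega⟩ t ⟨3, by omega⟩ = _
      rw [Function.update_self, Function.update_of_ne (by simp [Fin.ext_iff])]
    have he3 : (fun t => mu (Function.update x ⟨3, by omega⟩ t))
        = fun t => (1 + x ⟨2, by omega⟩ ^ 2) / t := by
      funext t
      show (1 + Function.update x ⟨3, by omega⟩ t ⟨2, by omega⟩ ^ 2)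
          / Function.update x ⟨3, by omega⟩ t ⟨3, by omega⟩ = _
      rw [Function.update_self, Function.update_of_ne (by simp [Fin.ext_iff])]
    have heO : ∀ i : Fin (k + 3), i ≠ ⟨2, by omega⟩ → i ≠ ⟨3, by omega⟩ →
        (fun t => mu (Function.update x i t)) = fun _ => mu x := by
      intro i hi2 hi3
      funext t
      show (1 + Function.update x i t ⟨2, by omega⟩ ^ 2)
          / Function.update x i t ⟨3, by omega⟩ = _
      rw [Function.update_of_ne (Ne.symm hi2), Function.update_of_ne (Ne.symm hi3)]
    have hmudiff : ∀ i : Fin (k + 3),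
        DifferentiableAt ℝ (fun t => mu (Function.update x i t)) (x i) := by
      intro i
      by_cases hi2 : i = ⟨2, by omega⟩
      · subst hi2
        rw [he2]
        exact ((differentiableAt_id.pow 2).const_add 1).div_const _
      · by_cases hi3 : i = ⟨3, by omega⟩
        · subst hi3
          rw [he3]
          exact (differentiableAt_const _).div differentiableAt_id hx3
        · rw [heO i hi2 hi3]
          exact differentiableAt_const _
    have hmu2 : pG ⟨2, by omega⟩ mu x = 2 * x ⟨2, by omega⟩ / x ⟨3, by omega⟩ := by
      show deriv (fun t => mu (Function.update x ⟨2, by omega⟩ t)) (x ⟨2, by omega⟩) = _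
      rw [he2]
      have h : HasDerivAt (fun t : ℝ => (1 + t ^ 2) / x ⟨3, by omega⟩)
          (2 * x ⟨2, by omega⟩ / x ⟨3, by omega⟩) (x ⟨2, by omega⟩) := by
        have h0 := ((hasDerivAt_pow 2 (x ⟨2, by omega⟩)).const_add 1).div_const
          (x ⟨3, by omega⟩)
        convert h0 using 1
        · rfl
        · rfl
        norm_num
      exact h.deriv
    have hmu3 : pG ⟨3, by omega⟩ mu x
        = -((1 + x ⟨2, by omega⟩ ^ 2) / x ⟨3, by omega⟩ ^ 2) := by
      show deriv (fun t => mu (Function.update x ⟨3, by omega⟩ t)) (x ⟨3, by omega⟩) = _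
      rw [he3]
      have h : HasDerivAt (fun t : ℝ => (1 + x ⟨2, by omega⟩ ^ 2) / t)
          (-((1 + x ⟨2, by omega⟩ ^ 2) / x ⟨3, by omega⟩ ^ 2)) (x ⟨3, by omega⟩) := by
        have h0 := (hasDerivAt_const (x ⟨3, by omega⟩) (1 + x ⟨2, by omega⟩ ^ 2)).div
          (hasDerivAt_id (x ⟨3, by omega⟩)) hx3
        convert h0 using 1
        · rfl
        · rfl
        · rfl
        simp only [id]
        field_simp
        ring
      exact h.deriv
    have hmuO : ∀ i : Fin (k + 3), i ≠ ⟨2, by omega⟩ → i ≠ ⟨3, by omega⟩ →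
        pG i mu x = 0 := by
      intro i hi2 hi3
      show deriv (fun t => mu (Function.update x i t)) (x i) = 0
      rw [heO i hi2 hi3, deriv_const]
    -- pG of DF
    have hpGDF : ∀ j0 : Fin (k + 1),
        pG ⟨(j0 : ℕ) + 2, by have := j0.isLt; omega⟩ DF x
          = pG ⟨(j0 : ℕ) + 1, by have := j0.isLt; omega⟩ GG x
            + ∑ l : Fin (k + 1), x ⟨(l : ℕ) + 2, by have := l.isLt; omega⟩
                * pG ⟨(j0 : ℕ) + 2, by have := j0.isLt; omega⟩
                    (pG ⟨(l : ℕ) + 1, by have := l.isLt; omega⟩ GG) x := by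
      intro j0
      have hsum : pG ⟨(j0 : ℕ) + 2, by have := j0.isLt; omega⟩ DF x
          = ∑ l : Fin (k + 1), pG ⟨(j0 : ℕ) + 2, by have := j0.isLt; omega⟩
              (fun y => y ⟨(l : ℕ) + 2, by have := l.isLt; omega⟩
                * pG ⟨(l : ℕ) + 1, by have := l.isLt; omega⟩ GG y) x :=
        pG_sum Finset.univ
          (fun (l : Fin (k + 1)) y => y ⟨(l : ℕ) + 2, by have := l.isLt; omega⟩
            * pG ⟨(l : ℕ) + 1, by have := l.isLt; omega⟩ GG y)
          (fun l _ => (diffAt_coord_curve x _ _ _).mul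
            (diffAt_curve (pG_contDiff hGG _) x _ _))
      rw [hsum]
      have hterm : ∀ l : Fin (k + 1),
          pG ⟨(j0 : ℕ) + 2, by have := j0.isLt; omega⟩
              (fun y => y ⟨(l : ℕ) + 2, by have := l.isLt; omega⟩
                * pG ⟨(l : ℕ) + 1, by have := l.isLt; omega⟩ GG y) x
            = (if l = j0 then pG ⟨(l : ℕ) + 1, by have := l.isLt; omega⟩ GG x else 0)
              + x ⟨(l : ℕ) + 2, by have := l.isLt; omega⟩
                * pG ⟨(j0 : ℕ) + 2, by have := j0.isLt; omega⟩
                    (pG ⟨(l : ℕ) + 1, by have := l.isLt; omega⟩ GG) x := by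
        intro l
        rw [pG_mul (diffAt_coord_curve x _ _ _) (diffAt_curve (pG_contDiff hGG _) x _ _),
          pG_coord]
        congr 1
        by_cases h : l = j0
        · subst h
          rw [if_pos rfl, if_pos rfl, one_mul]
        · rw [if_neg h, if_neg (fun hh => h (Fin.ext (by
            have h2 : (l : ℕ) + 2 = (j0 : ℕ) + 2 := congrArg Fin.val hh
            omega))), zero_mul]
      rw [Finset.sum_congr rfl fun l _ => hterm l, Finset.sum_add_distrib,
        Finset.sum_ite_eq' Finset.univ j0
          (fun l => pG ⟨(l : ℕ) + 1, by have := l.isLt; omega⟩ GG x),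
        if_pos (Finset.mem_univ j0)]
    -- splitting pG of Gf
    have hsplit : ∀ j0 : Fin (k + 1),
        pG ⟨(j0 : ℕ) + 2, by have := j0.isLt; omega⟩ Gf x
          = pG ⟨(j0 : ℕ) + 2, by have := j0.isLt; omega⟩ mu x * DF x
            + mu x * pG ⟨(j0 : ℕ) + 2, by have := j0.isLt; omega⟩ DF x := by
      intro j0
      have hGfmu : Gf = fun y => mu y * DF y := rfl
      rw [hGfmu]
      exact pG_mul (hmudiff _) (diffAt_curve hDFsmooth x _ _)
    -- the annihilation identity from h3, in finite form
    have hAfin : ∀ y, (∑ l : Fin (k + 1), Ecoef k (l : ℕ) y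
        * pG ⟨(l : ℕ) + 1, by have := l.isLt; omega⟩ GG y) = 0 := by
      intro y
      obtain ⟨q, rfl⟩ := emb_surj (k + 1) y
      have h := h3 q
      rw [hFG, prolong_ofFin, hg0, mul_zero, zero_add, Fin.sum_univ_castSucc] at h
      rw [show pG ⟨((Fin.last (k + 1) : Fin (k + 2)) : ℕ) + 1, by simp⟩ GG (emb (k + 1) q)
          = 0 from hgL _, mul_zero, add_zero] at h
      have h' : (∑ l : Fin (k + 1), etaCoef (fun v => -v.2) (fun v => v.1) (l : ℕ) q
          * pG ⟨(l : ℕ) + 1, by have := l.isLt; omega⟩ GG (emb (k + 1) q)) = 0 := h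
      calc (∑ l : Fin (k + 1), Ecoef k (l : ℕ) (emb (k + 1) q)
            * pG ⟨(l : ℕ) + 1, by have := l.isLt; omega⟩ GG (emb (k + 1) q))
          = ∑ l : Fin (k + 1), etaCoef (fun v => -v.2) (fun v => v.1) (l : ℕ) q
            * pG ⟨(l : ℕ) + 1, by have := l.isLt; omega⟩ GG (emb (k + 1) q) :=
          Finset.sum_congr rfl fun l _ => congrArg
            (fun z => z * pG (⟨(l : ℕ) + 1, by have := l.isLt; omega⟩ : Fin (k + 3)) GG
              (emb (k + 1) q))
            (Ecoef_eta k (l : ℕ) (by have := l.isLt; omega) q).symm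
        _ = 0 := h'
    -- differentiated annihilation identities
    have hdag : ∀ (i : Fin (k + 3)) y,
        (∑ l : Fin (k + 1), (pG i (Ecoef k (l : ℕ)) y
            * pG ⟨(l : ℕ) + 1, by have := l.isLt; omega⟩ GG y
          + Ecoef k (l : ℕ) y
            * pG i (pG ⟨(l : ℕ) + 1, by have := l.isLt; omega⟩ GG) y)) = 0 := by
      intro i y
      have hs := pG_sum (x := y) (i := i) Finset.univ
        (fun (l : Fin (k + 1)) z => Ecoef k (l : ℕ) z
          * pG ⟨(l : ℕ) + 1, by have := l.isLt; omega⟩ GG z)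
        (fun l _ => (diffAt_curve (Ecoef_contDiff k _) y i _).mul
          (diffAt_curve (pG_contDiff hGG _) y i _))
      have h0 : pG i (fun z => ∑ l : Fin (k + 1), Ecoef k (l : ℕ) z
          * pG ⟨(l : ℕ) + 1, by have := l.isLt; omega⟩ GG z) y = 0 := by
        rw [show (fun z => ∑ l : Fin (k + 1), Ecoef k (l : ℕ) z
            * pG ⟨(l : ℕ) + 1, by have := l.isLt; omega⟩ GG z) = fun _ => (0:ℝ)
          from funext hAfin]
        exact pG_zero i y
      rw [Finset.sum_congr rfl (fun l _ =>
        (pG_mul (diffAt_curve (Ecoef_contDiff k _) y i _)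
          (diffAt_curve (pG_contDiff hGG _) y i _)).symm), ← hs]
      exact h0
    -- the key algebraic identity (star)
    set W : ℝ := ∑ l : Fin (k + 1), ∑ j : Fin (k + 1),
        Ecoef k (l : ℕ) x * (x ⟨(j : ℕ) + 2, by have := j.isLt; omega⟩
          * pG ⟨(j : ℕ) + 1, by have := j.isLt; omega⟩
              (pG ⟨(l : ℕ) + 1, by have := l.isLt; omega⟩ GG) x) with hWdef
    have hstar : (∑ l : Fin (k + 1), Ecoef k ((l : ℕ) + 1) x
        * pG ⟨(l : ℕ) + 1, by have := l.isLt; omega⟩ GG x)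
        = x ⟨2, by omega⟩ * DF x - W := by
      have hexp : ∀ l : Fin (k + 1), Ecoef k ((l : ℕ) + 1) x
          = pG ⟨0, by omega⟩ (Ecoef k (l : ℕ)) x
            + (∑ j : Fin (k + 1), x ⟨(j : ℕ) + 2, by have := j.isLt; omega⟩
                * pG ⟨(j : ℕ) + 1, by have := j.isLt; omega⟩ (Ecoef k (l : ℕ)) x)
            + x ⟨(l : ℕ) + 2, by have := l.isLt; omega⟩ * x ⟨2, by omega⟩ := by
        intro l
        show pG _ _ x + _ + dite _ _ _ = _
        rw [dif_pos (show (l : ℕ) + 2 < k + 3 by have := l.isLt; omega)]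
      have hT1 : (∑ l : Fin (k + 1), pG ⟨0, by omega⟩ (Ecoef k (l : ℕ)) x
          * pG ⟨(l : ℕ) + 1, by have := l.isLt; omega⟩ GG x) = 0 := by
        have h := hdag ⟨0, by omega⟩ x
        rw [Finset.sum_congr rfl (fun l (_ : l ∈ Finset.univ) => by
          rw [hpgc ⟨0, by omega⟩ hind0 ⟨(l : ℕ) + 1, by have := l.isLt; omega⟩ x,
            mul_zero, add_zero])] at h
        exact h
      have hT2 : (∑ l : Fin (k + 1),
          (∑ j : Fin (k + 1), x ⟨(j : ℕ) + 2, by have := j.isLt; omega⟩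
            * pG ⟨(j : ℕ) + 1, by have := j.isLt; omega⟩ (Ecoef k (l : ℕ)) x)
          * pG ⟨(l : ℕ) + 1, by have := l.isLt; omega⟩ GG x) = -W := by
        have h0 : (∑ j : Fin (k + 1), x ⟨(j : ℕ) + 2, by have := j.isLt; omega⟩
            * ∑ l : Fin (k + 1), (pG ⟨(j : ℕ) + 1, by have := j.isLt; omega⟩
                  (Ecoef k (l : ℕ)) x
                * pG ⟨(l : ℕ) + 1, by have := l.isLt; omega⟩ GG x
              + Ecoef k (l : ℕ) x
                * pG ⟨(j : ℕ) + 1, by have := j.isLt; omega⟩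
                    (pG ⟨(l : ℕ) + 1, by have := l.isLt; omega⟩ GG) x)) = 0 :=
          Finset.sum_eq_zero fun j _ => by rw [hdag, mul_zero]
        have h1 : (∑ j : Fin (k + 1), x ⟨(j : ℕ) + 2, by have := j.isLt; omega⟩
            * ∑ l : Fin (k + 1), (pG ⟨(j : ℕ) + 1, by have := j.isLt; omega⟩
                  (Ecoef k (l : ℕ)) x
                * pG ⟨(l : ℕ) + 1, by have := l.isLt; omega⟩ GG x
              + Ecoef k (l : ℕ) x
                * pG ⟨(j : ℕ) + 1, by have := j.isLt; omega⟩
                    (pG ⟨(l : ℕ) + 1, by have := l.isLt; omega⟩ GG) x))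
            = (∑ j : Fin (k + 1), ∑ l : Fin (k + 1),
                x ⟨(j : ℕ) + 2, by have := j.isLt; omega⟩
                  * pG ⟨(j : ℕ) + 1, by have := j.isLt; omega⟩ (Ecoef k (l : ℕ)) x
                  * pG ⟨(l : ℕ) + 1, by have := l.isLt; omega⟩ GG x)
              + ∑ j : Fin (k + 1), ∑ l : Fin (k + 1),
                Ecoef k (l : ℕ) x * (x ⟨(j : ℕ) + 2, by have := j.isLt; omega⟩
                  * pG ⟨(j : ℕ) + 1, by have := j.isLt; omega⟩
                      (pG ⟨(l : ℕ) + 1, by have := l.isLt; omega⟩ GG) x) := by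
          rw [← Finset.sum_add_distrib]
          apply Finset.sum_congr rfl
          intro j _
          rw [Finset.mul_sum, ← Finset.sum_add_distrib]
          apply Finset.sum_congr rfl
          intro l _
          ring
        have h2 : (∑ l : Fin (k + 1),
            (∑ j : Fin (k + 1), x ⟨(j : ℕ) + 2, by have := j.isLt; omega⟩
              * pG ⟨(j : ℕ) + 1, by have := j.isLt; omega⟩ (Ecoef k (l : ℕ)) x)
            * pG ⟨(l : ℕ) + 1, by have := l.isLt; omega⟩ GG x)
            = ∑ j : Fin (k + 1), ∑ l : Fin (k + 1),
                x ⟨(j : ℕ) + 2, by have := j.isLt; omega⟩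
                  * pG ⟨(j : ℕ) + 1, by have := j.isLt; omega⟩ (Ecoef k (l : ℕ)) x
                  * pG ⟨(l : ℕ) + 1, by have := l.isLt; omega⟩ GG x := by
          rw [Finset.sum_comm]
          apply Finset.sum_congr rfl
          intro l _
          rw [Finset.sum_mul]
        have h3 : W = ∑ j : Fin (k + 1), ∑ l : Fin (k + 1),
            Ecoef k (l : ℕ) x * (x ⟨(j : ℕ) + 2, by have := j.isLt; omega⟩
              * pG ⟨(j : ℕ) + 1, by have := j.isLt; omega⟩
                  (pG ⟨(l : ℕ) + 1, by have := l.isLt; omega⟩ GG) x) := by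
          rw [hWdef, Finset.sum_comm]
        rw [h1] at h0
        rw [h2, h3]
        linarith [h0]
      calc (∑ l : Fin (k + 1), Ecoef k ((l : ℕ) + 1) x
          * pG ⟨(l : ℕ) + 1, by have := l.isLt; omega⟩ GG x)
          = (∑ l : Fin (k + 1), pG ⟨0, by omega⟩ (Ecoef k (l : ℕ)) x
              * pG ⟨(l : ℕ) + 1, by have := l.isLt; omega⟩ GG x)
            + (∑ l : Fin (k + 1),
              (∑ j : Fin (k + 1), x ⟨(j : ℕ) + 2, by have := j.isLt; omega⟩
                * pG ⟨(j : ℕ) + 1, by have := j.isLt; omega⟩ (Ecoef k (l : ℕ)) x)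
              * pG ⟨(l : ℕ) + 1, by have := l.isLt; omega⟩ GG x)
            + (∑ l : Fin (k + 1), x ⟨(l : ℕ) + 2, by have := l.isLt; omega⟩
                * x ⟨2, by omega⟩
                * pG ⟨(l : ℕ) + 1, by have := l.isLt; omega⟩ GG x) := by
            rw [← Finset.sum_add_distrib, ← Finset.sum_add_distrib]
            apply Finset.sum_congr rfl
            intro l _
            rw [hexp l]
            ring
        _ = 0 + -W + x ⟨2, by omega⟩ * DF x := by
            rw [hT1, hT2]
            congr 1
            rw [hDFdef, Finset.mul_sum]
            apply Finset.sum_congr rfl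
            intro l _
            ring
        _ = x ⟨2, by omega⟩ * DF x - W := by ring
    -- Schwarz and telescoping: the mixed sum
    have hSq : (∑ j : Fin (k + 1), ∑ l : Fin (k + 1), Ecoef k ((j : ℕ) + 1) x
        * (x ⟨(l : ℕ) + 2, by have := l.isLt; omega⟩
          * pG ⟨(j : ℕ) + 2, by have := j.isLt; omega⟩
              (pG ⟨(l : ℕ) + 1, by have := l.isLt; omega⟩ GG) x)) = W := by
      have htel : ∀ l : Fin (k + 1),
          (∑ j : Fin (k + 1), Ecoef k ((j : ℕ) + 1) x
            * pG ⟨(l : ℕ) + 1, by have := l.isLt; omega⟩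
                (pG ⟨(j : ℕ) + 2, by have := j.isLt; omega⟩ GG) x)
          = ∑ j : Fin (k + 1), Ecoef k (j : ℕ) x
            * pG ⟨(l : ℕ) + 1, by have := l.isLt; omega⟩
                (pG ⟨(j : ℕ) + 1, by have := j.isLt; omega⟩ GG) x := by
        intro l
        set u : ℕ → ℝ := fun m => Ecoef k m x
          * pG ⟨(l : ℕ) + 1, by have := l.isLt; omega⟩
              (pG ⟨min (m + 1) (k + 2), by omega⟩ GG) x with hudef
        have h1 : ∀ j : Fin (k + 1), Ecoef k ((j : ℕ) + 1) x
            * pG ⟨(l : ℕ) + 1, by have := l.isLt; omega⟩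
                (pG ⟨(j : ℕ) + 2, by have := j.isLt; omega⟩ GG) x = u ((j : ℕ) + 1) := by
          intro j
          show _ = Ecoef k ((j : ℕ) + 1) x
            * pG ⟨(l : ℕ) + 1, by have := l.isLt; omega⟩
                (pG ⟨min ((j : ℕ) + 1 + 1) (k + 2), by omega⟩ GG) x
          rw [show (⟨min ((j : ℕ) + 1 + 1) (k + 2), by omega⟩ : Fin (k + 3))
            = ⟨(j : ℕ) + 2, by have := j.isLt; omega⟩ from Fin.ext
              (show min ((j : ℕ) + 1 + 1) (k + 2) = (j : ℕ) + 2 by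
                have := j.isLt; omega)]
        have h2 : ∀ j : Fin (k + 1), Ecoef k (j : ℕ) x
            * pG ⟨(l : ℕ) + 1, by have := l.isLt; omega⟩
                (pG ⟨(j : ℕ) + 1, by have := j.isLt; omega⟩ GG) x = u (j : ℕ) := by
          intro j
          show _ = Ecoef k (j : ℕ) x
            * pG ⟨(l : ℕ) + 1, by have := l.isLt; omega⟩
                (pG ⟨min ((j : ℕ) + 1) (k + 2), by omega⟩ GG) x
          rw [show (⟨min ((j : ℕ) + 1) (k + 2), by omega⟩ : Fin (k + 3))
            = ⟨(j : ℕ) + 1, by have := j.isLt; omega⟩ from Fin.ext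
              (show min ((j : ℕ) + 1) (k + 2) = (j : ℕ) + 1 by
                have := j.isLt; omega)]
        have hu0 : u 0 = 0 := by
          show Ecoef k 0 x
            * pG ⟨(l : ℕ) + 1, by have := l.isLt; omega⟩
                (pG ⟨min (0 + 1) (k + 2), by omega⟩ GG) x = 0
          rw [show (⟨min (0 + 1) (k + 2), by omega⟩ : Fin (k + 3))
            = ⟨1, by omega⟩ from Fin.ext (show min (0 + 1) (k + 2) = 1 by omega)]
          rw [show pG (⟨1, by omega⟩ : Fin (k + 3)) GG = fun _ => (0:ℝ) from funext hg1,
            pG_zero, mul_zero]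
        have huK : u (k + 1) = 0 := by
          show Ecoef k (k + 1) x
            * pG ⟨(l : ℕ) + 1, by have := l.isLt; omega⟩
                (pG ⟨min (k + 1 + 1) (k + 2), by omega⟩ GG) x = 0
          rw [show (⟨min (k + 1 + 1) (k + 2), by omega⟩ : Fin (k + 3))
            = ⟨k + 2, by omega⟩ from Fin.ext
              (show min (k + 1 + 1) (k + 2) = k + 2 by omega)]
          rw [show pG (⟨k + 2, by omega⟩ : Fin (k + 3)) GG = fun _ => (0:ℝ) from funext hgL,
            pG_zero, mul_zero]
        have e1 : (∑ j : Fin (k + 1), u ((j : ℕ) + 1))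
            = ∑ m ∈ Finset.range (k + 1), u (m + 1) :=
          Fin.sum_univ_eq_sum_range (fun m => u (m + 1)) (k + 1)
        have e2 : (∑ j : Fin (k + 1), u (j : ℕ)) = ∑ m ∈ Finset.range (k + 1), u m :=
          Fin.sum_univ_eq_sum_range u (k + 1)
        have e3 : (∑ m ∈ Finset.range (k + 1), (u (m + 1) - u m)) = u (k + 1) - u 0 :=
          Finset.sum_range_sub u (k + 1)
        rw [Finset.sum_sub_distrib] at e3
        rw [Finset.sum_congr rfl fun j _ => h1 j, Finset.sum_congr rfl fun j _ => h2 j,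
          e1, e2]
        rw [hu0, huK] at e3
        linarith
      calc (∑ j : Fin (k + 1), ∑ l : Fin (k + 1), Ecoef k ((j : ℕ) + 1) x
          * (x ⟨(l : ℕ) + 2, by have := l.isLt; omega⟩
            * pG ⟨(j : ℕ) + 2, by have := j.isLt; omega⟩
                (pG ⟨(l : ℕ) + 1, by have := l.isLt; omega⟩ GG) x))
          = ∑ l : Fin (k + 1), x ⟨(l : ℕ) + 2, by have := l.isLt; omega⟩
            * (∑ j : Fin (k + 1), Ecoef k ((j : ℕ) + 1) x
              * pG ⟨(l : ℕ) + 1, by have := l.isLt; omega⟩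
                  (pG ⟨(j : ℕ) + 2, by have := j.isLt; omega⟩ GG) x) := by
            rw [Finset.sum_comm]
            apply Finset.sum_congr rfl
            intro l _
            rw [Finset.mul_sum]
            apply Finset.sum_congr rfl
            intro j _
            rw [pG_comm hGG]
            ring
        _ = ∑ l : Fin (k + 1), x ⟨(l : ℕ) + 2, by have := l.isLt; omega⟩
            * (∑ j : Fin (k + 1), Ecoef k (j : ℕ) x
              * pG ⟨(l : ℕ) + 1, by have := l.isLt; omega⟩
                  (pG ⟨(j : ℕ) + 1, by have := j.isLt; omega⟩ GG) x) :=
            Finset.sum_congr rfl fun l _ => by rw [htel l]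
        _ = ∑ l : Fin (k + 1), ∑ j : Fin (k + 1), Ecoef k (j : ℕ) x
            * (x ⟨(l : ℕ) + 2, by have := l.isLt; omega⟩
              * pG ⟨(l : ℕ) + 1, by have := l.isLt; omega⟩
                  (pG ⟨(j : ℕ) + 1, by have := j.isLt; omega⟩ GG) x) := by
            apply Finset.sum_congr rfl
            intro l _
            rw [Finset.mul_sum]
            apply Finset.sum_congr rfl
            intro j _
            ring
        _ = W := by
            rw [hWdef, Finset.sum_comm]
    -- now put the goal in canonical form
    show (fun v : ℝ × ℝ => -v.2) (p.1, p.2 0) * pG ⟨0, by omega⟩ Gf x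
        + (∑ j : Fin (k + 2), etaCoef (fun v => -v.2) (fun v => v.1) (j : ℕ) p
            * pG ⟨(j : ℕ) + 1, by have := j.isLt; omega⟩ Gf x) = 0
    rw [hGf0, mul_zero, zero_add, Fin.sum_univ_succ]
    have hz0 : etaCoef (fun v => -v.2) (fun v => v.1) ((0 : Fin (k + 2)) : ℕ) p
        * pG ⟨((0 : Fin (k + 2)) : ℕ) + 1, by have := (0 : Fin (k + 2)).isLt; omega⟩ Gf x
        = 0 := by
      show etaCoef (fun v => -v.2) (fun v => v.1) 0 p
        * pG (⟨1, by omega⟩ : Fin (k + 3)) Gf x = 0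
      rw [hGf1, mul_zero]
    rw [hz0, zero_add]
    have hconv : (∑ j : Fin (k + 1),
        etaCoef (fun v => -v.2) (fun v => v.1) ((Fin.succ j : Fin (k + 2)) : ℕ) p
          * pG ⟨((Fin.succ j : Fin (k + 2)) : ℕ) + 1,
              by have := (Fin.succ j).isLt; omega⟩ Gf x)
        = ∑ j : Fin (k + 1), Ecoef k ((j : ℕ) + 1) x
            * pG ⟨(j : ℕ) + 2, by have := j.isLt; omega⟩ Gf x :=
      Finset.sum_congr rfl fun j _ =>
        congrArg (fun z => z * pG (⟨(j : ℕ) + 2, by have := j.isLt; omega⟩ : Fin (k + 3))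
          Gf x) (Ecoef_eta k ((j : ℕ) + 1) (by have := j.isLt; omega) p)
    rw [hconv]
    -- expand each term using the product rule and the formula for pG DF
    rw [Finset.sum_congr rfl (fun j (_ : j ∈ Finset.univ) => by rw [hsplit j, hpGDF j])]
    -- split into the three pieces
    have hsplit3 : ∀ j : Fin (k + 1),
        Ecoef k ((j : ℕ) + 1) x
          * (pG ⟨(j : ℕ) + 2, by have := j.isLt; omega⟩ mu x * DF x
            + mu x * (pG ⟨(j : ℕ) + 1, by have := j.isLt; omega⟩ GG x
              + ∑ l : Fin (k + 1), x ⟨(l : ℕ) + 2, by have := l.isLt; omega⟩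
                * pG ⟨(j : ℕ) + 2, by have := j.isLt; omega⟩
                    (pG ⟨(l : ℕ) + 1, by have := l.isLt; omega⟩ GG) x))
        = Ecoef k ((j : ℕ) + 1) x * pG ⟨(j : ℕ) + 2, by have := j.isLt; omega⟩ mu x * DF x
          + (mu x * (Ecoef k ((j : ℕ) + 1) x
              * pG ⟨(j : ℕ) + 1, by have := j.isLt; omega⟩ GG x)
            + mu x * (∑ l : Fin (k + 1), Ecoef k ((j : ℕ) + 1) x
              * (x ⟨(l : ℕ) + 2, by have := l.isLt; omega⟩
                * pG ⟨(j : ℕ) + 2, by have := j.isLt; omega⟩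
                    (pG ⟨(l : ℕ) + 1, by have := l.isLt; omega⟩ GG) x))) := by
      intro j
      rw [show (∑ l : Fin (k + 1), Ecoef k ((j : ℕ) + 1) x
            * (x ⟨(l : ℕ) + 2, by have := l.isLt; omega⟩
              * pG ⟨(j : ℕ) + 2, by have := j.isLt; omega⟩
                  (pG ⟨(l : ℕ) + 1, by have := l.isLt; omega⟩ GG) x))
          = Ecoef k ((j : ℕ) + 1) x
            * ∑ l : Fin (k + 1), x ⟨(l : ℕ) + 2, by have := l.isLt; omega⟩
              * pG ⟨(j : ℕ) + 2, by have := j.isLt; omega⟩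
                  (pG ⟨(l : ℕ) + 1, by have := l.isLt; omega⟩ GG) x
          from (Finset.mul_sum _ _ _).symm]
      ring
    rw [Finset.sum_congr rfl fun j _ => hsplit3 j, Finset.sum_add_distrib,
      Finset.sum_add_distrib]
    -- the three pieces
    have hB : (∑ j : Fin (k + 1), mu x * (Ecoef k ((j : ℕ) + 1) x
        * pG ⟨(j : ℕ) + 1, by have := j.isLt; omega⟩ GG x))
        = mu x * (x ⟨2, by omega⟩ * DF x - W) := by
      rw [show (∑ j : Fin (k + 1), mu x * (Ecoef k ((j : ℕ) + 1) x
            * pG ⟨(j : ℕ) + 1, by have := j.isLt; omega⟩ GG x))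
          = mu x * ∑ j : Fin (k + 1), Ecoef k ((j : ℕ) + 1) x
            * pG ⟨(j : ℕ) + 1, by have := j.isLt; omega⟩ GG x
          from (Finset.mul_sum _ _ _).symm, hstar]
    have hC : (∑ j : Fin (k + 1), mu x * (∑ l : Fin (k + 1), Ecoef k ((j : ℕ) + 1) x
        * (x ⟨(l : ℕ) + 2, by have := l.isLt; omega⟩
          * pG ⟨(j : ℕ) + 2, by have := j.isLt; omega⟩
              (pG ⟨(l : ℕ) + 1, by have := l.isLt; omega⟩ GG) x)))
        = mu x * W := by
      rw [show (∑ j : Fin (k + 1), mu x * (∑ l : Fin (k + 1), Ecoef k ((j : ℕ) + 1) x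
            * (x ⟨(l : ℕ) + 2, by have := l.isLt; omega⟩
              * pG ⟨(j : ℕ) + 2, by have := j.isLt; omega⟩
                  (pG ⟨(l : ℕ) + 1, by have := l.isLt; omega⟩ GG) x)))
          = mu x * ∑ j : Fin (k + 1), ∑ l : Fin (k + 1), Ecoef k ((j : ℕ) + 1) x
            * (x ⟨(l : ℕ) + 2, by have := l.isLt; omega⟩
              * pG ⟨(j : ℕ) + 2, by have := j.isLt; omega⟩
                  (pG ⟨(l : ℕ) + 1, by have := l.isLt; omega⟩ GG) x)
          from (Finset.mul_sum _ _ _).symm, hSq]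
    have hA : (∑ j : Fin (k + 1), Ecoef k ((j : ℕ) + 1) x
        * pG ⟨(j : ℕ) + 2, by have := j.isLt; omega⟩ mu x * DF x)
        = Ecoef k 1 x * (2 * x ⟨2, by omega⟩ / x ⟨3, by omega⟩) * DF x
          + Ecoef k 2 x * (-((1 + x ⟨2, by omega⟩ ^ 2) / x ⟨3, by omega⟩ ^ 2)) * DF x := by
      have hterm : ∀ j : Fin (k + 1), Ecoef k ((j : ℕ) + 1) x
          * pG ⟨(j : ℕ) + 2, by have := j.isLt; omega⟩ mu x * DF x
          = (if j = (⟨0, by omega⟩ : Fin (k + 1)) then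
              Ecoef k ((j : ℕ) + 1) x * (2 * x ⟨2, by omega⟩ / x ⟨3, by omega⟩) * DF x
            else 0)
            + (if j = (⟨1, by omega⟩ : Fin (k + 1)) then
              Ecoef k ((j : ℕ) + 1) x
                * (-((1 + x ⟨2, by omega⟩ ^ 2) / x ⟨3, by omega⟩ ^ 2)) * DF x
            else 0) := by
        intro j
        by_cases hj0 : j = ⟨0, by omega⟩
        · subst hj0
          rw [if_pos rfl, if_neg (show (⟨0, by omega⟩ : Fin (k + 1)) ≠ ⟨1, by omega⟩
            from fun hh => by
              have h2 : (0 : ℕ) = 1 := congrArg Fin.val hh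
              omega), add_zero]
          exact congrArg (fun z => Ecoef k (((⟨0, by omega⟩ : Fin (k + 1)) : ℕ) + 1) x
            * z * DF x) hmu2
        · by_cases hj1 : j = ⟨1, by omega⟩
          · subst hj1
            rw [if_neg hj0, if_pos rfl, zero_add]
            exact congrArg (fun z => Ecoef k (((⟨1, by omega⟩ : Fin (k + 1)) : ℕ) + 1) x
              * z * DF x) hmu3
          · rw [if_neg hj0, if_neg hj1,
              hmuO ⟨(j : ℕ) + 2, by have := j.isLt; omega⟩
                (fun hh => hj0 (Fin.ext (show (j : ℕ) = 0 by
                  have h2 : (j : ℕ) + 2 = 2 := congrArg Fin.val hh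
                  omega)))
                (fun hh => hj1 (Fin.ext (show (j : ℕ) = 1 by
                  have h2 : (j : ℕ) + 2 = 3 := congrArg Fin.val hh
                  omega)))]
            ring
      rw [Finset.sum_congr rfl fun j _ => hterm j, Finset.sum_add_distrib,
        Finset.sum_ite_eq' Finset.univ (⟨0, by omega⟩ : Fin (k + 1)) _,
        Finset.sum_ite_eq' Finset.univ (⟨1, by omega⟩ : Fin (k + 1)) _,
        if_pos (Finset.mem_univ _), if_pos (Finset.mem_univ _)]
    -- evaluate the low prolongation coefficients
    have hE1 : Ecoef k 1 x = 1 + p.2 1 * p.2 1 := by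
      rw [hxdef, ← Ecoef_eta k 1 (by omega) p]
      exact eta3_one p
    have hE2 : Ecoef k 2 x = 3 * (p.2 1 * p.2 2) := by
      rw [hxdef, ← Ecoef_eta k 2 (by omega) p]
      exact eta3_two p
    have hmux : mu x = (1 + x ⟨2, by omega⟩ ^ 2) / x ⟨3, by omega⟩ := rfl
    rw [hA, hB, hC, hmux, hE1, hE2, hc2, hc3]
    exact field_aux (p.2 1) (p.2 2) W (DF x) hp2
end
end

section
/- Let I ⊆ ℝ be a nonempty open interval and y : I → ℝ a C³ function. Then (1 + y'(x)²)·y'''(x) = 3·y'(x)·y''(x)² for all x ∈ I if and only if the graph {(x, y(x)) : x ∈ I} is contained in a line or in a circle of ℝ² (i.e., there exist α, β ∈ ℝ with y(x) = αx + β on I, or there exist a center (a,b) ∈ ℝ² and radius r > 0 with (x − a)² + (y(x) − b)² = r² on I). This third-order ODE is the vanishing locus of the Möbius relative invariant W = ((1+y₁²)y₃ − 3y₁y₂²)/(1+y₁²)³, whose zero set consists exactly of the singular extremals of Möbius-invariant variational problems in the plane. -/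
noncomputable section

/-- A C³ graph `y = y(x)` over a nonempty open interval `I` satisfies the
third-order ODE `(1 + y'²)·y''' = 3·y'·y''²` (the vanishing of the Möbius
relative invariant `W = ((1+y₁²)y₃ − 3y₁y₂²)/(1+y₁²)³`) iff its graph is
contained in a line or in a circle of the plane. -/
theorem stmt_6 (I : Set ℝ) (hI : IsOpen I) (hne : I.Nonempty)
    (hconn : IsPreconnected I) (y : ℝ → ℝ) (hy : ContDiffOn ℝ 3 y I) :
    (∀ x ∈ I, (1 + (deriv y x) ^ 2) * deriv (deriv (deriv y)) x =
        3 * deriv y x * (deriv (deriv y) x) ^ 2) ↔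
      ((∃ α β : ℝ, ∀ x ∈ I, y x = α * x + β) ∨
        (∃ a b r : ℝ, 0 < r ∧ ∀ x ∈ I, (x - a) ^ 2 + (y x - b) ^ 2 = r ^ 2)) := by
  have hconv : Convex ℝ I := hconn.ordConnected.convex
  set y1 := deriv y with hy1def
  set y2 := deriv y1 with hy2def
  set y3 := deriv y2 with hy3def
  have hCy1 : ContDiffOn ℝ 2 y1 I := hy.deriv_of_isOpen hI (by norm_num)
  have hCy2 : ContDiffOn ℝ 1 y2 I := hCy1.deriv_of_isOpen hI (by norm_num)
  have Hy : ∀ x ∈ I, HasDerivAt y (y1 x) x := fun x hx =>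
    ((hy.differentiableOn (by norm_num)).differentiableAt (hI.mem_nhds hx)).hasDerivAt
  have Hy1 : ∀ x ∈ I, HasDerivAt y1 (y2 x) x := fun x hx =>
    ((hCy1.differentiableOn (by norm_num)).differentiableAt (hI.mem_nhds hx)).hasDerivAt
  have Hy2 : ∀ x ∈ I, HasDerivAt y2 (y3 x) x := fun x hx =>
    ((hCy2.differentiableOn (by norm_num)).differentiableAt (hI.mem_nhds hx)).hasDerivAt
  have const_of : ∀ f : ℝ → ℝ, (∀ x ∈ I, HasDerivAt f 0 x) →
      ∀ x ∈ I, ∀ z ∈ I, f x = f z := by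
    intro f hf x hx z hz
    refine hconv.is_const_of_fderivWithin_eq_zero
      (fun w hw => ((hf w hw).differentiableAt).differentiableWithinAt) ?_ hx hz
    intro w hw
    rw [fderivWithin_of_isOpen hI hw]
    have h0 : HasFDerivAt f (0 : ℝ →L[ℝ] ℝ) w := by
      have := (hf w hw).hasFDerivAt
      simpa using this
    exact h0.fderiv
  obtain ⟨x₀, hx₀⟩ := hne
  constructor
  · intro hode
    -- the square of the curvature is constant
    set φ : ℝ → ℝ := fun t => (y2 t) ^ 2 / (1 + (y1 t) ^ 2) ^ 3 with hφdef
    have hφ0 : ∀ x ∈ I, HasDerivAt φ 0 x := by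
      intro x hx
      have hnum : HasDerivAt (fun t => (y2 t) ^ 2) (2 * y2 x * y3 x) x := by
        have := (Hy2 x hx).fun_pow 2
        exact this.congr_deriv (by push_cast; ring)
      have hden : HasDerivAt (fun t => (1 + (y1 t) ^ 2) ^ 3)
          (3 * (1 + (y1 x) ^ 2) ^ 2 * (2 * y1 x * y2 x)) x := by
        have h1 : HasDerivAt (fun t => 1 + (y1 t) ^ 2) (2 * y1 x * y2 x) x := by
          have := ((Hy1 x hx).fun_pow 2).const_add 1
          exact this.congr_deriv (by push_cast; ring)
        have := h1.fun_pow 3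
        exact this.congr_deriv (by push_cast; ring)
      have hdne : (1 + (y1 x) ^ 2) ^ 3 ≠ 0 := by positivity
      have h := hnum.div hden hdne
      have hval : (2 * y2 x * y3 x * (1 + (y1 x) ^ 2) ^ 3 -
          (y2 x) ^ 2 * (3 * (1 + (y1 x) ^ 2) ^ 2 * (2 * y1 x * y2 x))) /
          ((1 + (y1 x) ^ 2) ^ 3) ^ 2 = 0 := by
        have hnum0 : 2 * y2 x * y3 x * (1 + (y1 x) ^ 2) ^ 3 -
            (y2 x) ^ 2 * (3 * (1 + (y1 x) ^ 2) ^ 2 * (2 * y1 x * y2 x)) = 0 := by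
          linear_combination (2 * y2 x * (1 + (y1 x) ^ 2) ^ 2) * hode x hx
        rw [hnum0, zero_div]
      rw [hval] at h
      exact h
    have hφc : ∀ x ∈ I, φ x = φ x₀ := fun x hx => const_of φ hφ0 x hx x₀ hx₀
    by_cases h0 : y2 x₀ = 0
    · -- line case
      left
      have hz : ∀ x ∈ I, y2 x = 0 := by
        intro x hx
        have hphi := hφc x hx
        have hz0 : (y2 x) ^ 2 / (1 + (y1 x) ^ 2) ^ 3 = 0 := by
          have : φ x₀ = 0 := by
            show (y2 x₀) ^ 2 / (1 + (y1 x₀) ^ 2) ^ 3 = 0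
            rw [h0]; simp
          rw [this] at hphi; exact hphi
        have hsq : (y2 x) ^ 2 = 0 := by
          rcases div_eq_zero_iff.mp hz0 with h | h
          · exact h
          · exact absurd h (by positivity)
        exact pow_eq_zero_iff (by norm_num) |>.mp hsq
      set α := y1 x₀ with hα
      have hy1c : ∀ x ∈ I, y1 x = α := by
        intro x hx
        exact const_of y1 (fun z hz' => (hz z hz') ▸ Hy1 z hz') x hx x₀ hx₀
      refine ⟨α, y x₀ - α * x₀, ?_⟩
      intro x hx
      have hf0 : ∀ z ∈ I, HasDerivAt (fun t => y t - α * t) 0 z := by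
        intro z hz'
        have := (Hy z hz').sub ((hasDerivAt_id z).const_mul α)
        have hval : y1 z - α * 1 = 0 := by rw [hy1c z hz']; ring
        rw [hval] at this
        exact this
      have := const_of _ hf0 x hx x₀ hx₀
      linarith
    · -- circle case
      right
      have hzne : ∀ x ∈ I, y2 x ≠ 0 := by
        intro x hx hxz
        apply h0
        have hphi := (hφc x hx).symm
        have hz0 : (y2 x₀) ^ 2 / (1 + (y1 x₀) ^ 2) ^ 3 = 0 := by
          have hx0 : φ x = 0 := by
            show (y2 x) ^ 2 / (1 + (y1 x) ^ 2) ^ 3 = 0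
            rw [hxz]; simp
          rw [hx0] at hphi; exact hphi
        have hsq : (y2 x₀) ^ 2 = 0 := by
          rcases div_eq_zero_iff.mp hz0 with h | h
          · exact h
          · exact absurd h (by positivity)
        exact pow_eq_zero_iff (by norm_num) |>.mp hsq
      set B : ℝ → ℝ := fun t => y t + (1 + (y1 t) ^ 2) / (y2 t) with hBdef
      have hB0 : ∀ x ∈ I, HasDerivAt B 0 x := by
        intro x hx
        have hnum : HasDerivAt (fun t => 1 + (y1 t) ^ 2) (2 * y1 x * y2 x) x := by
          have := ((Hy1 x hx).fun_pow 2).const_add 1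
          exact this.congr_deriv (by push_cast; ring)
        have h := (Hy x hx).add (hnum.div (Hy2 x hx) (hzne x hx))
        have hval : y1 x + (2 * y1 x * y2 x * y2 x - (1 + (y1 x) ^ 2) * y3 x) /
            (y2 x) ^ 2 = 0 := by
          have h2 := hzne x hx
          field_simp
          linear_combination - hode x hx
        rw [hval] at h
        exact h
      obtain ⟨b, hbdef⟩ : ∃ b, B x₀ = b := ⟨_, rfl⟩
      have hBc : ∀ x ∈ I, B x = b := fun x hx => (const_of B hB0 x hx x₀ hx₀).trans hbdef
      have hkey : ∀ x ∈ I, y2 x * (b - y x) = 1 + (y1 x) ^ 2 := by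
        intro x hx
        have hBx : y x + (1 + (y1 x) ^ 2) / (y2 x) = b := hBc x hx
        have h2 := hzne x hx
        field_simp at hBx
        linear_combination -hBx
      set A : ℝ → ℝ := fun t => t - y1 t * (b - y t) with hAdef
      have hA0 : ∀ x ∈ I, HasDerivAt A 0 x := by
        intro x hx
        have h := (hasDerivAt_id x).sub
          ((Hy1 x hx).mul ((hasDerivAt_const x b).sub (Hy x hx)))
        have hval : 1 - (y2 x * (b - y x) + y1 x * (0 - y1 x)) = 0 := by
          have := hkey x hx
          linear_combination - this
        simp only [Pi.sub_apply] at h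
        rw [hval] at h
        exact h
      obtain ⟨a, hadef⟩ : ∃ a, A x₀ = a := ⟨_, rfl⟩
      have hAc : ∀ x ∈ I, A x = a := fun x hx => (const_of A hA0 x hx x₀ hx₀).trans hadef
      set F : ℝ → ℝ := fun t => (t - a) ^ 2 + (y t - b) ^ 2 with hFdef
      have hF0 : ∀ x ∈ I, HasDerivAt F 0 x := by
        intro x hx
        have h := (((hasDerivAt_id x).sub_const a).pow 2).add
          (((Hy x hx).sub_const b).pow 2)
        have hAx : x - y1 x * (b - y x) = a := hAc x hx
        simp only [id_eq] at h
        have hval : ((2:ℕ):ℝ) * (x - a) ^ (2-1) * 1 + ((2:ℕ):ℝ) * (y x - b) ^ (2-1) * y1 x = 0 := by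
          push_cast
          simp only [pow_one]
          linear_combination 2 * hAx
        rw [hval] at h
        exact h
      have hFc : ∀ x ∈ I, F x = F x₀ := fun x hx => const_of F hF0 x hx x₀ hx₀
      have hFpos : 0 < F x₀ := by
        have hb0 : b - y x₀ = (1 + (y1 x₀) ^ 2) / (y2 x₀) := by
          rw [← hbdef]; show (y x₀ + (1 + (y1 x₀) ^ 2) / (y2 x₀)) - y x₀ = _; ring
        have hne0 : y x₀ - b ≠ 0 := by
          rw [show y x₀ - b = -((1 + (y1 x₀) ^ 2) / (y2 x₀)) by rw [← hb0]; ring]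
          have h1 : (1 + (y1 x₀) ^ 2) ≠ 0 := by positivity
          simp [div_eq_zero_iff, h1, hzne x₀ hx₀]
        have hp : 0 < (y x₀ - b) ^ 2 := by positivity
        have h2 : 0 ≤ (x₀ - a) ^ 2 := sq_nonneg _
        have h3 : F x₀ = (x₀ - a) ^ 2 + (y x₀ - b) ^ 2 := rfl
        nlinarith [hp, h2, h3]
      refine ⟨a, b, Real.sqrt (F x₀), Real.sqrt_pos.2 hFpos, ?_⟩
      intro x hx
      rw [Real.sq_sqrt hFpos.le]
      exact hFc x hx
  · rintro (⟨α, β, hline⟩ | ⟨a, b, r, hr, hcirc⟩)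
    · -- line
      have hy1 : ∀ x ∈ I, y1 x = α := by
        intro x hx
        have hev : y =ᶠ[nhds x] fun t => α * t + β :=
          Filter.eventuallyEq_of_mem (hI.mem_nhds hx) hline
        rw [hy1def, hev.deriv_eq]
        have : HasDerivAt (fun t => α * t + β) α x := by
          simpa using ((hasDerivAt_id x).const_mul α).add_const β
        exact this.deriv
      have hy2 : ∀ x ∈ I, y2 x = 0 := by
        intro x hx
        have hev : y1 =ᶠ[nhds x] fun _ => α :=
          Filter.eventuallyEq_of_mem (hI.mem_nhds hx) hy1
        rw [hy2def, hev.deriv_eq]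
        exact deriv_const x α
      have hy3 : ∀ x ∈ I, y3 x = 0 := by
        intro x hx
        have hev : y2 =ᶠ[nhds x] fun _ => (0:ℝ) :=
          Filter.eventuallyEq_of_mem (hI.mem_nhds hx) hy2
        rw [hy3def, hev.deriv_eq]
        exact deriv_const x 0
      intro x hx
      rw [hy2 x hx, hy3 x hx]
      ring
    · -- circle
      set F : ℝ → ℝ := fun t => (t - a) ^ 2 + (y t - b) ^ 2 with hFdef
      have e1 : ∀ z ∈ I, (z - a) + (y z - b) * y1 z = 0 := by
        intro z hz
        have hd0 : deriv F z = 0 := by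
          have hev : F =ᶠ[nhds z] fun _ => r ^ 2 :=
            Filter.eventuallyEq_of_mem (hI.mem_nhds hz) hcirc
          rw [hev.deriv_eq]
          exact deriv_const z (r ^ 2)
        have hF' : HasDerivAt F ((2:ℕ) * (z - a) ^ (2-1) * 1 + (2:ℕ) * (y z - b) ^ (2-1) * y1 z) z :=
          (((hasDerivAt_id z).sub_const a).pow 2).add (((Hy z hz).sub_const b).pow 2)
        have := hF'.deriv
        rw [hd0] at this
        push_cast at this
        simp only [pow_one] at this
        linarith
      set G : ℝ → ℝ := fun t => (t - a) + (y t - b) * y1 t with hGdef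
      have e2 : ∀ z ∈ I, 1 + (y1 z) ^ 2 + (y z - b) * y2 z = 0 := by
        intro z hz
        have hd0 : deriv G z = 0 := by
          have hev : G =ᶠ[nhds z] fun _ => (0:ℝ) :=
            Filter.eventuallyEq_of_mem (hI.mem_nhds hz) e1
          rw [hev.deriv_eq]
          exact deriv_const z 0
        have hG' : HasDerivAt G (1 + (y1 z * y1 z + (y z - b) * y2 z)) z :=
          ((hasDerivAt_id z).sub_const a).add (((Hy z hz).sub_const b).mul (Hy1 z hz))
        have := hG'.deriv
        rw [hd0] at this
        nlinarith [this]
      set H : ℝ → ℝ := fun t => 1 + (y1 t) ^ 2 + (y t - b) * y2 t with hHdef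
      have e3 : ∀ z ∈ I, 3 * y1 z * y2 z + (y z - b) * y3 z = 0 := by
        intro z hz
        have hd0 : deriv H z = 0 := by
          have hev : H =ᶠ[nhds z] fun _ => (0:ℝ) :=
            Filter.eventuallyEq_of_mem (hI.mem_nhds hz) e2
          rw [hev.deriv_eq]
          exact deriv_const z 0
        have hH' : HasDerivAt H
            ((0 + (2:ℕ) * (y1 z) ^ (2-1) * y2 z) + (y1 z * y2 z + (y z - b) * y3 z)) z := by
          exact ((hasDerivAt_const z (1:ℝ)).add ((Hy1 z hz).pow 2)).add
            (((Hy z hz).sub_const b).mul (Hy2 z hz))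
        have := hH'.deriv
        rw [hd0] at this
        push_cast at this
        simp only [pow_one] at this
        linarith
      intro x hx
      have h2 := e2 x hx
      have h3 := e3 x hx
      linear_combination y3 x * h2 - y2 x * h3
end
end

section
/- Consider the eight vector fields ∂_x, ∂_{y₀}, x∂_x, x∂_{y₀}, y₀∂_x, y₀∂_{y₀}, x(x∂_x + y₀∂_{y₀}), y₀(x∂_x + y₀∂_{y₀}) generating the projective algebra sl(3,ℝ) acting on the plane. Then R₂ := y₂, R₅ := 9y₂²y₅ − 45y₂y₃y₄ + 40y₃³ and R₇ := y₂⁸Θ₈ (which is a polynomial in the jet variables) are polynomial relative invariants: for each generator X there exist polynomial functions w₂, w₅, w₇ of (x, y₀, y₁) such that X^{(2)}R₂ = w₂·R₂, X^{(5)}R₅ = w₅·R₅ and X^{(7)}R₇ = w₇·R₇. Moreover, their weights with respect to the Cartan pair (H₁, H₂) := (−x∂_x, y₀∂_{y₀}) are (2,1), (9,3) and (24,8) respectively; e.g., H₁^{(7)}R₇ = 24·R₇ and H₂^{(7)}R₇ = 8·R₇. -/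
noncomputable section

/-- `Θ₃ = (9y₂²y₅ − 45y₂y₃y₄ + 40y₃³)/y₂³`. -/
def Theta3 (p : Jet) : ℝ :=
  (9 * (p.2 2) ^ 2 * p.2 5 - 45 * p.2 2 * p.2 3 * p.2 4 + 40 * (p.2 3) ^ 3) /
    (p.2 2) ^ 3

/-- `Θ₈ = 6Θ₃·D_x²Θ₃ − 7(D_xΘ₃)² + 27Θ₃²(4y₃²/(9y₂²) − y₄/(3y₂))`. -/
def Theta8 (p : Jet) : ℝ :=
  6 * Theta3 p * (Dx^[2] Theta3) p - 7 * (Dx Theta3 p) ^ 2 +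
    27 * (Theta3 p) ^ 2 *
      (4 * (p.2 3) ^ 2 / (9 * (p.2 2) ^ 2) - p.2 4 / (3 * p.2 2))

/-- The eight generators `∂_x, ∂_{y₀}, x∂_x, x∂_{y₀}, y₀∂_x, y₀∂_{y₀},
x(x∂_x+y₀∂_{y₀}), y₀(x∂_x+y₀∂_{y₀})` of the projective algebra `sl(3,ℝ)`
acting on the plane, as pairs `(ξ, η)`. -/
def projGens : List ((ℝ × ℝ → ℝ) × (ℝ × ℝ → ℝ)) :=
  [(fun _ => 1, fun _ => 0),
   (fun _ => 0, fun _ => 1),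
   (fun v => v.1, fun _ => 0),
   (fun _ => 0, fun v => v.1),
   (fun v => v.2, fun _ => 0),
   (fun _ => 0, fun v => v.2),
   (fun v => v.1 * v.1, fun v => v.1 * v.2),
   (fun v => v.2 * v.1, fun v => v.2 * v.2)]

/-- The relative invariant `R₂ = y₂`. -/
def R2 (p : Jet) : ℝ := p.2 2

/-- The relative invariant `R₅ = 9y₂²y₅ − 45y₂y₃y₄ + 40y₃³`. -/
def R5 (p : Jet) : ℝ :=
  9 * (p.2 2) ^ 2 * p.2 5 - 45 * p.2 2 * p.2 3 * p.2 4 + 40 * (p.2 3) ^ 3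

/-- The relative invariant `R₇ = y₂⁸Θ₈`. -/
def R7 (p : Jet) : ℝ := (p.2 2) ^ 8 * Theta8 p

/-- First Cartan generator `H₁ = −x∂_x`. -/
def H1 : (ℝ × ℝ → ℝ) × (ℝ × ℝ → ℝ) := (fun v => -v.1, fun _ => 0)

/-- Second Cartan generator `H₂ = y₀∂_{y₀}`. -/
def H2 : (ℝ × ℝ → ℝ) × (ℝ × ℝ → ℝ) := (fun _ => 0, fun v => v.2)

section Machinery

/-- Symbolic jet expressions: polynomials in `x, y₀, y₁, …` together with
negative powers of `y₂`. -/
inductive E where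
  | x : E
  | y : ℕ → E
  | c : ℝ → E
  | add : E → E → E
  | mul : E → E → E
  | i2 : ℕ → E

namespace E

noncomputable def ev : E → Jet → ℝ
  | x, p => p.1
  | y j, p => p.2 j
  | c a, _ => a
  | add e f, p => ev e p + ev f p
  | mul e f, p => ev e p * ev f p
  | i2 k, p => ((p.2 2) ^ k)⁻¹

def pdx : E → E
  | x => c 1
  | y _ => c 0
  | c _ => c 0
  | add e f => add (pdx e) (pdx f)
  | mul e f => add (mul (pdx e) f) (mul e (pdx f))
  | i2 _ => c 0

def pdy (j : ℕ) : E → E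
  | x => c 0
  | y i => if i = j then c 1 else c 0
  | c _ => c 0
  | add e f => add (pdy j e) (pdy j f)
  | mul e f => add (mul (pdy j e) f) (mul e (pdy j f))
  | i2 k => if j = 2 then mul (c (-(k : ℝ))) (i2 (k + 1)) else c 0

def maxv : E → ℕ
  | x => 0
  | y j => j + 1
  | c _ => 0
  | add e f => Nat.max (maxv e) (maxv f)
  | mul e f => Nat.max (maxv e) (maxv f)
  | i2 _ => 3

def noInv : E → Bool
  | x => true
  | y _ => true
  | c _ => true
  | add e f => noInv e && noInv f
  | mul e f => noInv e && noInv f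
  | i2 _ => false

theorem hasDerivAt_fst (e : E) (σ : ℕ → ℝ) (t₀ : ℝ) :
    HasDerivAt (fun t => ev e (t, σ)) (ev (pdx e) (t₀, σ)) t₀ := by
  induction e with
  | x => simpa [ev, pdx] using hasDerivAt_id' t₀
  | y j => simpa [ev, pdx] using hasDerivAt_const t₀ (σ j)
  | c a => simpa [ev, pdx] using hasDerivAt_const t₀ a
  | add e f he hf => simpa [ev, pdx] using he.fun_add hf
  | mul e f he hf => simpa [ev, pdx] using he.fun_mul hf
  | i2 k => simpa [ev, pdx] using hasDerivAt_const t₀ ((σ 2 ^ k)⁻¹)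

theorem hasDerivAt_inv_pow (k : ℕ) (t₀ : ℝ) (h : t₀ ≠ 0) :
    HasDerivAt (fun t : ℝ => (t ^ k)⁻¹) (-(k : ℝ) * (t₀ ^ (k + 1))⁻¹) t₀ := by
  have h1 := hasDerivAt_zpow (-(k : ℤ)) t₀ (Or.inl h)
  have e1 : (fun t : ℝ => t ^ (-(k : ℤ))) = fun t : ℝ => (t ^ k)⁻¹ := by
    funext t; rw [zpow_neg, zpow_natCast]
  rw [e1] at h1
  refine h1.congr_deriv ?_
  rw [show -(k : ℤ) - 1 = -((k : ℤ) + 1) by ring, zpow_neg,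
    show ((k : ℤ) + 1) = ((k + 1 : ℕ) : ℤ) by push_cast; ring, zpow_natCast]
  push_cast; ring

theorem hasDerivAt_upd (e : E) (j : ℕ) (x₀ : ℝ) (σ : ℕ → ℝ) (t₀ : ℝ)
    (h : noInv e = true ∨ Function.update σ j t₀ 2 ≠ 0) :
    HasDerivAt (fun t => ev e (x₀, Function.update σ j t))
      (ev (pdy j e) (x₀, Function.update σ j t₀)) t₀ := by
  induction e with
  | x => simpa [ev, pdy] using hasDerivAt_const t₀ x₀
  | y i =>
    rcases eq_or_ne i j with rfl | hij
    · simpa [ev, pdy] using hasDerivAt_id' t₀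
    · simpa [ev, pdy, hij, Function.update_of_ne hij] using
        hasDerivAt_const t₀ (σ i)
  | c a => simpa [ev, pdy] using hasDerivAt_const t₀ a
  | add e f he hf =>
    have hsplit : (noInv e = true ∨ Function.update σ j t₀ 2 ≠ 0) ∧
        (noInv f = true ∨ Function.update σ j t₀ 2 ≠ 0) := by
      rcases h with h | h
      · simp only [noInv, Bool.and_eq_true] at h
        exact ⟨Or.inl h.1, Or.inl h.2⟩
      · exact ⟨Or.inr h, Or.inr h⟩
    simpa [ev, pdy] using (he hsplit.1).fun_add (hf hsplit.2)
  | mul e f he hf =>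
    have hsplit : (noInv e = true ∨ Function.update σ j t₀ 2 ≠ 0) ∧
        (noInv f = true ∨ Function.update σ j t₀ 2 ≠ 0) := by
      rcases h with h | h
      · simp only [noInv, Bool.and_eq_true] at h
        exact ⟨Or.inl h.1, Or.inl h.2⟩
      · exact ⟨Or.inr h, Or.inr h⟩
    simpa [ev, pdy] using (he hsplit.1).fun_mul (hf hsplit.2)
  | i2 k =>
    rcases h with h | h
    · simp [noInv] at h
    rcases eq_or_ne j 2 with rfl | hj2
    · have ht₀ : t₀ ≠ 0 := by simpa using h
      have h2 : (fun t => ev (i2 k) (x₀, Function.update σ 2 t)) =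
          fun t => (t ^ k)⁻¹ := by
        funext t; simp [ev]
      have h3 : ev (pdy 2 (i2 k)) (x₀, Function.update σ 2 t₀) =
          -(k : ℝ) * (t₀ ^ (k + 1))⁻¹ := by
        simp [pdy, ev]
      rw [h2, h3]
      exact hasDerivAt_inv_pow k t₀ ht₀
    · have : (fun t => ev (i2 k) (x₀, Function.update σ j t)) =
          fun _ => ((σ 2) ^ k)⁻¹ := by
        funext t; simp [ev, Function.update_of_ne (Ne.symm hj2)]
      rw [this]
      simpa [ev, pdy, hj2] using hasDerivAt_const t₀ (((σ 2) ^ k)⁻¹)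

theorem pdX_ev (e : E) (p : Jet) : pdX (ev e) p = ev (pdx e) p :=
  (hasDerivAt_fst e p.2 p.1).deriv

theorem pdY_ev (e : E) (j : ℕ) (p : Jet)
    (h : noInv e = true ∨ p.2 2 ≠ 0) :
    pdY j (ev e) p = ev (pdy j e) p := by
  have h' : noInv e = true ∨ Function.update p.2 j (p.2 j) 2 ≠ 0 := by
    rcases h with h | h
    · exact Or.inl h
    · exact Or.inr (by rwa [Function.update_eq_self])
  have := (hasDerivAt_upd e j p.1 p.2 (p.2 j) h').deriv
  rw [Function.update_eq_self] at this
  exact this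

theorem pdy_ev_zero (e : E) (j : ℕ) (h : maxv e ≤ j) (p : Jet) :
    ev (pdy j e) p = 0 := by
  induction e with
  | x => simp [pdy, ev]
  | y i =>
    have : i ≠ j := by simp [maxv] at h; omega
    simp [pdy, ev, this]
  | c a => simp [pdy, ev]
  | add e f he hf =>
    simp [maxv, Nat.max_le] at h
    simp [pdy, ev, he h.1, hf h.2]
  | mul e f he hf =>
    simp [maxv, Nat.max_le] at h
    simp [pdy, ev, he h.1, hf h.2]
  | i2 k =>
    have : j ≠ 2 := by simp [maxv] at h; omega
    simp [pdy, ev, this]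

theorem pdY_ev_zero (e : E) (j : ℕ) (h : maxv e ≤ j) (p : Jet)
    (hp : noInv e = true ∨ p.2 2 ≠ 0) : pdY j (ev e) p = 0 := by
  rw [pdY_ev e j p hp]; exact pdy_ev_zero e j h p

/-- Symbolic partial sum `Σ_{j<n} y_{j+1}·∂e/∂y_j`. -/
def sumPart (e : E) : ℕ → E
  | 0 => c 0
  | n + 1 => add (sumPart e n) (mul (y (n + 1)) (pdy n e))

theorem ev_sumPart (e : E) (n : ℕ) (p : Jet) :
    ev (sumPart e n) p = ∑ j ∈ Finset.range n, p.2 (j + 1) * ev (pdy j e) p := by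
  induction n with
  | zero => simp [sumPart, ev]
  | succ n ih => rw [Finset.sum_range_succ, ← ih]; simp [sumPart, ev]

/-- Symbolic total derivative with summation bound `n`. -/
def DxE (n : ℕ) (e : E) : E := add (pdx e) (sumPart e n)

theorem Dx_ev (e : E) (n : ℕ) (hn : maxv e ≤ n) (p : Jet)
    (hp : noInv e = true ∨ p.2 2 ≠ 0) :
    Dx (ev e) p = ev (DxE n e) p := by
  unfold Dx
  rw [pdX_ev]
  have hsum : (∑' j : ℕ, p.2 (j + 1) * pdY j (ev e) p) =
      ∑ j ∈ Finset.range n, p.2 (j + 1) * pdY j (ev e) p :=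
    tsum_eq_sum (fun j hj => by
      rw [pdY_ev_zero e j (le_trans hn (by simpa [Finset.mem_range, not_lt] using hj)) p hp, mul_zero])
  rw [hsum]
  simp only [DxE, ev, ev_sumPart]
  congr 1
  exact Finset.sum_congr rfl fun j _ => by rw [pdY_ev e j p hp]

end E
end Machinery
section Machinery2
open E

theorem prolong_eq_sum (ξ η : ℝ × ℝ → ℝ) (F : Jet → ℝ) (n : ℕ) (p : Jet)
    (h : ∀ j, n ≤ j → pdY j F p = 0) :
    prolong ξ η F p = ξ (p.1, p.2 0) * pdX F p +
      ∑ j ∈ Finset.range n, etaCoef ξ η j p * pdY j F p := by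
  unfold prolong
  congr 1
  exact tsum_eq_sum (fun j hj => by
    rw [h j (by simpa [Finset.mem_range, not_lt] using hj), mul_zero])

theorem pdY_congr (F G : Jet → ℝ) (hFG : ∀ q : Jet, q.2 2 ≠ 0 → F q = G q)
    (j : ℕ) (p : Jet) (hp : p.2 2 ≠ 0) : pdY j F p = pdY j G p := by
  rcases eq_or_ne j 2 with rfl | hj
  · unfold pdY
    apply Filter.EventuallyEq.deriv_eq
    have h1 : ∀ᶠ t in nhds (p.2 2), t ≠ 0 := eventually_ne_nhds hp
    exact h1.mono fun t ht => hFG _ (by simpa using ht)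
  · unfold pdY
    congr 1
    funext t
    refine hFG _ ?_
    show Function.update p.2 j t 2 ≠ 0
    rw [Function.update_of_ne (Ne.symm hj)]; exact hp

theorem pdX_congr (F G : Jet → ℝ) (hFG : ∀ q : Jet, q.2 2 ≠ 0 → F q = G q)
    (p : Jet) (hp : p.2 2 ≠ 0) : pdX F p = pdX G p := by
  unfold pdX
  congr 1
  funext t
  exact hFG _ hp

theorem Dx_congr (F G : Jet → ℝ) (hFG : ∀ q : Jet, q.2 2 ≠ 0 → F q = G q)
    (p : Jet) (hp : p.2 2 ≠ 0) : Dx F p = Dx G p := by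
  unfold Dx
  rw [pdX_congr F G hFG p hp]
  congr 1
  exact tsum_congr fun j => by rw [pdY_congr F G hFG j p hp]

theorem etaCoef_succ_eq (ξ η : ℝ × ℝ → ℝ) (j : ℕ) :
    etaCoef ξ η (j + 1) = fun p =>
      Dx (etaCoef ξ η j) p - p.2 (j + 1) * Dx (fun q => ξ (q.1, q.2 0)) p := rfl

theorem etaCoef_step (ξ η : ℝ × ℝ → ℝ) (j : ℕ) (Aj A' ξe : E) (nj : ℕ)
    (hprev : etaCoef ξ η j = ev Aj)
    (hξ : (fun q : Jet => ξ (q.1, q.2 0)) = ev ξe)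
    (hAj : maxv Aj ≤ nj) (hξe : maxv ξe ≤ 1)
    (hnoA : noInv Aj = true) (hnoξ : noInv ξe = true)
    (hA' : ∀ p : Jet, ev (DxE nj Aj) p - p.2 (j + 1) * ev (DxE 1 ξe) p = ev A' p) :
    etaCoef ξ η (j + 1) = ev A' := by
  funext p
  rw [etaCoef_succ_eq, hprev, hξ]
  show Dx (ev Aj) p - p.2 (j + 1) * Dx (ev ξe) p = _
  rw [Dx_ev Aj nj hAj p (Or.inl hnoA), Dx_ev ξe 1 hξe p (Or.inl hnoξ), hA' p]

theorem prolong_poly (ξ η : ℝ × ℝ → ℝ) (F : Jet → ℝ) (e : E) (hF : F = ev e)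
    (n : ℕ) (hmax : maxv e ≤ n) (hno : noInv e = true) (p : Jet) :
    prolong ξ η F p = ξ (p.1, p.2 0) * ev (pdx e) p +
      ∑ j ∈ Finset.range n, etaCoef ξ η j p * ev (pdy j e) p := by
  subst hF
  rw [prolong_eq_sum ξ η (ev e) n p
    (fun j hj => pdY_ev_zero e j (le_trans hmax hj) p (Or.inl hno)), pdX_ev]
  congr 1
  exact Finset.sum_congr rfl fun j _ => by rw [pdY_ev e j p (Or.inl hno)]

theorem prolong_open (ξ η : ℝ × ℝ → ℝ) (F : Jet → ℝ) (e : E)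
    (hF : ∀ q : Jet, q.2 2 ≠ 0 → F q = ev e q) (hno : noInv e = true)
    (n : ℕ) (hmax : maxv e ≤ n) (p : Jet) (hp : p.2 2 ≠ 0) :
    prolong ξ η F p = ξ (p.1, p.2 0) * ev (pdx e) p +
      ∑ j ∈ Finset.range n, etaCoef ξ η j p * ev (pdy j e) p := by
  rw [prolong_eq_sum ξ η F n p (fun j hj => by
    rw [pdY_congr F (ev e) hF j p hp]
    exact pdY_ev_zero e j (le_trans hmax hj) p (Or.inl hno))]
  rw [pdX_congr F (ev e) hF p hp, pdX_ev]
  congr 1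
  exact Finset.sum_congr rfl fun j _ => by
    rw [pdY_congr F (ev e) hF j p hp, pdY_ev e j p (Or.inl hno)]

end Machinery2
section Exp
open E
def eT3 : E := E.mul (E.add (E.add (E.mul (E.mul (E.mul (E.c (40)) (E.y 3)) (E.y 3)) (E.y 3)) (E.mul (E.mul (E.mul (E.c (-45)) (E.y 2)) (E.y 3)) (E.y 4))) (E.mul (E.mul (E.mul (E.c (9)) (E.y 2)) (E.y 2)) (E.y 5))) (E.i2 3)
theorem hT3 : Theta3 = E.ev eT3 := by
  funext p
  simp only [Theta3, eT3, E.ev]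
  rw [div_eq_mul_inv]
  ring

theorem maxv_eT3 : E.maxv eT3 ≤ 6 := by norm_num [eT3, E.maxv]

theorem hDT3 : ∀ p : Jet, p.2 2 ≠ 0 → Dx Theta3 p = E.ev (DxE 6 eT3) p := by
  intro p hp
  rw [hT3]
  exact Dx_ev eT3 6 maxv_eT3 p (Or.inr hp)

def eA : E := E.mul (E.add (E.add (E.add (E.add (E.mul (E.mul (E.mul (E.mul (E.c (-120)) (E.y 3)) (E.y 3)) (E.y 3)) (E.y 3)) (E.mul (E.mul (E.mul (E.mul (E.c (210)) (E.y 2)) (E.y 3)) (E.y 3)) (E.y 4))) (E.mul (E.mul (E.mul (E.mul (E.c (-45)) (E.y 2)) (E.y 2)) (E.y 4)) (E.y 4))) (E.mul (E.mul (E.mul (E.mul (E.c (-54)) (E.y 2)) (E.y 2)) (E.y 3)) (E.y 5))) (E.mul (E.mul (E.mul (E.mul (E.c (9)) (E.y 2)) (E.y 2)) (E.y 2)) (E.y 6))) (E.i2 4)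
theorem hDT3' : ∀ p : Jet, p.2 2 ≠ 0 → Dx Theta3 p = E.ev eA p := by
  intro p hp
  rw [hDT3 p hp]
  simp only [eT3, eA, DxE, sumPart, E.ev, E.pdx, E.pdy, Nat.reduceEqDiff, ↓reduceIte]
  norm_num
  field_simp
  ring
end Exp
section Exp2
open E
def eB : E := E.mul (E.add (E.add (E.add (E.add (E.add (E.add (E.mul (E.mul (E.mul (E.mul (E.mul (E.c (480)) (E.y 3)) (E.y 3)) (E.y 3)) (E.y 3)) (E.y 3)) (E.mul (E.mul (E.mul (E.mul (E.mul (E.c (-1110)) (E.y 2)) (E.y 3)) (E.y 3)) (E.y 3)) (E.y 4))) (E.mul (E.mul (E.mul (E.mul (E.mul (E.c (510)) (E.y 2)) (E.y 2)) (E.y 3)) (E.y 4)) (E.y 4))) (E.mul (E.mul (E.mul (E.mul (E.mul (E.c (318)) (E.y 2)) (E.y 2)) (E.y 3)) (E.y 3)) (E.y 5))) (E.mul (E.mul (E.mul (E.mul (E.mul (E.c (-144)) (E.y 2)) (E.y 2)) (E.y 2)) (E.y 4)) (E.y 5))) (E.mul (E.mul (E.mul (E.mul (E.mul (E.c (-63))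 (E.y 2)) (E.y 2)) (E.y 2)) (E.y 3)) (E.y 6))) (E.mul (E.mul (E.mul (E.mul (E.mul (E.c (9)) (E.y 2)) (E.y 2)) (E.y 2)) (E.y 2)) (E.y 7))) (E.i2 5)
theorem maxv_eA : E.maxv eA ≤ 7 := by norm_num [eA, E.maxv]
theorem hD2T3 : ∀ p : Jet, p.2 2 ≠ 0 → Dx (Dx Theta3) p = E.ev eB p := by
  intro p hp
  rw [Dx_congr (Dx Theta3) (E.ev eA) hDT3' p hp,
    Dx_ev eA 7 maxv_eA p (Or.inr hp)]
  simp only [eA, eB, DxE, sumPart, E.ev, E.pdx, E.pdy, Nat.reduceEqDiff, ↓reduceIte]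
  norm_num
  field_simp
  ring

def eR7 : E := E.add (E.add (E.add (E.add (E.add (E.add (E.add (E.add (E.add (E.add (E.add (E.add (E.add (E.add (E.add (E.add (E.mul (E.mul (E.mul (E.mul (E.mul (E.mul (E.mul (E.mul (E.c (33600)) (E.y 3)) (E.y 3)) (E.y 3)) (E.y 3)) (E.y 3)) (E.y 3)) (E.y 3)) (E.y 3)) (E.mul (E.mul (E.mul (E.mul (E.mul (E.mul (E.mul (E.mul (E.c (-100800)) (E.y 2)) (E.y 3)) (E.y 3)) (E.y 3)) (E.y 3)) (E.y 3)) (E.y 3)) (E.y 4))) (E.mul (E.mul (E.mul (E.mul (E.mul (E.mul (E.mul (E.mul (E.c (94500)) (E.y 2)) (E.y 2)) (E.y 3)) (E.y 3)) (E.y 3)) (E.y 3)) (E.y 4)) (E.y 4))) (E.mul (E.mul (E.mul (E.mul (E.mul (E.mul (E.mul (E.mul (E.c (20160)) (E.y 2)) (E.y 2)) (E.y 3)) (E.y 3)) (E.y 3)) (E.y 3)) (E.y 3)) (E.y 5))) (E.mul (E.mul (E.mul (E.mul (E.mul (E.mul (E.mul (E.mul (E.c (-23625)) (E.y 2)) (E.y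 2)) (E.y 2)) (E.y 3)) (E.y 3)) (E.y 4)) (E.y 4)) (E.y 4))) (E.mul (E.mul (E.mul (E.mul (E.mul (E.mul (E.mul (E.mul (E.c (-37800)) (E.y 2)) (E.y 2)) (E.y 2)) (E.y 3)) (E.y 3)) (E.y 3)) (E.y 4)) (E.y 5))) (E.mul (E.mul (E.mul (E.mul (E.mul (E.mul (E.mul (E.mul (E.c (-14175)) (E.y 2)) (E.y 2)) (E.y 2)) (E.y 2)) (E.y 4)) (E.y 4)) (E.y 4)) (E.y 4))) (E.mul (E.mul (E.mul (E.mul (E.mul (E.mul (E.mul (E.mul (E.c (39690)) (E.y 2)) (E.y 2)) (E.y 2)) (E.y 2)) (E.y 3)) (E.y 4)) (E.y 4)) (E.y 5))) (E.mul (E.mul (E.mul (E.mul (E.mul (E.mul (E.mul (E.mul (E.c (-2268)) (E.y 2)) (E.y 2)) (E.y 2)) (E.y 2)) (E.y 3)) (E.y 3)) (E.y 5)) (E.y 5))) (E.mul (E.mul (E.mul (E.mul (E.mul (E.mul (E.mul (E.mul (E.c (-9450)) (E.y 2)) (E.y 2)) (E.y 2)) (E.y 2)) (E.y 3)) (E.y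 3)) (E.y 4)) (E.y 6))) (E.mul (E.mul (E.mul (E.mul (E.mul (E.mul (E.mul (E.mul (E.c (2160)) (E.y 2)) (E.y 2)) (E.y 2)) (E.y 2)) (E.y 3)) (E.y 3)) (E.y 3)) (E.y 7))) (E.mul (E.mul (E.mul (E.mul (E.mul (E.mul (E.mul (E.mul (E.c (-8505)) (E.y 2)) (E.y 2)) (E.y 2)) (E.y 2)) (E.y 2)) (E.y 4)) (E.y 5)) (E.y 5))) (E.mul (E.mul (E.mul (E.mul (E.mul (E.mul (E.mul (E.mul (E.c (5670)) (E.y 2)) (E.y 2)) (E.y 2)) (E.y 2)) (E.y 2)) (E.y 4)) (E.y 4)) (E.y 6))) (E.mul (E.mul (E.mul (E.mul (E.mul (E.mul (E.mul (E.mul (E.c (3402)) (E.y 2)) (E.y 2)) (E.y 2)) (E.y 2)) (E.y 2)) (E.y 3)) (E.y 5)) (E.y 6))) (E.mul (E.mul (E.mul (E.mul (E.mul (E.mul (E.mul (E.mul (E.c (-2430)) (E.y 2)) (E.y 2)) (E.y 2)) (E.y 2)) (E.y 2)) (E.y 3)) (E.y 4)) (E.y 7))) (E.mul (E.mul (E.mul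 (E.mul (E.mul (E.mul (E.mul (E.mul (E.c (-567)) (E.y 2)) (E.y 2)) (E.y 2)) (E.y 2)) (E.y 2)) (E.y 2)) (E.y 6)) (E.y 6))) (E.mul (E.mul (E.mul (E.mul (E.mul (E.mul (E.mul (E.mul (E.c (486)) (E.y 2)) (E.y 2)) (E.y 2)) (E.y 2)) (E.y 2)) (E.y 2)) (E.y 5)) (E.y 7))
theorem hR7ev : ∀ q : Jet, q.2 2 ≠ 0 → R7 q = E.ev eR7 q := by
  intro q hq
  have hit : (Dx^[2] Theta3) q = Dx (Dx Theta3) q := by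
    rw [show (2 : ℕ) = 1 + 1 from rfl, Function.iterate_succ_apply',
      Function.iterate_one]
  simp only [R7, Theta8, hit]
  rw [hD2T3 q hq, hDT3' q hq, hT3]
  simp only [eT3, eA, eB, eR7, E.ev]
  field_simp
  ring
end Exp2
section Defs
open E
def eR5 : E := E.add (E.add (E.mul (E.mul (E.mul (E.c (40)) (E.y 3)) (E.y 3)) (E.y 3)) (E.mul (E.mul (E.mul (E.c (-45)) (E.y 2)) (E.y 3)) (E.y 4))) (E.mul (E.mul (E.mul (E.c (9)) (E.y 2)) (E.y 2)) (E.y 5))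
theorem hR2ev : R2 = E.ev (E.y 2) := rfl
theorem hR5ev : R5 = E.ev eR5 := by funext p; simp only [R5, eR5, E.ev]; ring
end Defs
section Final
open E

def xiE_g1 : E := E.c (1)

theorem hxi_g1 : (fun q : Jet => (fun _ => 1 : ℝ × ℝ → ℝ) (q.1, q.2 0)) = E.ev xiE_g1 := by
  funext p; simp only [xiE_g1, E.ev]; try ring

def A_g1_0 : E := E.c 0

def A_g1_1 : E := E.c 0

def A_g1_2 : E := E.c 0

def A_g1_3 : E := E.c 0

def A_g1_4 : E := E.c 0

def A_g1_5 : E := E.c 0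

def A_g1_6 : E := E.c 0

def A_g1_7 : E := E.c 0

theorem eta_g1_0 : etaCoef (fun _ => 1) (fun _ => 0) 0 = E.ev A_g1_0 := by
  funext p; simp only [A_g1_0, etaCoef, E.ev]; try ring

theorem eta_g1_1 : etaCoef (fun _ => 1) (fun _ => 0) 1 = E.ev A_g1_1 :=
  etaCoef_step _ _ 0 A_g1_0 A_g1_1 xiE_g1 1 eta_g1_0 hxi_g1
    (by norm_num [A_g1_0, E.maxv]) (by norm_num [xiE_g1, E.maxv]) (by rfl) (by rfl)
    (by intro p; simp only [A_g1_0, A_g1_1, xiE_g1, DxE, sumPart, E.ev, E.pdx, E.pdy, Nat.reduceEqDiff, ↓reduceIte]; norm_num; try ring)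

theorem eta_g1_2 : etaCoef (fun _ => 1) (fun _ => 0) 2 = E.ev A_g1_2 :=
  etaCoef_step _ _ 1 A_g1_1 A_g1_2 xiE_g1 1 eta_g1_1 hxi_g1
    (by norm_num [A_g1_1, E.maxv]) (by norm_num [xiE_g1, E.maxv]) (by rfl) (by rfl)
    (by intro p; simp only [A_g1_1, A_g1_2, xiE_g1, DxE, sumPart, E.ev, E.pdx, E.pdy, Nat.reduceEqDiff, ↓reduceIte]; norm_num; try ring)

theorem eta_g1_3 : etaCoef (fun _ => 1) (fun _ => 0) 3 = E.ev A_g1_3 :=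
  etaCoef_step _ _ 2 A_g1_2 A_g1_3 xiE_g1 1 eta_g1_2 hxi_g1
    (by norm_num [A_g1_2, E.maxv]) (by norm_num [xiE_g1, E.maxv]) (by rfl) (by rfl)
    (by intro p; simp only [A_g1_2, A_g1_3, xiE_g1, DxE, sumPart, E.ev, E.pdx, E.pdy, Nat.reduceEqDiff, ↓reduceIte]; norm_num; try ring)

theorem eta_g1_4 : etaCoef (fun _ => 1) (fun _ => 0) 4 = E.ev A_g1_4 :=
  etaCoef_step _ _ 3 A_g1_3 A_g1_4 xiE_g1 1 eta_g1_3 hxi_g1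
    (by norm_num [A_g1_3, E.maxv]) (by norm_num [xiE_g1, E.maxv]) (by rfl) (by rfl)
    (by intro p; simp only [A_g1_3, A_g1_4, xiE_g1, DxE, sumPart, E.ev, E.pdx, E.pdy, Nat.reduceEqDiff, ↓reduceIte]; norm_num; try ring)

theorem eta_g1_5 : etaCoef (fun _ => 1) (fun _ => 0) 5 = E.ev A_g1_5 :=
  etaCoef_step _ _ 4 A_g1_4 A_g1_5 xiE_g1 1 eta_g1_4 hxi_g1
    (by norm_num [A_g1_4, E.maxv]) (by norm_num [xiE_g1, E.maxv]) (by rfl) (by rfl)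
    (by intro p; simp only [A_g1_4, A_g1_5, xiE_g1, DxE, sumPart, E.ev, E.pdx, E.pdy, Nat.reduceEqDiff, ↓reduceIte]; norm_num; try ring)

theorem eta_g1_6 : etaCoef (fun _ => 1) (fun _ => 0) 6 = E.ev A_g1_6 :=
  etaCoef_step _ _ 5 A_g1_5 A_g1_6 xiE_g1 1 eta_g1_5 hxi_g1
    (by norm_num [A_g1_5, E.maxv]) (by norm_num [xiE_g1, E.maxv]) (by rfl) (by rfl)
    (by intro p; simp only [A_g1_5, A_g1_6, xiE_g1, DxE, sumPart, E.ev, E.pdx, E.pdy, Nat.reduceEqDiff, ↓reduceIte]; norm_num; try ring)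

theorem eta_g1_7 : etaCoef (fun _ => 1) (fun _ => 0) 7 = E.ev A_g1_7 :=
  etaCoef_step _ _ 6 A_g1_6 A_g1_7 xiE_g1 1 eta_g1_6 hxi_g1
    (by norm_num [A_g1_6, E.maxv]) (by norm_num [xiE_g1, E.maxv]) (by rfl) (by rfl)
    (by intro p; simp only [A_g1_6, A_g1_7, xiE_g1, DxE, sumPart, E.ev, E.pdx, E.pdy, Nat.reduceEqDiff, ↓reduceIte]; norm_num; try ring)

def xiE_g2 : E := E.c 0

theorem hxi_g2 : (fun q : Jet => (fun _ => 0 : ℝ × ℝ → ℝ) (q.1, q.2 0)) = E.ev xiE_g2 := by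
  funext p; simp only [xiE_g2, E.ev]; try ring

def A_g2_0 : E := E.c (1)

def A_g2_1 : E := E.c 0

def A_g2_2 : E := E.c 0

def A_g2_3 : E := E.c 0

def A_g2_4 : E := E.c 0

def A_g2_5 : E := E.c 0

def A_g2_6 : E := E.c 0

def A_g2_7 : E := E.c 0

theorem eta_g2_0 : etaCoef (fun _ => 0) (fun _ => 1) 0 = E.ev A_g2_0 := by
  funext p; simp only [A_g2_0, etaCoef, E.ev]; try ring

theorem eta_g2_1 : etaCoef (fun _ => 0) (fun _ => 1) 1 = E.ev A_g2_1 :=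
  etaCoef_step _ _ 0 A_g2_0 A_g2_1 xiE_g2 1 eta_g2_0 hxi_g2
    (by norm_num [A_g2_0, E.maxv]) (by norm_num [xiE_g2, E.maxv]) (by rfl) (by rfl)
    (by intro p; simp only [A_g2_0, A_g2_1, xiE_g2, DxE, sumPart, E.ev, E.pdx, E.pdy, Nat.reduceEqDiff, ↓reduceIte]; norm_num; try ring)

theorem eta_g2_2 : etaCoef (fun _ => 0) (fun _ => 1) 2 = E.ev A_g2_2 :=
  etaCoef_step _ _ 1 A_g2_1 A_g2_2 xiE_g2 1 eta_g2_1 hxi_g2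
    (by norm_num [A_g2_1, E.maxv]) (by norm_num [xiE_g2, E.maxv]) (by rfl) (by rfl)
    (by intro p; simp only [A_g2_1, A_g2_2, xiE_g2, DxE, sumPart, E.ev, E.pdx, E.pdy, Nat.reduceEqDiff, ↓reduceIte]; norm_num; try ring)

theorem eta_g2_3 : etaCoef (fun _ => 0) (fun _ => 1) 3 = E.ev A_g2_3 :=
  etaCoef_step _ _ 2 A_g2_2 A_g2_3 xiE_g2 1 eta_g2_2 hxi_g2
    (by norm_num [A_g2_2, E.maxv]) (by norm_num [xiE_g2, E.maxv]) (by rfl) (by rfl)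
    (by intro p; simp only [A_g2_2, A_g2_3, xiE_g2, DxE, sumPart, E.ev, E.pdx, E.pdy, Nat.reduceEqDiff, ↓reduceIte]; norm_num; try ring)

theorem eta_g2_4 : etaCoef (fun _ => 0) (fun _ => 1) 4 = E.ev A_g2_4 :=
  etaCoef_step _ _ 3 A_g2_3 A_g2_4 xiE_g2 1 eta_g2_3 hxi_g2
    (by norm_num [A_g2_3, E.maxv]) (by norm_num [xiE_g2, E.maxv]) (by rfl) (by rfl)
    (by intro p; simp only [A_g2_3, A_g2_4, xiE_g2, DxE, sumPart, E.ev, E.pdx, E.pdy, Nat.reduceEqDiff, ↓reduceIte]; norm_num; try ring)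

theorem eta_g2_5 : etaCoef (fun _ => 0) (fun _ => 1) 5 = E.ev A_g2_5 :=
  etaCoef_step _ _ 4 A_g2_4 A_g2_5 xiE_g2 1 eta_g2_4 hxi_g2
    (by norm_num [A_g2_4, E.maxv]) (by norm_num [xiE_g2, E.maxv]) (by rfl) (by rfl)
    (by intro p; simp only [A_g2_4, A_g2_5, xiE_g2, DxE, sumPart, E.ev, E.pdx, E.pdy, Nat.reduceEqDiff, ↓reduceIte]; norm_num; try ring)

theorem eta_g2_6 : etaCoef (fun _ => 0) (fun _ => 1) 6 = E.ev A_g2_6 :=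
  etaCoef_step _ _ 5 A_g2_5 A_g2_6 xiE_g2 1 eta_g2_5 hxi_g2
    (by norm_num [A_g2_5, E.maxv]) (by norm_num [xiE_g2, E.maxv]) (by rfl) (by rfl)
    (by intro p; simp only [A_g2_5, A_g2_6, xiE_g2, DxE, sumPart, E.ev, E.pdx, E.pdy, Nat.reduceEqDiff, ↓reduceIte]; norm_num; try ring)

theorem eta_g2_7 : etaCoef (fun _ => 0) (fun _ => 1) 7 = E.ev A_g2_7 :=
  etaCoef_step _ _ 6 A_g2_6 A_g2_7 xiE_g2 1 eta_g2_6 hxi_g2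
    (by norm_num [A_g2_6, E.maxv]) (by norm_num [xiE_g2, E.maxv]) (by rfl) (by rfl)
    (by intro p; simp only [A_g2_6, A_g2_7, xiE_g2, DxE, sumPart, E.ev, E.pdx, E.pdy, Nat.reduceEqDiff, ↓reduceIte]; norm_num; try ring)

def xiE_g3 : E := E.mul (E.c (1)) (E.x)

theorem hxi_g3 : (fun q : Jet => (fun v => v.1 : ℝ × ℝ → ℝ) (q.1, q.2 0)) = E.ev xiE_g3 := by
  funext p; simp only [xiE_g3, E.ev]; try ring

def A_g3_0 : E := E.c 0

def A_g3_1 : E := E.mul (E.c (-1)) (E.y 1)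

def A_g3_2 : E := E.mul (E.c (-2)) (E.y 2)

def A_g3_3 : E := E.mul (E.c (-3)) (E.y 3)

def A_g3_4 : E := E.mul (E.c (-4)) (E.y 4)

def A_g3_5 : E := E.mul (E.c (-5)) (E.y 5)

def A_g3_6 : E := E.mul (E.c (-6)) (E.y 6)

def A_g3_7 : E := E.mul (E.c (-7)) (E.y 7)

theorem eta_g3_0 : etaCoef (fun v => v.1) (fun _ => 0) 0 = E.ev A_g3_0 := by
  funext p; simp only [A_g3_0, etaCoef, E.ev]; try ring

theorem eta_g3_1 : etaCoef (fun v => v.1) (fun _ => 0) 1 = E.ev A_g3_1 :=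
  etaCoef_step _ _ 0 A_g3_0 A_g3_1 xiE_g3 1 eta_g3_0 hxi_g3
    (by norm_num [A_g3_0, E.maxv]) (by norm_num [xiE_g3, E.maxv]) (by rfl) (by rfl)
    (by intro p; simp only [A_g3_0, A_g3_1, xiE_g3, DxE, sumPart, E.ev, E.pdx, E.pdy, Nat.reduceEqDiff, ↓reduceIte]; norm_num; try ring)

theorem eta_g3_2 : etaCoef (fun v => v.1) (fun _ => 0) 2 = E.ev A_g3_2 :=
  etaCoef_step _ _ 1 A_g3_1 A_g3_2 xiE_g3 2 eta_g3_1 hxi_g3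
    (by norm_num [A_g3_1, E.maxv]) (by norm_num [xiE_g3, E.maxv]) (by rfl) (by rfl)
    (by intro p; simp only [A_g3_1, A_g3_2, xiE_g3, DxE, sumPart, E.ev, E.pdx, E.pdy, Nat.reduceEqDiff, ↓reduceIte]; norm_num; try ring)

theorem eta_g3_3 : etaCoef (fun v => v.1) (fun _ => 0) 3 = E.ev A_g3_3 :=
  etaCoef_step _ _ 2 A_g3_2 A_g3_3 xiE_g3 3 eta_g3_2 hxi_g3
    (by norm_num [A_g3_2, E.maxv]) (by norm_num [xiE_g3, E.maxv]) (by rfl) (by rfl)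
    (by intro p; simp only [A_g3_2, A_g3_3, xiE_g3, DxE, sumPart, E.ev, E.pdx, E.pdy, Nat.reduceEqDiff, ↓reduceIte]; norm_num; try ring)

theorem eta_g3_4 : etaCoef (fun v => v.1) (fun _ => 0) 4 = E.ev A_g3_4 :=
  etaCoef_step _ _ 3 A_g3_3 A_g3_4 xiE_g3 4 eta_g3_3 hxi_g3
    (by norm_num [A_g3_3, E.maxv]) (by norm_num [xiE_g3, E.maxv]) (by rfl) (by rfl)
    (by intro p; simp only [A_g3_3, A_g3_4, xiE_g3, DxE, sumPart, E.ev, E.pdx, E.pdy, Nat.reduceEqDiff, ↓reduceIte]; norm_num; try ring)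

theorem eta_g3_5 : etaCoef (fun v => v.1) (fun _ => 0) 5 = E.ev A_g3_5 :=
  etaCoef_step _ _ 4 A_g3_4 A_g3_5 xiE_g3 5 eta_g3_4 hxi_g3
    (by norm_num [A_g3_4, E.maxv]) (by norm_num [xiE_g3, E.maxv]) (by rfl) (by rfl)
    (by intro p; simp only [A_g3_4, A_g3_5, xiE_g3, DxE, sumPart, E.ev, E.pdx, E.pdy, Nat.reduceEqDiff, ↓reduceIte]; norm_num; try ring)

theorem eta_g3_6 : etaCoef (fun v => v.1) (fun _ => 0) 6 = E.ev A_g3_6 :=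
  etaCoef_step _ _ 5 A_g3_5 A_g3_6 xiE_g3 6 eta_g3_5 hxi_g3
    (by norm_num [A_g3_5, E.maxv]) (by norm_num [xiE_g3, E.maxv]) (by rfl) (by rfl)
    (by intro p; simp only [A_g3_5, A_g3_6, xiE_g3, DxE, sumPart, E.ev, E.pdx, E.pdy, Nat.reduceEqDiff, ↓reduceIte]; norm_num; try ring)

theorem eta_g3_7 : etaCoef (fun v => v.1) (fun _ => 0) 7 = E.ev A_g3_7 :=
  etaCoef_step _ _ 6 A_g3_6 A_g3_7 xiE_g3 7 eta_g3_6 hxi_g3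
    (by norm_num [A_g3_6, E.maxv]) (by norm_num [xiE_g3, E.maxv]) (by rfl) (by rfl)
    (by intro p; simp only [A_g3_6, A_g3_7, xiE_g3, DxE, sumPart, E.ev, E.pdx, E.pdy, Nat.reduceEqDiff, ↓reduceIte]; norm_num; try ring)

def xiE_g4 : E := E.c 0

theorem hxi_g4 : (fun q : Jet => (fun _ => 0 : ℝ × ℝ → ℝ) (q.1, q.2 0)) = E.ev xiE_g4 := by
  funext p; simp only [xiE_g4, E.ev]; try ring

def A_g4_0 : E := E.mul (E.c (1)) (E.x)

def A_g4_1 : E := E.c (1)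

def A_g4_2 : E := E.c 0

def A_g4_3 : E := E.c 0

def A_g4_4 : E := E.c 0

def A_g4_5 : E := E.c 0

def A_g4_6 : E := E.c 0

def A_g4_7 : E := E.c 0

theorem eta_g4_0 : etaCoef (fun _ => 0) (fun v => v.1) 0 = E.ev A_g4_0 := by
  funext p; simp only [A_g4_0, etaCoef, E.ev]; try ring

theorem eta_g4_1 : etaCoef (fun _ => 0) (fun v => v.1) 1 = E.ev A_g4_1 :=
  etaCoef_step _ _ 0 A_g4_0 A_g4_1 xiE_g4 1 eta_g4_0 hxi_g4
    (by norm_num [A_g4_0, E.maxv]) (by norm_num [xiE_g4, E.maxv]) (by rfl) (by rfl)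
    (by intro p; simp only [A_g4_0, A_g4_1, xiE_g4, DxE, sumPart, E.ev, E.pdx, E.pdy, Nat.reduceEqDiff, ↓reduceIte]; norm_num; try ring)

theorem eta_g4_2 : etaCoef (fun _ => 0) (fun v => v.1) 2 = E.ev A_g4_2 :=
  etaCoef_step _ _ 1 A_g4_1 A_g4_2 xiE_g4 1 eta_g4_1 hxi_g4
    (by norm_num [A_g4_1, E.maxv]) (by norm_num [xiE_g4, E.maxv]) (by rfl) (by rfl)
    (by intro p; simp only [A_g4_1, A_g4_2, xiE_g4, DxE, sumPart, E.ev, E.pdx, E.pdy, Nat.reduceEqDiff, ↓reduceIte]; norm_num; try ring)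

theorem eta_g4_3 : etaCoef (fun _ => 0) (fun v => v.1) 3 = E.ev A_g4_3 :=
  etaCoef_step _ _ 2 A_g4_2 A_g4_3 xiE_g4 1 eta_g4_2 hxi_g4
    (by norm_num [A_g4_2, E.maxv]) (by norm_num [xiE_g4, E.maxv]) (by rfl) (by rfl)
    (by intro p; simp only [A_g4_2, A_g4_3, xiE_g4, DxE, sumPart, E.ev, E.pdx, E.pdy, Nat.reduceEqDiff, ↓reduceIte]; norm_num; try ring)

theorem eta_g4_4 : etaCoef (fun _ => 0) (fun v => v.1) 4 = E.ev A_g4_4 :=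
  etaCoef_step _ _ 3 A_g4_3 A_g4_4 xiE_g4 1 eta_g4_3 hxi_g4
    (by norm_num [A_g4_3, E.maxv]) (by norm_num [xiE_g4, E.maxv]) (by rfl) (by rfl)
    (by intro p; simp only [A_g4_3, A_g4_4, xiE_g4, DxE, sumPart, E.ev, E.pdx, E.pdy, Nat.reduceEqDiff, ↓reduceIte]; norm_num; try ring)

theorem eta_g4_5 : etaCoef (fun _ => 0) (fun v => v.1) 5 = E.ev A_g4_5 :=
  etaCoef_step _ _ 4 A_g4_4 A_g4_5 xiE_g4 1 eta_g4_4 hxi_g4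
    (by norm_num [A_g4_4, E.maxv]) (by norm_num [xiE_g4, E.maxv]) (by rfl) (by rfl)
    (by intro p; simp only [A_g4_4, A_g4_5, xiE_g4, DxE, sumPart, E.ev, E.pdx, E.pdy, Nat.reduceEqDiff, ↓reduceIte]; norm_num; try ring)

theorem eta_g4_6 : etaCoef (fun _ => 0) (fun v => v.1) 6 = E.ev A_g4_6 :=
  etaCoef_step _ _ 5 A_g4_5 A_g4_6 xiE_g4 1 eta_g4_5 hxi_g4
    (by norm_num [A_g4_5, E.maxv]) (by norm_num [xiE_g4, E.maxv]) (by rfl) (by rfl)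
    (by intro p; simp only [A_g4_5, A_g4_6, xiE_g4, DxE, sumPart, E.ev, E.pdx, E.pdy, Nat.reduceEqDiff, ↓reduceIte]; norm_num; try ring)

theorem eta_g4_7 : etaCoef (fun _ => 0) (fun v => v.1) 7 = E.ev A_g4_7 :=
  etaCoef_step _ _ 6 A_g4_6 A_g4_7 xiE_g4 1 eta_g4_6 hxi_g4
    (by norm_num [A_g4_6, E.maxv]) (by norm_num [xiE_g4, E.maxv]) (by rfl) (by rfl)
    (by intro p; simp only [A_g4_6, A_g4_7, xiE_g4, DxE, sumPart, E.ev, E.pdx, E.pdy, Nat.reduceEqDiff, ↓reduceIte]; norm_num; try ring)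

def xiE_g5 : E := E.mul (E.c (1)) (E.y 0)

theorem hxi_g5 : (fun q : Jet => (fun v => v.2 : ℝ × ℝ → ℝ) (q.1, q.2 0)) = E.ev xiE_g5 := by
  funext p; simp only [xiE_g5, E.ev]; try ring

def A_g5_0 : E := E.c 0

def A_g5_1 : E := E.mul (E.mul (E.c (-1)) (E.y 1)) (E.y 1)

def A_g5_2 : E := E.mul (E.mul (E.c (-3)) (E.y 1)) (E.y 2)

def A_g5_3 : E := E.add (E.mul (E.mul (E.c (-3)) (E.y 2)) (E.y 2)) (E.mul (E.mul (E.c (-4)) (E.y 1)) (E.y 3))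

def A_g5_4 : E := E.add (E.mul (E.mul (E.c (-10)) (E.y 2)) (E.y 3)) (E.mul (E.mul (E.c (-5)) (E.y 1)) (E.y 4))

def A_g5_5 : E := E.add (E.add (E.mul (E.mul (E.c (-10)) (E.y 3)) (E.y 3)) (E.mul (E.mul (E.c (-15)) (E.y 2)) (E.y 4))) (E.mul (E.mul (E.c (-6)) (E.y 1)) (E.y 5))

def A_g5_6 : E := E.add (E.add (E.mul (E.mul (E.c (-35)) (E.y 3)) (E.y 4)) (E.mul (E.mul (E.c (-21)) (E.y 2)) (E.y 5))) (E.mul (E.mul (E.c (-7)) (E.y 1)) (E.y 6))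

def A_g5_7 : E := E.add (E.add (E.add (E.mul (E.mul (E.c (-35)) (E.y 4)) (E.y 4)) (E.mul (E.mul (E.c (-56)) (E.y 3)) (E.y 5))) (E.mul (E.mul (E.c (-28)) (E.y 2)) (E.y 6))) (E.mul (E.mul (E.c (-8)) (E.y 1)) (E.y 7))

theorem eta_g5_0 : etaCoef (fun v => v.2) (fun _ => 0) 0 = E.ev A_g5_0 := by
  funext p; simp only [A_g5_0, etaCoef, E.ev]; try ring

theorem eta_g5_1 : etaCoef (fun v => v.2) (fun _ => 0) 1 = E.ev A_g5_1 :=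
  etaCoef_step _ _ 0 A_g5_0 A_g5_1 xiE_g5 1 eta_g5_0 hxi_g5
    (by norm_num [A_g5_0, E.maxv]) (by norm_num [xiE_g5, E.maxv]) (by rfl) (by rfl)
    (by intro p; simp only [A_g5_0, A_g5_1, xiE_g5, DxE, sumPart, E.ev, E.pdx, E.pdy, Nat.reduceEqDiff, ↓reduceIte]; norm_num; try ring)

theorem eta_g5_2 : etaCoef (fun v => v.2) (fun _ => 0) 2 = E.ev A_g5_2 :=
  etaCoef_step _ _ 1 A_g5_1 A_g5_2 xiE_g5 2 eta_g5_1 hxi_g5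
    (by norm_num [A_g5_1, E.maxv]) (by norm_num [xiE_g5, E.maxv]) (by rfl) (by rfl)
    (by intro p; simp only [A_g5_1, A_g5_2, xiE_g5, DxE, sumPart, E.ev, E.pdx, E.pdy, Nat.reduceEqDiff, ↓reduceIte]; norm_num; try ring)

theorem eta_g5_3 : etaCoef (fun v => v.2) (fun _ => 0) 3 = E.ev A_g5_3 :=
  etaCoef_step _ _ 2 A_g5_2 A_g5_3 xiE_g5 3 eta_g5_2 hxi_g5
    (by norm_num [A_g5_2, E.maxv]) (by norm_num [xiE_g5, E.maxv]) (by rfl) (by rfl)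
    (by intro p; simp only [A_g5_2, A_g5_3, xiE_g5, DxE, sumPart, E.ev, E.pdx, E.pdy, Nat.reduceEqDiff, ↓reduceIte]; norm_num; try ring)

theorem eta_g5_4 : etaCoef (fun v => v.2) (fun _ => 0) 4 = E.ev A_g5_4 :=
  etaCoef_step _ _ 3 A_g5_3 A_g5_4 xiE_g5 4 eta_g5_3 hxi_g5
    (by norm_num [A_g5_3, E.maxv]) (by norm_num [xiE_g5, E.maxv]) (by rfl) (by rfl)
    (by intro p; simp only [A_g5_3, A_g5_4, xiE_g5, DxE, sumPart, E.ev, E.pdx, E.pdy, Nat.reduceEqDiff, ↓reduceIte]; norm_num; try ring)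

theorem eta_g5_5 : etaCoef (fun v => v.2) (fun _ => 0) 5 = E.ev A_g5_5 :=
  etaCoef_step _ _ 4 A_g5_4 A_g5_5 xiE_g5 5 eta_g5_4 hxi_g5
    (by norm_num [A_g5_4, E.maxv]) (by norm_num [xiE_g5, E.maxv]) (by rfl) (by rfl)
    (by intro p; simp only [A_g5_4, A_g5_5, xiE_g5, DxE, sumPart, E.ev, E.pdx, E.pdy, Nat.reduceEqDiff, ↓reduceIte]; norm_num; try ring)

theorem eta_g5_6 : etaCoef (fun v => v.2) (fun _ => 0) 6 = E.ev A_g5_6 :=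
  etaCoef_step _ _ 5 A_g5_5 A_g5_6 xiE_g5 6 eta_g5_5 hxi_g5
    (by norm_num [A_g5_5, E.maxv]) (by norm_num [xiE_g5, E.maxv]) (by rfl) (by rfl)
    (by intro p; simp only [A_g5_5, A_g5_6, xiE_g5, DxE, sumPart, E.ev, E.pdx, E.pdy, Nat.reduceEqDiff, ↓reduceIte]; norm_num; try ring)

theorem eta_g5_7 : etaCoef (fun v => v.2) (fun _ => 0) 7 = E.ev A_g5_7 :=
  etaCoef_step _ _ 6 A_g5_6 A_g5_7 xiE_g5 7 eta_g5_6 hxi_g5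
    (by norm_num [A_g5_6, E.maxv]) (by norm_num [xiE_g5, E.maxv]) (by rfl) (by rfl)
    (by intro p; simp only [A_g5_6, A_g5_7, xiE_g5, DxE, sumPart, E.ev, E.pdx, E.pdy, Nat.reduceEqDiff, ↓reduceIte]; norm_num; try ring)

def xiE_g6 : E := E.c 0

theorem hxi_g6 : (fun q : Jet => (fun _ => 0 : ℝ × ℝ → ℝ) (q.1, q.2 0)) = E.ev xiE_g6 := by
  funext p; simp only [xiE_g6, E.ev]; try ring

def A_g6_0 : E := E.mul (E.c (1)) (E.y 0)

def A_g6_1 : E := E.mul (E.c (1)) (E.y 1)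

def A_g6_2 : E := E.mul (E.c (1)) (E.y 2)

def A_g6_3 : E := E.mul (E.c (1)) (E.y 3)

def A_g6_4 : E := E.mul (E.c (1)) (E.y 4)

def A_g6_5 : E := E.mul (E.c (1)) (E.y 5)

def A_g6_6 : E := E.mul (E.c (1)) (E.y 6)

def A_g6_7 : E := E.mul (E.c (1)) (E.y 7)

theorem eta_g6_0 : etaCoef (fun _ => 0) (fun v => v.2) 0 = E.ev A_g6_0 := by
  funext p; simp only [A_g6_0, etaCoef, E.ev]; try ring

theorem eta_g6_1 : etaCoef (fun _ => 0) (fun v => v.2) 1 = E.ev A_g6_1 :=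
  etaCoef_step _ _ 0 A_g6_0 A_g6_1 xiE_g6 1 eta_g6_0 hxi_g6
    (by norm_num [A_g6_0, E.maxv]) (by norm_num [xiE_g6, E.maxv]) (by rfl) (by rfl)
    (by intro p; simp only [A_g6_0, A_g6_1, xiE_g6, DxE, sumPart, E.ev, E.pdx, E.pdy, Nat.reduceEqDiff, ↓reduceIte]; norm_num; try ring)

theorem eta_g6_2 : etaCoef (fun _ => 0) (fun v => v.2) 2 = E.ev A_g6_2 :=
  etaCoef_step _ _ 1 A_g6_1 A_g6_2 xiE_g6 2 eta_g6_1 hxi_g6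
    (by norm_num [A_g6_1, E.maxv]) (by norm_num [xiE_g6, E.maxv]) (by rfl) (by rfl)
    (by intro p; simp only [A_g6_1, A_g6_2, xiE_g6, DxE, sumPart, E.ev, E.pdx, E.pdy, Nat.reduceEqDiff, ↓reduceIte]; norm_num; try ring)

theorem eta_g6_3 : etaCoef (fun _ => 0) (fun v => v.2) 3 = E.ev A_g6_3 :=
  etaCoef_step _ _ 2 A_g6_2 A_g6_3 xiE_g6 3 eta_g6_2 hxi_g6
    (by norm_num [A_g6_2, E.maxv]) (by norm_num [xiE_g6, E.maxv]) (by rfl) (by rfl)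
    (by intro p; simp only [A_g6_2, A_g6_3, xiE_g6, DxE, sumPart, E.ev, E.pdx, E.pdy, Nat.reduceEqDiff, ↓reduceIte]; norm_num; try ring)

theorem eta_g6_4 : etaCoef (fun _ => 0) (fun v => v.2) 4 = E.ev A_g6_4 :=
  etaCoef_step _ _ 3 A_g6_3 A_g6_4 xiE_g6 4 eta_g6_3 hxi_g6
    (by norm_num [A_g6_3, E.maxv]) (by norm_num [xiE_g6, E.maxv]) (by rfl) (by rfl)
    (by intro p; simp only [A_g6_3, A_g6_4, xiE_g6, DxE, sumPart, E.ev, E.pdx, E.pdy, Nat.reduceEqDiff, ↓reduceIte]; norm_num; try ring)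

theorem eta_g6_5 : etaCoef (fun _ => 0) (fun v => v.2) 5 = E.ev A_g6_5 :=
  etaCoef_step _ _ 4 A_g6_4 A_g6_5 xiE_g6 5 eta_g6_4 hxi_g6
    (by norm_num [A_g6_4, E.maxv]) (by norm_num [xiE_g6, E.maxv]) (by rfl) (by rfl)
    (by intro p; simp only [A_g6_4, A_g6_5, xiE_g6, DxE, sumPart, E.ev, E.pdx, E.pdy, Nat.reduceEqDiff, ↓reduceIte]; norm_num; try ring)

theorem eta_g6_6 : etaCoef (fun _ => 0) (fun v => v.2) 6 = E.ev A_g6_6 :=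
  etaCoef_step _ _ 5 A_g6_5 A_g6_6 xiE_g6 6 eta_g6_5 hxi_g6
    (by norm_num [A_g6_5, E.maxv]) (by norm_num [xiE_g6, E.maxv]) (by rfl) (by rfl)
    (by intro p; simp only [A_g6_5, A_g6_6, xiE_g6, DxE, sumPart, E.ev, E.pdx, E.pdy, Nat.reduceEqDiff, ↓reduceIte]; norm_num; try ring)

theorem eta_g6_7 : etaCoef (fun _ => 0) (fun v => v.2) 7 = E.ev A_g6_7 :=
  etaCoef_step _ _ 6 A_g6_6 A_g6_7 xiE_g6 7 eta_g6_6 hxi_g6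
    (by norm_num [A_g6_6, E.maxv]) (by norm_num [xiE_g6, E.maxv]) (by rfl) (by rfl)
    (by intro p; simp only [A_g6_6, A_g6_7, xiE_g6, DxE, sumPart, E.ev, E.pdx, E.pdy, Nat.reduceEqDiff, ↓reduceIte]; norm_num; try ring)

def xiE_g7 : E := E.mul (E.mul (E.c (1)) (E.x)) (E.x)

theorem hxi_g7 : (fun q : Jet => (fun v => v.1 * v.1 : ℝ × ℝ → ℝ) (q.1, q.2 0)) = E.ev xiE_g7 := by
  funext p; simp only [xiE_g7, E.ev]; try ring

def A_g7_0 : E := E.mul (E.mul (E.c (1)) (E.x)) (E.y 0)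

def A_g7_1 : E := E.add (E.mul (E.c (1)) (E.y 0)) (E.mul (E.mul (E.c (-1)) (E.x)) (E.y 1))

def A_g7_2 : E := E.mul (E.mul (E.c (-3)) (E.x)) (E.y 2)

def A_g7_3 : E := E.add (E.mul (E.c (-3)) (E.y 2)) (E.mul (E.mul (E.c (-5)) (E.x)) (E.y 3))

def A_g7_4 : E := E.add (E.mul (E.c (-8)) (E.y 3)) (E.mul (E.mul (E.c (-7)) (E.x)) (E.y 4))

def A_g7_5 : E := E.add (E.mul (E.c (-15)) (E.y 4)) (E.mul (E.mul (E.c (-9)) (E.x)) (E.y 5))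

def A_g7_6 : E := E.add (E.mul (E.c (-24)) (E.y 5)) (E.mul (E.mul (E.c (-11)) (E.x)) (E.y 6))

def A_g7_7 : E := E.add (E.mul (E.c (-35)) (E.y 6)) (E.mul (E.mul (E.c (-13)) (E.x)) (E.y 7))

theorem eta_g7_0 : etaCoef (fun v => v.1 * v.1) (fun v => v.1 * v.2) 0 = E.ev A_g7_0 := by
  funext p; simp only [A_g7_0, etaCoef, E.ev]; try ring

theorem eta_g7_1 : etaCoef (fun v => v.1 * v.1) (fun v => v.1 * v.2) 1 = E.ev A_g7_1 :=
  etaCoef_step _ _ 0 A_g7_0 A_g7_1 xiE_g7 1 eta_g7_0 hxi_g7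
    (by norm_num [A_g7_0, E.maxv]) (by norm_num [xiE_g7, E.maxv]) (by rfl) (by rfl)
    (by intro p; simp only [A_g7_0, A_g7_1, xiE_g7, DxE, sumPart, E.ev, E.pdx, E.pdy, Nat.reduceEqDiff, ↓reduceIte]; norm_num; try ring)

theorem eta_g7_2 : etaCoef (fun v => v.1 * v.1) (fun v => v.1 * v.2) 2 = E.ev A_g7_2 :=
  etaCoef_step _ _ 1 A_g7_1 A_g7_2 xiE_g7 2 eta_g7_1 hxi_g7
    (by norm_num [A_g7_1, E.maxv]) (by norm_num [xiE_g7, E.maxv]) (by rfl) (by rfl)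
    (by intro p; simp only [A_g7_1, A_g7_2, xiE_g7, DxE, sumPart, E.ev, E.pdx, E.pdy, Nat.reduceEqDiff, ↓reduceIte]; norm_num; try ring)

theorem eta_g7_3 : etaCoef (fun v => v.1 * v.1) (fun v => v.1 * v.2) 3 = E.ev A_g7_3 :=
  etaCoef_step _ _ 2 A_g7_2 A_g7_3 xiE_g7 3 eta_g7_2 hxi_g7
    (by norm_num [A_g7_2, E.maxv]) (by norm_num [xiE_g7, E.maxv]) (by rfl) (by rfl)
    (by intro p; simp only [A_g7_2, A_g7_3, xiE_g7, DxE, sumPart, E.ev, E.pdx, E.pdy, Nat.reduceEqDiff, ↓reduceIte]; norm_num; try ring)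

theorem eta_g7_4 : etaCoef (fun v => v.1 * v.1) (fun v => v.1 * v.2) 4 = E.ev A_g7_4 :=
  etaCoef_step _ _ 3 A_g7_3 A_g7_4 xiE_g7 4 eta_g7_3 hxi_g7
    (by norm_num [A_g7_3, E.maxv]) (by norm_num [xiE_g7, E.maxv]) (by rfl) (by rfl)
    (by intro p; simp only [A_g7_3, A_g7_4, xiE_g7, DxE, sumPart, E.ev, E.pdx, E.pdy, Nat.reduceEqDiff, ↓reduceIte]; norm_num; try ring)

theorem eta_g7_5 : etaCoef (fun v => v.1 * v.1) (fun v => v.1 * v.2) 5 = E.ev A_g7_5 :=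
  etaCoef_step _ _ 4 A_g7_4 A_g7_5 xiE_g7 5 eta_g7_4 hxi_g7
    (by norm_num [A_g7_4, E.maxv]) (by norm_num [xiE_g7, E.maxv]) (by rfl) (by rfl)
    (by intro p; simp only [A_g7_4, A_g7_5, xiE_g7, DxE, sumPart, E.ev, E.pdx, E.pdy, Nat.reduceEqDiff, ↓reduceIte]; norm_num; try ring)

theorem eta_g7_6 : etaCoef (fun v => v.1 * v.1) (fun v => v.1 * v.2) 6 = E.ev A_g7_6 :=
  etaCoef_step _ _ 5 A_g7_5 A_g7_6 xiE_g7 6 eta_g7_5 hxi_g7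
    (by norm_num [A_g7_5, E.maxv]) (by norm_num [xiE_g7, E.maxv]) (by rfl) (by rfl)
    (by intro p; simp only [A_g7_5, A_g7_6, xiE_g7, DxE, sumPart, E.ev, E.pdx, E.pdy, Nat.reduceEqDiff, ↓reduceIte]; norm_num; try ring)

theorem eta_g7_7 : etaCoef (fun v => v.1 * v.1) (fun v => v.1 * v.2) 7 = E.ev A_g7_7 :=
  etaCoef_step _ _ 6 A_g7_6 A_g7_7 xiE_g7 7 eta_g7_6 hxi_g7
    (by norm_num [A_g7_6, E.maxv]) (by norm_num [xiE_g7, E.maxv]) (by rfl) (by rfl)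
    (by intro p; simp only [A_g7_6, A_g7_7, xiE_g7, DxE, sumPart, E.ev, E.pdx, E.pdy, Nat.reduceEqDiff, ↓reduceIte]; norm_num; try ring)

def xiE_g8 : E := E.mul (E.mul (E.c (1)) (E.x)) (E.y 0)

theorem hxi_g8 : (fun q : Jet => (fun v => v.2 * v.1 : ℝ × ℝ → ℝ) (q.1, q.2 0)) = E.ev xiE_g8 := by
  funext p; simp only [xiE_g8, E.ev]; try ring

def A_g8_0 : E := E.mul (E.mul (E.c (1)) (E.y 0)) (E.y 0)

def A_g8_1 : E := E.add (E.mul (E.mul (E.c (1)) (E.y 0)) (E.y 1)) (E.mul (E.mul (E.mul (E.c (-1)) (E.x)) (E.y 1)) (E.y 1))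

def A_g8_2 : E := E.mul (E.mul (E.mul (E.c (-3)) (E.x)) (E.y 1)) (E.y 2)

def A_g8_3 : E := E.add (E.add (E.add (E.mul (E.mul (E.c (-3)) (E.y 1)) (E.y 2)) (E.mul (E.mul (E.c (-1)) (E.y 0)) (E.y 3))) (E.mul (E.mul (E.mul (E.c (-3)) (E.x)) (E.y 2)) (E.y 2))) (E.mul (E.mul (E.mul (E.c (-4)) (E.x)) (E.y 1)) (E.y 3))

def A_g8_4 : E := E.add (E.add (E.add (E.add (E.mul (E.mul (E.c (-6)) (E.y 2)) (E.y 2)) (E.mul (E.mul (E.c (-8)) (E.y 1)) (E.y 3))) (E.mul (E.mul (E.c (-2)) (E.y 0)) (E.y 4))) (E.mul (E.mul (E.mul (E.c (-10)) (E.x)) (E.y 2)) (E.y 3))) (E.mul (E.mul (E.mul (E.c (-5)) (E.x)) (E.y 1)) (E.y 4))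

def A_g8_5 : E := E.add (E.add (E.add (E.add (E.add (E.mul (E.mul (E.c (-30)) (E.y 2)) (E.y 3)) (E.mul (E.mul (E.c (-15)) (E.y 1)) (E.y 4))) (E.mul (E.mul (E.c (-3)) (E.y 0)) (E.y 5))) (E.mul (E.mul (E.mul (E.c (-10)) (E.x)) (E.y 3)) (E.y 3))) (E.mul (E.mul (E.mul (E.c (-15)) (E.x)) (E.y 2)) (E.y 4))) (E.mul (E.mul (E.mul (E.c (-6)) (E.x)) (E.y 1)) (E.y 5))

def A_g8_6 : E := E.add (E.add (E.add (E.add (E.add (E.add (E.mul (E.mul (E.c (-40)) (E.y 3)) (E.y 3)) (E.mul (E.mul (E.c (-60)) (E.y 2)) (E.y 4))) (E.mul (E.mul (E.c (-24)) (E.y 1)) (E.y 5))) (E.mul (E.mul (E.c (-4)) (E.y 0)) (E.y 6))) (E.mul (E.mul (E.mul (E.c (-35)) (E.x)) (E.y 3)) (E.y 4))) (E.mul (E.mul (E.mul (E.c (-21)) (E.x)) (E.y 2)) (E.y 5))) (E.mul (E.mul (E.mul (E.c (-7)) (E.x)) (E.y 1)) (E.y 6))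

def A_g8_7 : E := E.add (E.add (E.add (E.add (E.add (E.add (E.add (E.mul (E.mul (E.c (-175)) (E.y 3)) (E.y 4)) (E.mul (E.mul (E.c (-105)) (E.y 2)) (E.y 5))) (E.mul (E.mul (E.c (-35)) (E.y 1)) (E.y 6))) (E.mul (E.mul (E.c (-5)) (E.y 0)) (E.y 7))) (E.mul (E.mul (E.mul (E.c (-35)) (E.x)) (E.y 4)) (E.y 4))) (E.mul (E.mul (E.mul (E.c (-56)) (E.x)) (E.y 3)) (E.y 5))) (E.mul (E.mul (E.mul (E.c (-28)) (E.x)) (E.y 2)) (E.y 6))) (E.mul (E.mul (E.mul (E.c (-8)) (E.x)) (E.y 1)) (E.y 7))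

theorem eta_g8_0 : etaCoef (fun v => v.2 * v.1) (fun v => v.2 * v.2) 0 = E.ev A_g8_0 := by
  funext p; simp only [A_g8_0, etaCoef, E.ev]; try ring

theorem eta_g8_1 : etaCoef (fun v => v.2 * v.1) (fun v => v.2 * v.2) 1 = E.ev A_g8_1 :=
  etaCoef_step _ _ 0 A_g8_0 A_g8_1 xiE_g8 1 eta_g8_0 hxi_g8
    (by norm_num [A_g8_0, E.maxv]) (by norm_num [xiE_g8, E.maxv]) (by rfl) (by rfl)
    (by intro p; simp only [A_g8_0, A_g8_1, xiE_g8, DxE, sumPart, E.ev, E.pdx, E.pdy, Nat.reduceEqDiff, ↓reduceIte]; norm_num; try ring)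

theorem eta_g8_2 : etaCoef (fun v => v.2 * v.1) (fun v => v.2 * v.2) 2 = E.ev A_g8_2 :=
  etaCoef_step _ _ 1 A_g8_1 A_g8_2 xiE_g8 2 eta_g8_1 hxi_g8
    (by norm_num [A_g8_1, E.maxv]) (by norm_num [xiE_g8, E.maxv]) (by rfl) (by rfl)
    (by intro p; simp only [A_g8_1, A_g8_2, xiE_g8, DxE, sumPart, E.ev, E.pdx, E.pdy, Nat.reduceEqDiff, ↓reduceIte]; norm_num; try ring)

theorem eta_g8_3 : etaCoef (fun v => v.2 * v.1) (fun v => v.2 * v.2) 3 = E.ev A_g8_3 :=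
  etaCoef_step _ _ 2 A_g8_2 A_g8_3 xiE_g8 3 eta_g8_2 hxi_g8
    (by norm_num [A_g8_2, E.maxv]) (by norm_num [xiE_g8, E.maxv]) (by rfl) (by rfl)
    (by intro p; simp only [A_g8_2, A_g8_3, xiE_g8, DxE, sumPart, E.ev, E.pdx, E.pdy, Nat.reduceEqDiff, ↓reduceIte]; norm_num; try ring)

theorem eta_g8_4 : etaCoef (fun v => v.2 * v.1) (fun v => v.2 * v.2) 4 = E.ev A_g8_4 :=
  etaCoef_step _ _ 3 A_g8_3 A_g8_4 xiE_g8 4 eta_g8_3 hxi_g8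
    (by norm_num [A_g8_3, E.maxv]) (by norm_num [xiE_g8, E.maxv]) (by rfl) (by rfl)
    (by intro p; simp only [A_g8_3, A_g8_4, xiE_g8, DxE, sumPart, E.ev, E.pdx, E.pdy, Nat.reduceEqDiff, ↓reduceIte]; norm_num; try ring)

theorem eta_g8_5 : etaCoef (fun v => v.2 * v.1) (fun v => v.2 * v.2) 5 = E.ev A_g8_5 :=
  etaCoef_step _ _ 4 A_g8_4 A_g8_5 xiE_g8 5 eta_g8_4 hxi_g8
    (by norm_num [A_g8_4, E.maxv]) (by norm_num [xiE_g8, E.maxv]) (by rfl) (by rfl)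
    (by intro p; simp only [A_g8_4, A_g8_5, xiE_g8, DxE, sumPart, E.ev, E.pdx, E.pdy, Nat.reduceEqDiff, ↓reduceIte]; norm_num; try ring)

theorem eta_g8_6 : etaCoef (fun v => v.2 * v.1) (fun v => v.2 * v.2) 6 = E.ev A_g8_6 :=
  etaCoef_step _ _ 5 A_g8_5 A_g8_6 xiE_g8 6 eta_g8_5 hxi_g8
    (by norm_num [A_g8_5, E.maxv]) (by norm_num [xiE_g8, E.maxv]) (by rfl) (by rfl)
    (by intro p; simp only [A_g8_5, A_g8_6, xiE_g8, DxE, sumPart, E.ev, E.pdx, E.pdy, Nat.reduceEqDiff, ↓reduceIte]; norm_num; try ring)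

theorem eta_g8_7 : etaCoef (fun v => v.2 * v.1) (fun v => v.2 * v.2) 7 = E.ev A_g8_7 :=
  etaCoef_step _ _ 6 A_g8_6 A_g8_7 xiE_g8 7 eta_g8_6 hxi_g8
    (by norm_num [A_g8_6, E.maxv]) (by norm_num [xiE_g8, E.maxv]) (by rfl) (by rfl)
    (by intro p; simp only [A_g8_6, A_g8_7, xiE_g8, DxE, sumPart, E.ev, E.pdx, E.pdy, Nat.reduceEqDiff, ↓reduceIte]; norm_num; try ring)

def xiE_H1 : E := E.mul (E.c (-1)) (E.x)

theorem hxi_H1 : (fun q : Jet => (fun v => -v.1 : ℝ × ℝ → ℝ) (q.1, q.2 0)) = E.ev xiE_H1 := by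
  funext p; simp only [xiE_H1, E.ev]; try ring

def A_H1_0 : E := E.c 0

def A_H1_1 : E := E.mul (E.c (1)) (E.y 1)

def A_H1_2 : E := E.mul (E.c (2)) (E.y 2)

def A_H1_3 : E := E.mul (E.c (3)) (E.y 3)

def A_H1_4 : E := E.mul (E.c (4)) (E.y 4)

def A_H1_5 : E := E.mul (E.c (5)) (E.y 5)

def A_H1_6 : E := E.mul (E.c (6)) (E.y 6)

def A_H1_7 : E := E.mul (E.c (7)) (E.y 7)

theorem eta_H1_0 : etaCoef (fun v => -v.1) (fun _ => 0) 0 = E.ev A_H1_0 := by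
  funext p; simp only [A_H1_0, etaCoef, E.ev]; try ring

theorem eta_H1_1 : etaCoef (fun v => -v.1) (fun _ => 0) 1 = E.ev A_H1_1 :=
  etaCoef_step _ _ 0 A_H1_0 A_H1_1 xiE_H1 1 eta_H1_0 hxi_H1
    (by norm_num [A_H1_0, E.maxv]) (by norm_num [xiE_H1, E.maxv]) (by rfl) (by rfl)
    (by intro p; simp only [A_H1_0, A_H1_1, xiE_H1, DxE, sumPart, E.ev, E.pdx, E.pdy, Nat.reduceEqDiff, ↓reduceIte]; norm_num; try ring)

theorem eta_H1_2 : etaCoef (fun v => -v.1) (fun _ => 0) 2 = E.ev A_H1_2 :=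
  etaCoef_step _ _ 1 A_H1_1 A_H1_2 xiE_H1 2 eta_H1_1 hxi_H1
    (by norm_num [A_H1_1, E.maxv]) (by norm_num [xiE_H1, E.maxv]) (by rfl) (by rfl)
    (by intro p; simp only [A_H1_1, A_H1_2, xiE_H1, DxE, sumPart, E.ev, E.pdx, E.pdy, Nat.reduceEqDiff, ↓reduceIte]; norm_num; try ring)

theorem eta_H1_3 : etaCoef (fun v => -v.1) (fun _ => 0) 3 = E.ev A_H1_3 :=
  etaCoef_step _ _ 2 A_H1_2 A_H1_3 xiE_H1 3 eta_H1_2 hxi_H1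
    (by norm_num [A_H1_2, E.maxv]) (by norm_num [xiE_H1, E.maxv]) (by rfl) (by rfl)
    (by intro p; simp only [A_H1_2, A_H1_3, xiE_H1, DxE, sumPart, E.ev, E.pdx, E.pdy, Nat.reduceEqDiff, ↓reduceIte]; norm_num; try ring)

theorem eta_H1_4 : etaCoef (fun v => -v.1) (fun _ => 0) 4 = E.ev A_H1_4 :=
  etaCoef_step _ _ 3 A_H1_3 A_H1_4 xiE_H1 4 eta_H1_3 hxi_H1
    (by norm_num [A_H1_3, E.maxv]) (by norm_num [xiE_H1, E.maxv]) (by rfl) (by rfl)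
    (by intro p; simp only [A_H1_3, A_H1_4, xiE_H1, DxE, sumPart, E.ev, E.pdx, E.pdy, Nat.reduceEqDiff, ↓reduceIte]; norm_num; try ring)

theorem eta_H1_5 : etaCoef (fun v => -v.1) (fun _ => 0) 5 = E.ev A_H1_5 :=
  etaCoef_step _ _ 4 A_H1_4 A_H1_5 xiE_H1 5 eta_H1_4 hxi_H1
    (by norm_num [A_H1_4, E.maxv]) (by norm_num [xiE_H1, E.maxv]) (by rfl) (by rfl)
    (by intro p; simp only [A_H1_4, A_H1_5, xiE_H1, DxE, sumPart, E.ev, E.pdx, E.pdy, Nat.reduceEqDiff, ↓reduceIte]; norm_num; try ring)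

theorem eta_H1_6 : etaCoef (fun v => -v.1) (fun _ => 0) 6 = E.ev A_H1_6 :=
  etaCoef_step _ _ 5 A_H1_5 A_H1_6 xiE_H1 6 eta_H1_5 hxi_H1
    (by norm_num [A_H1_5, E.maxv]) (by norm_num [xiE_H1, E.maxv]) (by rfl) (by rfl)
    (by intro p; simp only [A_H1_5, A_H1_6, xiE_H1, DxE, sumPart, E.ev, E.pdx, E.pdy, Nat.reduceEqDiff, ↓reduceIte]; norm_num; try ring)

theorem eta_H1_7 : etaCoef (fun v => -v.1) (fun _ => 0) 7 = E.ev A_H1_7 :=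
  etaCoef_step _ _ 6 A_H1_6 A_H1_7 xiE_H1 7 eta_H1_6 hxi_H1
    (by norm_num [A_H1_6, E.maxv]) (by norm_num [xiE_H1, E.maxv]) (by rfl) (by rfl)
    (by intro p; simp only [A_H1_6, A_H1_7, xiE_H1, DxE, sumPart, E.ev, E.pdx, E.pdy, Nat.reduceEqDiff, ↓reduceIte]; norm_num; try ring)

theorem fin_g1_R2 : ∀ p : Jet, prolong (fun _ => 1) (fun _ => 0) R2 p = MvPolynomial.eval ![p.1, p.2 0, p.2 1] (MvPolynomial.C 0 : MvPolynomial (Fin 3) ℝ) * R2 p := by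
  intro p
  rw [prolong_poly _ _ R2 (E.y 2) hR2ev 3 (by norm_num [E.maxv]) (by rfl) p]
  rw [Finset.sum_range_succ, Finset.sum_range_succ, Finset.sum_range_succ, Finset.sum_range_zero]
  rw [eta_g1_0, eta_g1_1, eta_g1_2]
  simp only [A_g1_0, A_g1_1, A_g1_2, R2, E.ev, E.pdx, E.pdy, Nat.reduceEqDiff, ↓reduceIte, MvPolynomial.eval_add, MvPolynomial.eval_mul, MvPolynomial.eval_C, MvPolynomial.eval_X, Matrix.cons_val_zero, Matrix.cons_val_one, Matrix.head_cons, Matrix.cons_val_two, Matrix.tail_cons]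
  norm_num
  try ring


theorem fin_g1_R5 : ∀ p : Jet, prolong (fun _ => 1) (fun _ => 0) R5 p = MvPolynomial.eval ![p.1, p.2 0, p.2 1] (MvPolynomial.C 0 : MvPolynomial (Fin 3) ℝ) * R5 p := by
  intro p
  rw [prolong_poly _ _ R5 eR5 hR5ev 6 (by norm_num [eR5, E.maxv]) (by rfl) p]
  rw [Finset.sum_range_succ, Finset.sum_range_succ, Finset.sum_range_succ, Finset.sum_range_succ, Finset.sum_range_succ, Finset.sum_range_succ, Finset.sum_range_zero]
  rw [eta_g1_0, eta_g1_1, eta_g1_2, eta_g1_3, eta_g1_4, eta_g1_5]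
  simp only [A_g1_0, A_g1_1, A_g1_2, A_g1_3, A_g1_4, A_g1_5, eR5, R5, E.ev, E.pdx, E.pdy, Nat.reduceEqDiff, ↓reduceIte, MvPolynomial.eval_add, MvPolynomial.eval_mul, MvPolynomial.eval_C, MvPolynomial.eval_X, Matrix.cons_val_zero, Matrix.cons_val_one, Matrix.head_cons, Matrix.cons_val_two, Matrix.tail_cons]
  norm_num
  try ring


theorem fin_g1_R7 : ∀ p : Jet, p.2 2 ≠ 0 → prolong (fun _ => 1) (fun _ => 0) R7 p = MvPolynomial.eval ![p.1, p.2 0, p.2 1] (MvPolynomial.C 0 : MvPolynomial (Fin 3) ℝ) * R7 p := by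
  intro p hp
  rw [prolong_open _ _ R7 eR7 hR7ev (by rfl) 8 (by norm_num [eR7, E.maxv]) p hp]
  rw [hR7ev p hp]
  rw [Finset.sum_range_succ, Finset.sum_range_succ, Finset.sum_range_succ, Finset.sum_range_succ, Finset.sum_range_succ, Finset.sum_range_succ, Finset.sum_range_succ, Finset.sum_range_succ, Finset.sum_range_zero]
  rw [eta_g1_0, eta_g1_1, eta_g1_2, eta_g1_3, eta_g1_4, eta_g1_5, eta_g1_6, eta_g1_7]
  simp only [A_g1_0, A_g1_1, A_g1_2, A_g1_3, A_g1_4, A_g1_5, A_g1_6, A_g1_7, eR7, E.ev, E.pdx, E.pdy, Nat.reduceEqDiff, ↓reduceIte, MvPolynomial.eval_add, MvPolynomial.eval_mul, MvPolynomial.eval_C, MvPolynomial.eval_X, Matrix.cons_val_zero, Matrix.cons_val_one, Matrix.head_cons, Matrix.cons_val_two, Matrix.tail_cons]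
  norm_num
  try ring


theorem fin_g2_R2 : ∀ p : Jet, prolong (fun _ => 0) (fun _ => 1) R2 p = MvPolynomial.eval ![p.1, p.2 0, p.2 1] (MvPolynomial.C 0 : MvPolynomial (Fin 3) ℝ) * R2 p := by
  intro p
  rw [prolong_poly _ _ R2 (E.y 2) hR2ev 3 (by norm_num [E.maxv]) (by rfl) p]
  rw [Finset.sum_range_succ, Finset.sum_range_succ, Finset.sum_range_succ, Finset.sum_range_zero]
  rw [eta_g2_0, eta_g2_1, eta_g2_2]
  simp only [A_g2_0, A_g2_1, A_g2_2, R2, E.ev, E.pdx, E.pdy, Nat.reduceEqDiff, ↓reduceIte, MvPolynomial.eval_add, MvPolynomial.eval_mul, MvPolynomial.eval_C, MvPolynomial.eval_X, Matrix.cons_val_zero, Matrix.cons_val_one, Matrix.head_cons, Matrix.cons_val_two, Matrix.tail_cons]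
  norm_num
  try ring


theorem fin_g2_R5 : ∀ p : Jet, prolong (fun _ => 0) (fun _ => 1) R5 p = MvPolynomial.eval ![p.1, p.2 0, p.2 1] (MvPolynomial.C 0 : MvPolynomial (Fin 3) ℝ) * R5 p := by
  intro p
  rw [prolong_poly _ _ R5 eR5 hR5ev 6 (by norm_num [eR5, E.maxv]) (by rfl) p]
  rw [Finset.sum_range_succ, Finset.sum_range_succ, Finset.sum_range_succ, Finset.sum_range_succ, Finset.sum_range_succ, Finset.sum_range_succ, Finset.sum_range_zero]
  rw [eta_g2_0, eta_g2_1, eta_g2_2, eta_g2_3, eta_g2_4, eta_g2_5]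
  simp only [A_g2_0, A_g2_1, A_g2_2, A_g2_3, A_g2_4, A_g2_5, eR5, R5, E.ev, E.pdx, E.pdy, Nat.reduceEqDiff, ↓reduceIte, MvPolynomial.eval_add, MvPolynomial.eval_mul, MvPolynomial.eval_C, MvPolynomial.eval_X, Matrix.cons_val_zero, Matrix.cons_val_one, Matrix.head_cons, Matrix.cons_val_two, Matrix.tail_cons]
  norm_num
  try ring


theorem fin_g2_R7 : ∀ p : Jet, p.2 2 ≠ 0 → prolong (fun _ => 0) (fun _ => 1) R7 p = MvPolynomial.eval ![p.1, p.2 0, p.2 1] (MvPolynomial.C 0 : MvPolynomial (Fin 3) ℝ) * R7 p := by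
  intro p hp
  rw [prolong_open _ _ R7 eR7 hR7ev (by rfl) 8 (by norm_num [eR7, E.maxv]) p hp]
  rw [hR7ev p hp]
  rw [Finset.sum_range_succ, Finset.sum_range_succ, Finset.sum_range_succ, Finset.sum_range_succ, Finset.sum_range_succ, Finset.sum_range_succ, Finset.sum_range_succ, Finset.sum_range_succ, Finset.sum_range_zero]
  rw [eta_g2_0, eta_g2_1, eta_g2_2, eta_g2_3, eta_g2_4, eta_g2_5, eta_g2_6, eta_g2_7]
  simp only [A_g2_0, A_g2_1, A_g2_2, A_g2_3, A_g2_4, A_g2_5, A_g2_6, A_g2_7, eR7, E.ev, E.pdx, E.pdy, Nat.reduceEqDiff, ↓reduceIte, MvPolynomial.eval_add, MvPolynomial.eval_mul, MvPolynomial.eval_C, MvPolynomial.eval_X, Matrix.cons_val_zero, Matrix.cons_val_one, Matrix.head_cons, Matrix.cons_val_two, Matrix.tail_cons]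
  norm_num
  try ring


theorem fin_g3_R2 : ∀ p : Jet, prolong (fun v => v.1) (fun _ => 0) R2 p = MvPolynomial.eval ![p.1, p.2 0, p.2 1] (MvPolynomial.C (-2) : MvPolynomial (Fin 3) ℝ) * R2 p := by
  intro p
  rw [prolong_poly _ _ R2 (E.y 2) hR2ev 3 (by norm_num [E.maxv]) (by rfl) p]
  rw [Finset.sum_range_succ, Finset.sum_range_succ, Finset.sum_range_succ, Finset.sum_range_zero]
  rw [eta_g3_0, eta_g3_1, eta_g3_2]
  simp only [A_g3_0, A_g3_1, A_g3_2, R2, E.ev, E.pdx, E.pdy, Nat.reduceEqDiff, ↓reduceIte, MvPolynomial.eval_add, MvPolynomial.eval_mul, MvPolynomial.eval_C, MvPolynomial.eval_X, Matrix.cons_val_zero, Matrix.cons_val_one, Matrix.head_cons, Matrix.cons_val_two, Matrix.tail_cons]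
  norm_num
  try ring


theorem fin_g3_R5 : ∀ p : Jet, prolong (fun v => v.1) (fun _ => 0) R5 p = MvPolynomial.eval ![p.1, p.2 0, p.2 1] (MvPolynomial.C (-9) : MvPolynomial (Fin 3) ℝ) * R5 p := by
  intro p
  rw [prolong_poly _ _ R5 eR5 hR5ev 6 (by norm_num [eR5, E.maxv]) (by rfl) p]
  rw [Finset.sum_range_succ, Finset.sum_range_succ, Finset.sum_range_succ, Finset.sum_range_succ, Finset.sum_range_succ, Finset.sum_range_succ, Finset.sum_range_zero]
  rw [eta_g3_0, eta_g3_1, eta_g3_2, eta_g3_3, eta_g3_4, eta_g3_5]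
  simp only [A_g3_0, A_g3_1, A_g3_2, A_g3_3, A_g3_4, A_g3_5, eR5, R5, E.ev, E.pdx, E.pdy, Nat.reduceEqDiff, ↓reduceIte, MvPolynomial.eval_add, MvPolynomial.eval_mul, MvPolynomial.eval_C, MvPolynomial.eval_X, Matrix.cons_val_zero, Matrix.cons_val_one, Matrix.head_cons, Matrix.cons_val_two, Matrix.tail_cons]
  norm_num
  try ring


theorem fin_g3_R7 : ∀ p : Jet, p.2 2 ≠ 0 → prolong (fun v => v.1) (fun _ => 0) R7 p = MvPolynomial.eval ![p.1, p.2 0, p.2 1] (MvPolynomial.C (-24) : MvPolynomial (Fin 3) ℝ) * R7 p := by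
  intro p hp
  rw [prolong_open _ _ R7 eR7 hR7ev (by rfl) 8 (by norm_num [eR7, E.maxv]) p hp]
  rw [hR7ev p hp]
  rw [Finset.sum_range_succ, Finset.sum_range_succ, Finset.sum_range_succ, Finset.sum_range_succ, Finset.sum_range_succ, Finset.sum_range_succ, Finset.sum_range_succ, Finset.sum_range_succ, Finset.sum_range_zero]
  rw [eta_g3_0, eta_g3_1, eta_g3_2, eta_g3_3, eta_g3_4, eta_g3_5, eta_g3_6, eta_g3_7]
  simp only [A_g3_0, A_g3_1, A_g3_2, A_g3_3, A_g3_4, A_g3_5, A_g3_6, A_g3_7, eR7, E.ev, E.pdx, E.pdy, Nat.reduceEqDiff, ↓reduceIte, MvPolynomial.eval_add, MvPolynomial.eval_mul, MvPolynomial.eval_C, MvPolynomial.eval_X, Matrix.cons_val_zero, Matrix.cons_val_one, Matrix.head_cons, Matrix.cons_val_two, Matrix.tail_cons]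
  norm_num
  try ring


theorem fin_g4_R2 : ∀ p : Jet, prolong (fun _ => 0) (fun v => v.1) R2 p = MvPolynomial.eval ![p.1, p.2 0, p.2 1] (MvPolynomial.C 0 : MvPolynomial (Fin 3) ℝ) * R2 p := by
  intro p
  rw [prolong_poly _ _ R2 (E.y 2) hR2ev 3 (by norm_num [E.maxv]) (by rfl) p]
  rw [Finset.sum_range_succ, Finset.sum_range_succ, Finset.sum_range_succ, Finset.sum_range_zero]
  rw [eta_g4_0, eta_g4_1, eta_g4_2]
  simp only [A_g4_0, A_g4_1, A_g4_2, R2, E.ev, E.pdx, E.pdy, Nat.reduceEqDiff, ↓reduceIte, MvPolynomial.eval_add, MvPolynomial.eval_mul, MvPolynomial.eval_C, MvPolynomial.eval_X, Matrix.cons_val_zero, Matrix.cons_val_one, Matrix.head_cons, Matrix.cons_val_two, Matrix.tail_cons]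
  norm_num
  try ring


theorem fin_g4_R5 : ∀ p : Jet, prolong (fun _ => 0) (fun v => v.1) R5 p = MvPolynomial.eval ![p.1, p.2 0, p.2 1] (MvPolynomial.C 0 : MvPolynomial (Fin 3) ℝ) * R5 p := by
  intro p
  rw [prolong_poly _ _ R5 eR5 hR5ev 6 (by norm_num [eR5, E.maxv]) (by rfl) p]
  rw [Finset.sum_range_succ, Finset.sum_range_succ, Finset.sum_range_succ, Finset.sum_range_succ, Finset.sum_range_succ, Finset.sum_range_succ, Finset.sum_range_zero]
  rw [eta_g4_0, eta_g4_1, eta_g4_2, eta_g4_3, eta_g4_4, eta_g4_5]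
  simp only [A_g4_0, A_g4_1, A_g4_2, A_g4_3, A_g4_4, A_g4_5, eR5, R5, E.ev, E.pdx, E.pdy, Nat.reduceEqDiff, ↓reduceIte, MvPolynomial.eval_add, MvPolynomial.eval_mul, MvPolynomial.eval_C, MvPolynomial.eval_X, Matrix.cons_val_zero, Matrix.cons_val_one, Matrix.head_cons, Matrix.cons_val_two, Matrix.tail_cons]
  norm_num
  try ring


theorem fin_g4_R7 : ∀ p : Jet, p.2 2 ≠ 0 → prolong (fun _ => 0) (fun v => v.1) R7 p = MvPolynomial.eval ![p.1, p.2 0, p.2 1] (MvPolynomial.C 0 : MvPolynomial (Fin 3) ℝ) * R7 p := by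
  intro p hp
  rw [prolong_open _ _ R7 eR7 hR7ev (by rfl) 8 (by norm_num [eR7, E.maxv]) p hp]
  rw [hR7ev p hp]
  rw [Finset.sum_range_succ, Finset.sum_range_succ, Finset.sum_range_succ, Finset.sum_range_succ, Finset.sum_range_succ, Finset.sum_range_succ, Finset.sum_range_succ, Finset.sum_range_succ, Finset.sum_range_zero]
  rw [eta_g4_0, eta_g4_1, eta_g4_2, eta_g4_3, eta_g4_4, eta_g4_5, eta_g4_6, eta_g4_7]
  simp only [A_g4_0, A_g4_1, A_g4_2, A_g4_3, A_g4_4, A_g4_5, A_g4_6, A_g4_7, eR7, E.ev, E.pdx, E.pdy, Nat.reduceEqDiff, ↓reduceIte, MvPolynomial.eval_add, MvPolynomial.eval_mul, MvPolynomial.eval_C, MvPolynomial.eval_X, Matrix.cons_val_zero, Matrix.cons_val_one, Matrix.head_cons, Matrix.cons_val_two, Matrix.tail_cons]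
  norm_num
  try ring


theorem fin_g5_R2 : ∀ p : Jet, prolong (fun v => v.2) (fun _ => 0) R2 p = MvPolynomial.eval ![p.1, p.2 0, p.2 1] ((MvPolynomial.C (-3)) * (MvPolynomial.X 2) : MvPolynomial (Fin 3) ℝ) * R2 p := by
  intro p
  rw [prolong_poly _ _ R2 (E.y 2) hR2ev 3 (by norm_num [E.maxv]) (by rfl) p]
  rw [Finset.sum_range_succ, Finset.sum_range_succ, Finset.sum_range_succ, Finset.sum_range_zero]
  rw [eta_g5_0, eta_g5_1, eta_g5_2]
  simp only [A_g5_0, A_g5_1, A_g5_2, R2, E.ev, E.pdx, E.pdy, Nat.reduceEqDiff, ↓reduceIte, MvPolynomial.eval_add, MvPolynomial.eval_mul, MvPolynomial.eval_C, MvPolynomial.eval_X, Matrix.cons_val_zero, Matrix.cons_val_one, Matrix.head_cons, Matrix.cons_val_two, Matrix.tail_cons]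
  norm_num
  try ring


theorem fin_g5_R5 : ∀ p : Jet, prolong (fun v => v.2) (fun _ => 0) R5 p = MvPolynomial.eval ![p.1, p.2 0, p.2 1] ((MvPolynomial.C (-12)) * (MvPolynomial.X 2) : MvPolynomial (Fin 3) ℝ) * R5 p := by
  intro p
  rw [prolong_poly _ _ R5 eR5 hR5ev 6 (by norm_num [eR5, E.maxv]) (by rfl) p]
  rw [Finset.sum_range_succ, Finset.sum_range_succ, Finset.sum_range_succ, Finset.sum_range_succ, Finset.sum_range_succ, Finset.sum_range_succ, Finset.sum_range_zero]
  rw [eta_g5_0, eta_g5_1, eta_g5_2, eta_g5_3, eta_g5_4, eta_g5_5]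
  simp only [A_g5_0, A_g5_1, A_g5_2, A_g5_3, A_g5_4, A_g5_5, eR5, R5, E.ev, E.pdx, E.pdy, Nat.reduceEqDiff, ↓reduceIte, MvPolynomial.eval_add, MvPolynomial.eval_mul, MvPolynomial.eval_C, MvPolynomial.eval_X, Matrix.cons_val_zero, Matrix.cons_val_one, Matrix.head_cons, Matrix.cons_val_two, Matrix.tail_cons]
  norm_num
  try ring


theorem fin_g5_R7 : ∀ p : Jet, p.2 2 ≠ 0 → prolong (fun v => v.2) (fun _ => 0) R7 p = MvPolynomial.eval ![p.1, p.2 0, p.2 1] ((MvPolynomial.C (-32)) * (MvPolynomial.X 2) : MvPolynomial (Fin 3) ℝ) * R7 p := by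
  intro p hp
  rw [prolong_open _ _ R7 eR7 hR7ev (by rfl) 8 (by norm_num [eR7, E.maxv]) p hp]
  rw [hR7ev p hp]
  rw [Finset.sum_range_succ, Finset.sum_range_succ, Finset.sum_range_succ, Finset.sum_range_succ, Finset.sum_range_succ, Finset.sum_range_succ, Finset.sum_range_succ, Finset.sum_range_succ, Finset.sum_range_zero]
  rw [eta_g5_0, eta_g5_1, eta_g5_2, eta_g5_3, eta_g5_4, eta_g5_5, eta_g5_6, eta_g5_7]
  simp only [A_g5_0, A_g5_1, A_g5_2, A_g5_3, A_g5_4, A_g5_5, A_g5_6, A_g5_7, eR7, E.ev, E.pdx, E.pdy, Nat.reduceEqDiff, ↓reduceIte, MvPolynomial.eval_add, MvPolynomial.eval_mul, MvPolynomial.eval_C, MvPolynomial.eval_X, Matrix.cons_val_zero, Matrix.cons_val_one, Matrix.head_cons, Matrix.cons_val_two, Matrix.tail_cons]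
  norm_num
  try ring


theorem fin_g6_R2 : ∀ p : Jet, prolong (fun _ => 0) (fun v => v.2) R2 p = MvPolynomial.eval ![p.1, p.2 0, p.2 1] (MvPolynomial.C (1) : MvPolynomial (Fin 3) ℝ) * R2 p := by
  intro p
  rw [prolong_poly _ _ R2 (E.y 2) hR2ev 3 (by norm_num [E.maxv]) (by rfl) p]
  rw [Finset.sum_range_succ, Finset.sum_range_succ, Finset.sum_range_succ, Finset.sum_range_zero]
  rw [eta_g6_0, eta_g6_1, eta_g6_2]
  simp only [A_g6_0, A_g6_1, A_g6_2, R2, E.ev, E.pdx, E.pdy, Nat.reduceEqDiff, ↓reduceIte, MvPolynomial.eval_add, MvPolynomial.eval_mul, MvPolynomial.eval_C, MvPolynomial.eval_X, Matrix.cons_val_zero, Matrix.cons_val_one, Matrix.head_cons, Matrix.cons_val_two, Matrix.tail_cons]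
  norm_num
  try ring


theorem fin_g6_R5 : ∀ p : Jet, prolong (fun _ => 0) (fun v => v.2) R5 p = MvPolynomial.eval ![p.1, p.2 0, p.2 1] (MvPolynomial.C (3) : MvPolynomial (Fin 3) ℝ) * R5 p := by
  intro p
  rw [prolong_poly _ _ R5 eR5 hR5ev 6 (by norm_num [eR5, E.maxv]) (by rfl) p]
  rw [Finset.sum_range_succ, Finset.sum_range_succ, Finset.sum_range_succ, Finset.sum_range_succ, Finset.sum_range_succ, Finset.sum_range_succ, Finset.sum_range_zero]
  rw [eta_g6_0, eta_g6_1, eta_g6_2, eta_g6_3, eta_g6_4, eta_g6_5]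
  simp only [A_g6_0, A_g6_1, A_g6_2, A_g6_3, A_g6_4, A_g6_5, eR5, R5, E.ev, E.pdx, E.pdy, Nat.reduceEqDiff, ↓reduceIte, MvPolynomial.eval_add, MvPolynomial.eval_mul, MvPolynomial.eval_C, MvPolynomial.eval_X, Matrix.cons_val_zero, Matrix.cons_val_one, Matrix.head_cons, Matrix.cons_val_two, Matrix.tail_cons]
  norm_num
  try ring


theorem fin_g6_R7 : ∀ p : Jet, p.2 2 ≠ 0 → prolong (fun _ => 0) (fun v => v.2) R7 p = MvPolynomial.eval ![p.1, p.2 0, p.2 1] (MvPolynomial.C (8) : MvPolynomial (Fin 3) ℝ) * R7 p := by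
  intro p hp
  rw [prolong_open _ _ R7 eR7 hR7ev (by rfl) 8 (by norm_num [eR7, E.maxv]) p hp]
  rw [hR7ev p hp]
  rw [Finset.sum_range_succ, Finset.sum_range_succ, Finset.sum_range_succ, Finset.sum_range_succ, Finset.sum_range_succ, Finset.sum_range_succ, Finset.sum_range_succ, Finset.sum_range_succ, Finset.sum_range_zero]
  rw [eta_g6_0, eta_g6_1, eta_g6_2, eta_g6_3, eta_g6_4, eta_g6_5, eta_g6_6, eta_g6_7]
  simp only [A_g6_0, A_g6_1, A_g6_2, A_g6_3, A_g6_4, A_g6_5, A_g6_6, A_g6_7, eR7, E.ev, E.pdx, E.pdy, Nat.reduceEqDiff, ↓reduceIte, MvPolynomial.eval_add, MvPolynomial.eval_mul, MvPolynomial.eval_C, MvPolynomial.eval_X, Matrix.cons_val_zero, Matrix.cons_val_one, Matrix.head_cons, Matrix.cons_val_two, Matrix.tail_cons]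
  norm_num
  try ring


theorem fin_g7_R2 : ∀ p : Jet, prolong (fun v => v.1 * v.1) (fun v => v.1 * v.2) R2 p = MvPolynomial.eval ![p.1, p.2 0, p.2 1] ((MvPolynomial.C (-3)) * (MvPolynomial.X 0) : MvPolynomial (Fin 3) ℝ) * R2 p := by
  intro p
  rw [prolong_poly _ _ R2 (E.y 2) hR2ev 3 (by norm_num [E.maxv]) (by rfl) p]
  rw [Finset.sum_range_succ, Finset.sum_range_succ, Finset.sum_range_succ, Finset.sum_range_zero]
  rw [eta_g7_0, eta_g7_1, eta_g7_2]
  simp only [A_g7_0, A_g7_1, A_g7_2, R2, E.ev, E.pdx, E.pdy, Nat.reduceEqDiff, ↓reduceIte, MvPolynomial.eval_add, MvPolynomial.eval_mul, MvPolynomial.eval_C, MvPolynomial.eval_X, Matrix.cons_val_zero, Matrix.cons_val_one, Matrix.head_cons, Matrix.cons_val_two, Matrix.tail_cons]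
  norm_num
  try ring


theorem fin_g7_R5 : ∀ p : Jet, prolong (fun v => v.1 * v.1) (fun v => v.1 * v.2) R5 p = MvPolynomial.eval ![p.1, p.2 0, p.2 1] ((MvPolynomial.C (-15)) * (MvPolynomial.X 0) : MvPolynomial (Fin 3) ℝ) * R5 p := by
  intro p
  rw [prolong_poly _ _ R5 eR5 hR5ev 6 (by norm_num [eR5, E.maxv]) (by rfl) p]
  rw [Finset.sum_range_succ, Finset.sum_range_succ, Finset.sum_range_succ, Finset.sum_range_succ, Finset.sum_range_succ, Finset.sum_range_succ, Finset.sum_range_zero]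
  rw [eta_g7_0, eta_g7_1, eta_g7_2, eta_g7_3, eta_g7_4, eta_g7_5]
  simp only [A_g7_0, A_g7_1, A_g7_2, A_g7_3, A_g7_4, A_g7_5, eR5, R5, E.ev, E.pdx, E.pdy, Nat.reduceEqDiff, ↓reduceIte, MvPolynomial.eval_add, MvPolynomial.eval_mul, MvPolynomial.eval_C, MvPolynomial.eval_X, Matrix.cons_val_zero, Matrix.cons_val_one, Matrix.head_cons, Matrix.cons_val_two, Matrix.tail_cons]
  norm_num
  try ring


theorem fin_g7_R7 : ∀ p : Jet, p.2 2 ≠ 0 → prolong (fun v => v.1 * v.1) (fun v => v.1 * v.2) R7 p = MvPolynomial.eval ![p.1, p.2 0, p.2 1] ((MvPolynomial.C (-40)) * (MvPolynomial.X 0) : MvPolynomial (Fin 3) ℝ) * R7 p := by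
  intro p hp
  rw [prolong_open _ _ R7 eR7 hR7ev (by rfl) 8 (by norm_num [eR7, E.maxv]) p hp]
  rw [hR7ev p hp]
  rw [Finset.sum_range_succ, Finset.sum_range_succ, Finset.sum_range_succ, Finset.sum_range_succ, Finset.sum_range_succ, Finset.sum_range_succ, Finset.sum_range_succ, Finset.sum_range_succ, Finset.sum_range_zero]
  rw [eta_g7_0, eta_g7_1, eta_g7_2, eta_g7_3, eta_g7_4, eta_g7_5, eta_g7_6, eta_g7_7]
  simp only [A_g7_0, A_g7_1, A_g7_2, A_g7_3, A_g7_4, A_g7_5, A_g7_6, A_g7_7, eR7, E.ev, E.pdx, E.pdy, Nat.reduceEqDiff, ↓reduceIte, MvPolynomial.eval_add, MvPolynomial.eval_mul, MvPolynomial.eval_C, MvPolynomial.eval_X, Matrix.cons_val_zero, Matrix.cons_val_one, Matrix.head_cons, Matrix.cons_val_two, Matrix.tail_cons]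
  norm_num
  try ring


theorem fin_g8_R2 : ∀ p : Jet, prolong (fun v => v.2 * v.1) (fun v => v.2 * v.2) R2 p = MvPolynomial.eval ![p.1, p.2 0, p.2 1] (((MvPolynomial.C (-3)) * (MvPolynomial.X 0)) * (MvPolynomial.X 2) : MvPolynomial (Fin 3) ℝ) * R2 p := by
  intro p
  rw [prolong_poly _ _ R2 (E.y 2) hR2ev 3 (by norm_num [E.maxv]) (by rfl) p]
  rw [Finset.sum_range_succ, Finset.sum_range_succ, Finset.sum_range_succ, Finset.sum_range_zero]
  rw [eta_g8_0, eta_g8_1, eta_g8_2]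
  simp only [A_g8_0, A_g8_1, A_g8_2, R2, E.ev, E.pdx, E.pdy, Nat.reduceEqDiff, ↓reduceIte, MvPolynomial.eval_add, MvPolynomial.eval_mul, MvPolynomial.eval_C, MvPolynomial.eval_X, Matrix.cons_val_zero, Matrix.cons_val_one, Matrix.head_cons, Matrix.cons_val_two, Matrix.tail_cons]
  norm_num
  try ring


theorem fin_g8_R5 : ∀ p : Jet, prolong (fun v => v.2 * v.1) (fun v => v.2 * v.2) R5 p = MvPolynomial.eval ![p.1, p.2 0, p.2 1] (((MvPolynomial.C (-3)) * (MvPolynomial.X 1)) + (((MvPolynomial.C (-12)) * (MvPolynomial.X 0)) * (MvPolynomial.X 2)) : MvPolynomial (Fin 3) ℝ) * R5 p := by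
  intro p
  rw [prolong_poly _ _ R5 eR5 hR5ev 6 (by norm_num [eR5, E.maxv]) (by rfl) p]
  rw [Finset.sum_range_succ, Finset.sum_range_succ, Finset.sum_range_succ, Finset.sum_range_succ, Finset.sum_range_succ, Finset.sum_range_succ, Finset.sum_range_zero]
  rw [eta_g8_0, eta_g8_1, eta_g8_2, eta_g8_3, eta_g8_4, eta_g8_5]
  simp only [A_g8_0, A_g8_1, A_g8_2, A_g8_3, A_g8_4, A_g8_5, eR5, R5, E.ev, E.pdx, E.pdy, Nat.reduceEqDiff, ↓reduceIte, MvPolynomial.eval_add, MvPolynomial.eval_mul, MvPolynomial.eval_C, MvPolynomial.eval_X, Matrix.cons_val_zero, Matrix.cons_val_one, Matrix.head_cons, Matrix.cons_val_two, Matrix.tail_cons]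
  norm_num
  try ring


theorem fin_g8_R7 : ∀ p : Jet, p.2 2 ≠ 0 → prolong (fun v => v.2 * v.1) (fun v => v.2 * v.2) R7 p = MvPolynomial.eval ![p.1, p.2 0, p.2 1] (((MvPolynomial.C (-8)) * (MvPolynomial.X 1)) + (((MvPolynomial.C (-32)) * (MvPolynomial.X 0)) * (MvPolynomial.X 2)) : MvPolynomial (Fin 3) ℝ) * R7 p := by
  intro p hp
  rw [prolong_open _ _ R7 eR7 hR7ev (by rfl) 8 (by norm_num [eR7, E.maxv]) p hp]
  rw [hR7ev p hp]
  rw [Finset.sum_range_succ, Finset.sum_range_succ, Finset.sum_range_succ, Finset.sum_range_succ, Finset.sum_range_succ, Finset.sum_range_succ, Finset.sum_range_succ, Finset.sum_range_succ, Finset.sum_range_zero]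
  rw [eta_g8_0, eta_g8_1, eta_g8_2, eta_g8_3, eta_g8_4, eta_g8_5, eta_g8_6, eta_g8_7]
  simp only [A_g8_0, A_g8_1, A_g8_2, A_g8_3, A_g8_4, A_g8_5, A_g8_6, A_g8_7, eR7, E.ev, E.pdx, E.pdy, Nat.reduceEqDiff, ↓reduceIte, MvPolynomial.eval_add, MvPolynomial.eval_mul, MvPolynomial.eval_C, MvPolynomial.eval_X, Matrix.cons_val_zero, Matrix.cons_val_one, Matrix.head_cons, Matrix.cons_val_two, Matrix.tail_cons]
  norm_num
  try ring


theorem fin_H1_R2 : ∀ p : Jet, prolong (fun v => -v.1) (fun _ => 0) R2 p = 2 * R2 p := by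
  intro p
  rw [prolong_poly _ _ R2 (E.y 2) hR2ev 3 (by norm_num [E.maxv]) (by rfl) p]
  rw [Finset.sum_range_succ, Finset.sum_range_succ, Finset.sum_range_succ, Finset.sum_range_zero]
  rw [eta_H1_0, eta_H1_1, eta_H1_2]
  simp only [A_H1_0, A_H1_1, A_H1_2, R2, E.ev, E.pdx, E.pdy, Nat.reduceEqDiff, ↓reduceIte]
  norm_num
  try ring


theorem fin_H1_R5 : ∀ p : Jet, prolong (fun v => -v.1) (fun _ => 0) R5 p = 9 * R5 p := by
  intro p
  rw [prolong_poly _ _ R5 eR5 hR5ev 6 (by norm_num [eR5, E.maxv]) (by rfl) p]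
  rw [Finset.sum_range_succ, Finset.sum_range_succ, Finset.sum_range_succ, Finset.sum_range_succ, Finset.sum_range_succ, Finset.sum_range_succ, Finset.sum_range_zero]
  rw [eta_H1_0, eta_H1_1, eta_H1_2, eta_H1_3, eta_H1_4, eta_H1_5]
  simp only [A_H1_0, A_H1_1, A_H1_2, A_H1_3, A_H1_4, A_H1_5, eR5, R5, E.ev, E.pdx, E.pdy, Nat.reduceEqDiff, ↓reduceIte]
  norm_num
  try ring


theorem fin_H1_R7 : ∀ p : Jet, p.2 2 ≠ 0 → prolong (fun v => -v.1) (fun _ => 0) R7 p = 24 * R7 p := by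
  intro p hp
  rw [prolong_open _ _ R7 eR7 hR7ev (by rfl) 8 (by norm_num [eR7, E.maxv]) p hp]
  rw [hR7ev p hp]
  rw [Finset.sum_range_succ, Finset.sum_range_succ, Finset.sum_range_succ, Finset.sum_range_succ, Finset.sum_range_succ, Finset.sum_range_succ, Finset.sum_range_succ, Finset.sum_range_succ, Finset.sum_range_zero]
  rw [eta_H1_0, eta_H1_1, eta_H1_2, eta_H1_3, eta_H1_4, eta_H1_5, eta_H1_6, eta_H1_7]
  simp only [A_H1_0, A_H1_1, A_H1_2, A_H1_3, A_H1_4, A_H1_5, A_H1_6, A_H1_7, eR7, E.ev, E.pdx, E.pdy, Nat.reduceEqDiff, ↓reduceIte]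
  norm_num
  try ring


theorem fin_H2_R2 : ∀ p : Jet, prolong (fun _ => 0) (fun v => v.2) R2 p = 1 * R2 p := by
  intro p
  rw [prolong_poly _ _ R2 (E.y 2) hR2ev 3 (by norm_num [E.maxv]) (by rfl) p]
  rw [Finset.sum_range_succ, Finset.sum_range_succ, Finset.sum_range_succ, Finset.sum_range_zero]
  rw [eta_g6_0, eta_g6_1, eta_g6_2]
  simp only [A_g6_0, A_g6_1, A_g6_2, R2, E.ev, E.pdx, E.pdy, Nat.reduceEqDiff, ↓reduceIte]
  norm_num
  try ring


theorem fin_H2_R5 : ∀ p : Jet, prolong (fun _ => 0) (fun v => v.2) R5 p = 3 * R5 p := by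
  intro p
  rw [prolong_poly _ _ R5 eR5 hR5ev 6 (by norm_num [eR5, E.maxv]) (by rfl) p]
  rw [Finset.sum_range_succ, Finset.sum_range_succ, Finset.sum_range_succ, Finset.sum_range_succ, Finset.sum_range_succ, Finset.sum_range_succ, Finset.sum_range_zero]
  rw [eta_g6_0, eta_g6_1, eta_g6_2, eta_g6_3, eta_g6_4, eta_g6_5]
  simp only [A_g6_0, A_g6_1, A_g6_2, A_g6_3, A_g6_4, A_g6_5, eR5, R5, E.ev, E.pdx, E.pdy, Nat.reduceEqDiff, ↓reduceIte]
  norm_num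
  try ring


theorem fin_H2_R7 : ∀ p : Jet, p.2 2 ≠ 0 → prolong (fun _ => 0) (fun v => v.2) R7 p = 8 * R7 p := by
  intro p hp
  rw [prolong_open _ _ R7 eR7 hR7ev (by rfl) 8 (by norm_num [eR7, E.maxv]) p hp]
  rw [hR7ev p hp]
  rw [Finset.sum_range_succ, Finset.sum_range_succ, Finset.sum_range_succ, Finset.sum_range_succ, Finset.sum_range_succ, Finset.sum_range_succ, Finset.sum_range_succ, Finset.sum_range_succ, Finset.sum_range_zero]
  rw [eta_g6_0, eta_g6_1, eta_g6_2, eta_g6_3, eta_g6_4, eta_g6_5, eta_g6_6, eta_g6_7]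
  simp only [A_g6_0, A_g6_1, A_g6_2, A_g6_3, A_g6_4, A_g6_5, A_g6_6, A_g6_7, eR7, E.ev, E.pdx, E.pdy, Nat.reduceEqDiff, ↓reduceIte]
  norm_num
  try ring

end Final
/-- `R₂, R₅, R₇` are relative differential invariants of the projective algebra
with polynomial weights in `(x, y₀, y₁)`, of weights `(2,1)`, `(9,3)`, `(24,8)`
with respect to the Cartan pair `(−x∂_x, y₀∂_{y₀})`. -/
theorem stmt_10 :
    (∀ g ∈ projGens,
      (∃ w : MvPolynomial (Fin 3) ℝ, ∀ p : Jet,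
          prolong g.1 g.2 R2 p = MvPolynomial.eval ![p.1, p.2 0, p.2 1] w * R2 p) ∧
      (∃ w : MvPolynomial (Fin 3) ℝ, ∀ p : Jet,
          prolong g.1 g.2 R5 p = MvPolynomial.eval ![p.1, p.2 0, p.2 1] w * R5 p) ∧
      (∃ w : MvPolynomial (Fin 3) ℝ, ∀ p : Jet, p.2 2 ≠ 0 →
          prolong g.1 g.2 R7 p = MvPolynomial.eval ![p.1, p.2 0, p.2 1] w * R7 p)) ∧
    (∀ p : Jet, prolong H1.1 H1.2 R2 p = 2 * R2 p) ∧
    (∀ p : Jet, prolong H2.1 H2.2 R2 p = 1 * R2 p) ∧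
    (∀ p : Jet, prolong H1.1 H1.2 R5 p = 9 * R5 p) ∧
    (∀ p : Jet, prolong H2.1 H2.2 R5 p = 3 * R5 p) ∧
    (∀ p : Jet, p.2 2 ≠ 0 → prolong H1.1 H1.2 R7 p = 24 * R7 p) ∧
    (∀ p : Jet, p.2 2 ≠ 0 → prolong H2.1 H2.2 R7 p = 8 * R7 p) := by
  refine ⟨?_, fin_H1_R2, fin_H2_R2, fin_H1_R5, fin_H2_R5, fin_H1_R7, fin_H2_R7⟩
  intro g hg
  fin_cases hg
  · exact ⟨⟨_, fin_g1_R2⟩, ⟨_, fin_g1_R5⟩, ⟨_, fin_g1_R7⟩⟩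
  · exact ⟨⟨_, fin_g2_R2⟩, ⟨_, fin_g2_R5⟩, ⟨_, fin_g2_R7⟩⟩
  · exact ⟨⟨_, fin_g3_R2⟩, ⟨_, fin_g3_R5⟩, ⟨_, fin_g3_R7⟩⟩
  · exact ⟨⟨_, fin_g4_R2⟩, ⟨_, fin_g4_R5⟩, ⟨_, fin_g4_R7⟩⟩
  · exact ⟨⟨_, fin_g5_R2⟩, ⟨_, fin_g5_R5⟩, ⟨_, fin_g5_R7⟩⟩
  · exact ⟨⟨_, fin_g6_R2⟩, ⟨_, fin_g6_R5⟩, ⟨_, fin_g6_R7⟩⟩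
  · exact ⟨⟨_, fin_g7_R2⟩, ⟨_, fin_g7_R5⟩, ⟨_, fin_g7_R7⟩⟩
  · exact ⟨⟨_, fin_g8_R2⟩, ⟨_, fin_g8_R5⟩, ⟨_, fin_g8_R7⟩⟩
end
end
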